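/- arXiv:2106.01420 — 9 statements merged into one kernel-verified Lean document; each statement's English description precedes it below -/
import Mathlib

section
/- Let θ₁, …, θ_N be independent real-valued random variables on a probability space, let y ∈ ℝ, and let p = P(θ₁ > y); assume p > 0. Then for every index a ≠ 1, P({θ_j ≤ θ_a for all j ∈ {1,…,N}} ∩ {θ_a ≤ y}) ≤ ((1−p)/p) · P({θ_j < θ₁ for all j ≠ 1} ∩ {θ_a ≤ y}). (This is the core comparison underlying Lemma: the probability that a suboptimal arm a achieves the maximal sample while its sample is below the threshold y is at most (1−p)/p times the probability that arm 1 achieves the strictly maximal sample while θ_a is below y.) -/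
open MeasureTheory ProbabilityTheory Set
open scoped ProbabilityTheory

/-- For independent real random variables `θ 0, …, θ (N-1)` (index `0` plays the role of the
optimal arm `1`), threshold `y`, and `p = P(θ 0 > y) > 0`: for every arm `a ≠ 0`,
the probability that `θ a` is maximal and at most `y` is bounded by `(1-p)/p` times the
probability that `θ 0` is strictly maximal while `θ a ≤ y`. -/
theorem prob_suboptimal_max_le {Ω : Type*} [MeasureSpace Ω]
    [IsProbabilityMeasure (ℙ : Measure Ω)] {N : ℕ}
    (θ : Fin N → Ω → ℝ) (hmeas : ∀ i, Measurable (θ i))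
    (hindep : ProbabilityTheory.iIndepFun θ ℙ)
    [NeZero N]
    (y : ℝ) (p : ℝ) (hp : p = (ℙ {ω | y < θ 0 ω}).toReal) (hp0 : 0 < p)
    (a : Fin N) (ha : a ≠ 0) :
    (ℙ {ω | (∀ j, θ j ω ≤ θ a ω) ∧ θ a ω ≤ y}).toReal ≤
      (1 - p) / p * (ℙ {ω | (∀ j, j ≠ 0 → θ j ω < θ 0 ω) ∧ θ a ω ≤ y}).toReal := by
  classical
  set S : Finset (Fin N) := {0} with hS
  set T : Finset (Fin N) := Finset.univ.erase 0 with hT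
  have hST : Disjoint S T := by
    simp [hS, hT, Finset.disjoint_left]
  have hIF := hindep.indepFun_finset S T hST hmeas
  have haT : a ∈ T := by simp [hT, ha]
  have h0S : (0 : Fin N) ∈ S := by simp [hS]
  set a' : T := ⟨a, haT⟩ with ha'
  set z' : S := ⟨0, h0S⟩ with hz'
  set D : Set ((i : T) → ℝ) := {v | (∀ j : T, v j ≤ v a') ∧ v a' ≤ y} with hDdef
  have hD : MeasurableSet D := by
    have : D = (⋂ j : T, {v : (i : T) → ℝ | v j ≤ v a'}) ∩ {v | v a' ≤ y} := by
      ext v; simp [hDdef, Set.mem_iInter]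
    rw [this]
    exact (MeasurableSet.iInter fun j =>
      measurableSet_le (measurable_pi_apply j) (measurable_pi_apply a')).inter
      (measurableSet_le (measurable_pi_apply a') measurable_const)
  set sle : Set ((i : S) → ℝ) := {v | v z' ≤ y} with hsle
  set sgt : Set ((i : S) → ℝ) := {v | y < v z'} with hsgt
  have hsleM : MeasurableSet sle := measurableSet_le (measurable_pi_apply z') measurable_const
  have hsgtM : MeasurableSet sgt := measurableSet_lt measurable_const (measurable_pi_apply z')
  have key := hIF.measure_inter_preimage_eq_mul
  have hmul1 := key sle D hsleM hD
  have hmul2 := key sgt D hsgtM hD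
  -- identify preimages
  have hpre_le : (fun ω (i : S) => θ i ω) ⁻¹' sle = {ω | θ 0 ω ≤ y} := rfl
  have hpre_gt : (fun ω (i : S) => θ i ω) ⁻¹' sgt = {ω | y < θ 0 ω} := rfl
  set C : Set Ω := (fun ω (i : T) => θ i ω) ⁻¹' D with hCdef
  have hCmem : ∀ ω, ω ∈ C ↔ (∀ j, j ≠ 0 → θ j ω ≤ θ a ω) ∧ θ a ω ≤ y := by
    intro ω
    constructor
    · rintro ⟨h1, h2⟩
      exact ⟨fun j hj => h1 ⟨j, by simp [hT, hj]⟩, h2⟩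
    · rintro ⟨h1, h2⟩
      exact ⟨fun j => h1 j.1 (Finset.mem_erase.mp j.2).1, h2⟩
  have hA : ℙ {ω | (∀ j, θ j ω ≤ θ a ω) ∧ θ a ω ≤ y} ≤ ℙ {ω | θ 0 ω ≤ y} * ℙ C := by
    rw [← hpre_le, ← hmul1]
    apply measure_mono
    rintro ω ⟨h1, h2⟩
    refine ⟨le_trans (h1 0) h2, (hCmem ω).2 ⟨fun j _ => h1 j, h2⟩⟩
  have hB : ℙ {ω | y < θ 0 ω} * ℙ C ≤ ℙ {ω | (∀ j, j ≠ 0 → θ j ω < θ 0 ω) ∧ θ a ω ≤ y} := by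
    rw [← hpre_gt, ← hmul2]
    apply measure_mono
    rintro ω ⟨h1, h2⟩
    obtain ⟨h3, h4⟩ := (hCmem ω).1 h2
    exact ⟨fun j hj => lt_of_le_of_lt (le_trans (h3 j hj) h4) h1, h4⟩
  -- to reals
  have hfin : ∀ s : Set Ω, ℙ s ≠ ⊤ := fun s => measure_ne_top _ s
  have hAr : (ℙ {ω | (∀ j, θ j ω ≤ θ a ω) ∧ θ a ω ≤ y}).toReal ≤
      (ℙ {ω | θ 0 ω ≤ y}).toReal * (ℙ C).toReal := by
    rw [← ENNReal.toReal_mul]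
    exact ENNReal.toReal_mono (ENNReal.mul_ne_top (hfin _) (hfin _)) hA
  have hBr : p * (ℙ C).toReal ≤
      (ℙ {ω | (∀ j, j ≠ 0 → θ j ω < θ 0 ω) ∧ θ a ω ≤ y}).toReal := by
    rw [hp, ← ENNReal.toReal_mul]
    exact ENNReal.toReal_mono (hfin _) hB
  have hcompl : {ω | θ 0 ω ≤ y} = {ω | y < θ 0 ω}ᶜ := by
    ext ω; simp [not_lt]
  have hq : (ℙ {ω | θ 0 ω ≤ y}).toReal = 1 - p := by
    have hms : MeasurableSet {ω | y < θ 0 ω} := measurableSet_lt measurable_const (hmeas 0)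
    rw [hcompl, measure_compl hms (hfin _),
      measure_univ, ENNReal.toReal_sub_of_le prob_le_one (by simp), ENNReal.toReal_one, hp]
  have hp1 : p ≤ 1 := by
    rw [hp]; exact ENNReal.toReal_le_of_le_ofReal zero_le_one (by simp [prob_le_one])
  have hc0 : (0:ℝ) ≤ (ℙ C).toReal := ENNReal.toReal_nonneg
  rw [hq] at hAr
  rw [div_mul_eq_mul_div, le_div_iff₀ hp0]
  nlinarith [mul_le_mul_of_nonneg_left hBr (by linarith : (0:ℝ) ≤ 1 - p)]
end

section
/- Let n be a positive integer, let y ∈ (0,1), and let X be a Binomial(n, y) random variable. Then for every x with 0 < x < y, P(X ≤ n·x) ≤ exp(−n·d(x, y)), where d(x, y) = x·ln(x/y) + (1−x)·ln((1−x)/(1−y)). -/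
open scoped BigOperators

/-- Chernoff–Hoeffding lower-tail bound for a Binomial(n, y) random variable `X`:
for `0 < x < y`, `P(X ≤ n·x) ≤ exp(−n·d(x,y))` where
`d(x,y) = x·ln(x/y) + (1−x)·ln((1−x)/(1−y))`. -/
theorem binomial_lower_tail_chernoff (n : ℕ) (hn : 0 < n) (y : ℝ)
    (hy : y ∈ Set.Ioo (0:ℝ) 1) (x : ℝ) (hx : 0 < x) (hxy : x < y) :
    (∑ k ∈ Finset.range (n + 1),
        if (k : ℝ) ≤ (n : ℝ) * x then (n.choose k : ℝ) * y ^ k * (1 - y) ^ (n - k) else 0)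
      ≤ Real.exp (-(n : ℝ) *
          (x * Real.log (x / y) + (1 - x) * Real.log ((1 - x) / (1 - y)))) := by
  obtain ⟨hy0, hy1⟩ := hy
  have hx1 : x < 1 := hxy.trans hy1
  have h1x : (0:ℝ) < 1 - x := by linarith
  have h1y : (0:ℝ) < 1 - y := by linarith
  set L : ℝ := x * (1 - y) / (y * (1 - x)) with hL
  have hL0 : 0 < L := by positivity
  have hL1 : L ≤ 1 := by
    rw [hL, div_le_one (by positivity)]; nlinarith
  have key : ∀ k ∈ Finset.range (n + 1),
      (if (k : ℝ) ≤ (n : ℝ) * x then (n.choose k : ℝ) * y ^ k * (1 - y) ^ (n - k) else 0)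
        ≤ ((n.choose k : ℝ) * y ^ k * (1 - y) ^ (n - k)) * L ^ ((k : ℝ) - (n : ℝ) * x) := by
    intro k _
    by_cases h : (k : ℝ) ≤ (n : ℝ) * x
    · rw [if_pos h]
      have h1 : L ^ ((0:ℝ)) ≤ L ^ ((k : ℝ) - (n : ℝ) * x) :=
        Real.rpow_le_rpow_of_exponent_ge hL0 hL1 (by linarith)
      rw [Real.rpow_zero] at h1
      have hc : (0:ℝ) ≤ ((n.choose k : ℕ) : ℝ) := Nat.cast_nonneg _
      have hterm : (0:ℝ) ≤ (n.choose k : ℝ) * y ^ k * (1 - y) ^ (n - k) := by positivity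
      nlinarith [hterm]
    · rw [if_neg h]
      positivity
  have hsum := Finset.sum_le_sum key
  refine hsum.trans ?_
  have hexpand : ∀ k : ℕ, L ^ ((k : ℝ) - (n : ℝ) * x) = L ^ k * L ^ (-(n : ℝ) * x) := by
    intro k
    rw [sub_eq_add_neg, Real.rpow_add hL0, Real.rpow_natCast, neg_mul]
  have hrw : (∑ k ∈ Finset.range (n + 1),
      ((n.choose k : ℝ) * y ^ k * (1 - y) ^ (n - k)) * L ^ ((k : ℝ) - (n : ℝ) * x))
      = ((y * L + (1 - y)) ^ n) * L ^ (-(n : ℝ) * x) := by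
    rw [add_pow, Finset.sum_mul]
    refine Finset.sum_congr rfl fun k _ => ?_
    rw [hexpand k, mul_pow]
    ring
  rw [hrw]
  have hbase : y * L + (1 - y) = (1 - y) / (1 - x) := by
    rw [hL]; field_simp; ring
  rw [hbase]
  have h1 : ((1 - y) / (1 - x)) ^ n = Real.exp ((n : ℝ) * Real.log ((1 - y) / (1 - x))) := by
    rw [Real.exp_nat_mul, Real.exp_log (by positivity)]
  have h2 : L ^ (-(n : ℝ) * x) = Real.exp ((-(n : ℝ) * x) * Real.log L) := by
    rw [Real.rpow_def_of_pos hL0, mul_comm]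
  rw [h1, h2, ← Real.exp_add]
  apply le_of_eq
  congr 1
  have hlogL : Real.log L = Real.log x + Real.log (1 - y) - (Real.log y + Real.log (1 - x)) := by
    rw [hL, Real.log_div (by positivity) (by positivity),
      Real.log_mul hx.ne' h1y.ne', Real.log_mul hy0.ne' h1x.ne']
  rw [hlogL, Real.log_div h1y.ne' h1x.ne', Real.log_div hx.ne' hy0.ne',
    Real.log_div h1x.ne' h1y.ne']
  ring
end

section
/- Let k > 0 be a real number and let 0 < u ≤ x < 1. Then the Beta(x·k + 1, (1−x)·k) distribution stochastically dominates the Beta(u·k + 1, (1−u)·k) distribution: for every y ∈ [0,1], F^{beta}_{x·k+1, (1−x)·k}(y) ≤ F^{beta}_{u·k+1, (1−u)·k}(y), where F^{beta}_{α,β} denotes the CDF of the Beta(α, β) distribution. -/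
open MeasureTheory intervalIntegral Set

/-- CDF of the Beta distribution with real parameters `α, β > 0`:
the density on `[0,1]` is proportional to `t^(α−1) * (1−t)^(β−1)` (real exponents). -/
noncomputable def betaCDF (α β y : ℝ) : ℝ :=
  (∫ t in (0:ℝ)..y, t ^ (α - 1) * (1 - t) ^ (β - 1)) /
    (∫ t in (0:ℝ)..1, t ^ (α - 1) * (1 - t) ^ (β - 1))

lemma integrable_g {a b : ℝ} (ha : 0 < a) (hb : -1 < b) {y z : ℝ}
    (hy : y ∈ Set.Icc (0:ℝ) 1) (hz : z ∈ Set.Icc (0:ℝ) 1) :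
    IntervalIntegrable (fun t : ℝ => t ^ a * (1 - t) ^ b) volume y z := by
  have hcont : Continuous fun t : ℝ => t ^ a := by
    apply continuous_iff_continuousAt.2
    intro t
    exact Real.continuousAt_rpow_const t a (Or.inr ha.le)
  have h1 : IntervalIntegrable (fun t : ℝ => t ^ a * (1 - t) ^ b) volume 0 (1/2) := by
    apply ContinuousOn.intervalIntegrable
    apply ContinuousOn.mul (hcont.continuousOn)
    intro t ht
    apply ContinuousAt.continuousWithinAt
    apply ContinuousAt.rpow_const (by fun_prop)
    left
    rw [Set.uIcc_of_le (by norm_num)] at ht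
    have := ht.2
    intro h
    norm_num at this
    linarith
  have h2 : IntervalIntegrable (fun t : ℝ => t ^ a * (1 - t) ^ b) volume (1/2) 1 := by
    have hb' : IntervalIntegrable (fun t : ℝ => (1 - t) ^ b) volume (1/2) 1 := by
      have h := ((intervalIntegrable_rpow' hb (a := 0) (b := 1/2)).comp_sub_left 1).symm
      norm_num at h
      exact h
    exact hb'.continuousOn_mul hcont.continuousOn
  have h01 : IntervalIntegrable (fun t : ℝ => t ^ a * (1 - t) ^ b) volume 0 1 :=
    h1.trans h2
  apply h01.mono_set
  rw [Set.uIcc_of_le (show (0:ℝ) ≤ 1 by norm_num)]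
  rcases le_total y z with h | h
  · rw [Set.uIcc_of_le h]; exact Set.Icc_subset_Icc hy.1 hz.2
  · rw [Set.uIcc_of_ge h]; exact Set.Icc_subset_Icc hz.1 hy.2

lemma key_pointwise (k u x : ℝ) (hk : 0 < k) (hu : 0 < u) (hux : u ≤ x) (hx : x < 1)
    (s t : ℝ) (hs : 0 ≤ s) (hst : s ≤ t) (ht : t < 1) :
    s ^ (x*k) * (1-s) ^ ((1-x)*k-1) * (t ^ (u*k) * (1-t) ^ ((1-u)*k-1)) ≤
    s ^ (u*k) * (1-s) ^ ((1-u)*k-1) * (t ^ (x*k) * (1-t) ^ ((1-x)*k-1)) := by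
  have hxpos : 0 < x := lt_of_lt_of_le hu hux
  rcases eq_or_lt_of_le hs with h0 | hspos
  · rw [← h0]
    rw [Real.zero_rpow (mul_pos hxpos hk).ne', Real.zero_rpow (mul_pos hu hk).ne']
    simp
  have hs1 : s < 1 := lt_of_le_of_lt hst ht
  have h1s : (0:ℝ) < 1 - s := by linarith
  have h1t : (0:ℝ) < 1 - t := by linarith
  have htpos : (0:ℝ) < t := lt_of_lt_of_le hspos hst
  set c := (x - u) * k with hc
  have hcnn : 0 ≤ c := by
    apply mul_nonneg (by linarith) hk.le
  have e1 : x * k = u * k + c := by rw [hc]; ring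
  have e2 : (1-u)*k - 1 = ((1-x)*k - 1) + c := by rw [hc]; ring
  rw [e1, e2, Real.rpow_add hspos, Real.rpow_add h1s, Real.rpow_add htpos,
    Real.rpow_add h1t]
  have key2 : s ^ c * (1-t) ^ c ≤ t ^ c * (1-s) ^ c := by
    rw [← Real.mul_rpow hs h1t.le, ← Real.mul_rpow htpos.le h1s.le]
    apply Real.rpow_le_rpow (by positivity) (by nlinarith) hcnn
  have hP : (0:ℝ) ≤ s ^ (u*k) * (1-s) ^ ((1-x)*k-1) * (t ^ (u*k) * (1-t) ^ ((1-x)*k-1)) := by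
    positivity
  calc s ^ (u*k) * s ^ c * (1-s) ^ ((1-x)*k-1) * (t ^ (u*k) * ((1-t) ^ ((1-x)*k-1) * (1-t) ^ c))
      = (s ^ (u*k) * (1-s) ^ ((1-x)*k-1) * (t ^ (u*k) * (1-t) ^ ((1-x)*k-1))) * (s ^ c * (1-t) ^ c) := by ring
    _ ≤ (s ^ (u*k) * (1-s) ^ ((1-x)*k-1) * (t ^ (u*k) * (1-t) ^ ((1-x)*k-1))) * (t ^ c * (1-s) ^ c) :=
        mul_le_mul_of_nonneg_left key2 hP
    _ = s ^ (u*k) * ((1-s) ^ ((1-x)*k-1) * (1-s) ^ c) * (t ^ (u*k) * t ^ c * (1-t) ^ ((1-x)*k-1)) := by ring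

/-- For `k > 0` and `0 < u ≤ x < 1`, the distribution `Beta(x·k+1, (1−x)·k)` stochastically
dominates `Beta(u·k+1, (1−u)·k)`: its CDF is pointwise at most the CDF of the latter on `[0,1]`. -/
theorem beta_stochastic_dominance (k : ℝ) (hk : 0 < k) (u x : ℝ)
    (hu : 0 < u) (hux : u ≤ x) (hx : x < 1) (y : ℝ) (hy : y ∈ Set.Icc (0:ℝ) 1) :
    betaCDF (x * k + 1) ((1 - x) * k) y ≤ betaCDF (u * k + 1) ((1 - u) * k) y := by
  have hu1 : u < 1 := lt_of_le_of_lt hux hx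
  have hxpos : 0 < x := lt_of_lt_of_le hu hux
  unfold betaCDF
  rw [show x * k + 1 - 1 = x * k by ring, show u * k + 1 - 1 = u * k by ring]
  set gx : ℝ → ℝ := fun t => t ^ (x*k) * (1-t) ^ ((1-x)*k - 1) with hgx
  set gu : ℝ → ℝ := fun t => t ^ (u*k) * (1-t) ^ ((1-u)*k - 1) with hgu
  have hxa : 0 < x * k := by positivity
  have hxb : -1 < (1-x)*k - 1 := by nlinarith
  have hua : 0 < u * k := by positivity
  have hub : -1 < (1-u)*k - 1 := by nlinarith
  have h01 : (0:ℝ) ∈ Set.Icc (0:ℝ) 1 := by constructor <;> norm_num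
  have h11 : (1:ℝ) ∈ Set.Icc (0:ℝ) 1 := by constructor <;> norm_num
  have intx : ∀ {p q : ℝ}, p ∈ Set.Icc (0:ℝ) 1 → q ∈ Set.Icc (0:ℝ) 1 →
      IntervalIntegrable gx volume p q := fun hp hq => integrable_g hxa hxb hp hq
  have intu : ∀ {p q : ℝ}, p ∈ Set.Icc (0:ℝ) 1 → q ∈ Set.Icc (0:ℝ) 1 →
      IntervalIntegrable gu volume p q := fun hp hq => integrable_g hua hub hp hq
  -- nonneg of integrands on [0,1]
  have hgx_nn : ∀ t ∈ Set.Icc (0:ℝ) 1, 0 ≤ gx t := by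
    intro t ht
    have := ht.1; have := ht.2
    apply mul_nonneg (Real.rpow_nonneg ht.1 _) (Real.rpow_nonneg (by linarith [ht.2]) _)
  have hgu_nn : ∀ t ∈ Set.Icc (0:ℝ) 1, 0 ≤ gu t := by
    intro t ht
    apply mul_nonneg (Real.rpow_nonneg ht.1 _) (Real.rpow_nonneg (by linarith [ht.2]) _)
  -- positivity of full integrals
  have hDx : 0 < ∫ t in (0:ℝ)..1, gx t := by
    apply intervalIntegral_pos_of_pos_on (intx h01 h11)
    · intro t ht
      have h1 : 0 < t := ht.1
      have h2 : 0 < 1 - t := by linarith [ht.2]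
      positivity
    · norm_num
  have hDu : 0 < ∫ t in (0:ℝ)..1, gu t := by
    apply intervalIntegral_pos_of_pos_on (intu h01 h11)
    · intro t ht
      have h1 : 0 < t := ht.1
      have h2 : 0 < 1 - t := by linarith [ht.2]
      positivity
    · norm_num
  rw [div_le_div_iff₀ hDx hDu]
  -- split the full integrals at y
  have splitx : (∫ t in (0:ℝ)..1, gx t) = (∫ t in (0:ℝ)..y, gx t) + ∫ t in y..1, gx t :=
    (integral_add_adjacent_intervals (intx h01 hy) (intx hy h11)).symm
  have splitu : (∫ t in (0:ℝ)..1, gu t) = (∫ t in (0:ℝ)..y, gu t) + ∫ t in y..1, gu t :=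
    (integral_add_adjacent_intervals (intu h01 hy) (intu hy h11)).symm
  set Ax := ∫ t in (0:ℝ)..y, gx t
  set Au := ∫ t in (0:ℝ)..y, gu t
  set Bx := ∫ t in y..1, gx t
  set Bu := ∫ t in y..1, gu t
  rw [splitx, splitu]
  -- key cross inequality
  have cross : Ax * Bu ≤ Au * Bx := by
    have step1 : ∀ s ∈ Set.Icc (0:ℝ) y, gx s * Bu ≤ gu s * Bx := by
      intro s hs
      have hs01 : s ∈ Set.Icc (0:ℝ) 1 := ⟨hs.1, le_trans hs.2 hy.2⟩
      rw [show gx s * Bu = ∫ t in y..1, gx s * gu t from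
        (intervalIntegral.integral_const_mul _ _).symm,
        show gu s * Bx = ∫ t in y..1, gu s * gx t from
        (intervalIntegral.integral_const_mul _ _).symm]
      apply integral_mono_ae_restrict hy.2 ((intu hy h11).const_mul _)
        ((intx hy h11).const_mul _)
      have hmem : ∀ᵐ t ∂(volume.restrict (Set.Icc y 1)), t ∈ Set.Icc y 1 :=
        ae_restrict_mem measurableSet_Icc
      have hne : ∀ᵐ t ∂(volume.restrict (Set.Icc y 1)), t ≠ (1:ℝ) := by
        apply ae_restrict_of_ae
        rw [ae_iff]
        have : {t : ℝ | ¬ t ≠ 1} = {1} := by ext t; simp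
        rw [this]
        exact Real.volume_singleton
      filter_upwards [hmem, hne] with t ht htn
      exact key_pointwise k u x hk hu hux hx s t hs01.1 (le_trans hs.2 ht.1)
        (lt_of_le_of_ne ht.2 htn)
    have hAx : Ax * Bu = ∫ s in (0:ℝ)..y, gx s * Bu :=
      (intervalIntegral.integral_mul_const _ _).symm
    have hAu : Au * Bx = ∫ s in (0:ℝ)..y, gu s * Bx :=
      (intervalIntegral.integral_mul_const _ _).symm
    rw [hAx, hAu]
    exact integral_mono_on hy.1 ((intx h01 hy).mul_const _) ((intu h01 hy).mul_const _) step1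
  -- nonneg of pieces
  have hAx_nn : 0 ≤ Ax := integral_nonneg hy.1 (fun t ht => hgx_nn t ⟨ht.1, le_trans ht.2 hy.2⟩)
  have hAu_nn : 0 ≤ Au := integral_nonneg hy.1 (fun t ht => hgu_nn t ⟨ht.1, le_trans ht.2 hy.2⟩)
  nlinarith [cross, hAx_nn, hAu_nn]
end

section
/- Let X₁, X₂, … be independent standard Gaussian random variables (mean zero, variance 1), and let β̂_s = (1/s)·Σ_{i=1}^{s} X_i. Let T ≥ N ≥ 1 be integers and let 𝔅 = {2^i : i = 0, 1, …, ⌊log₂ T⌋}. Then for every α > 2 and every Δ > 0, P( ∃ s ∈ 𝔅 : β̂_s + √((α/s)·log⁺(T/(s·N))) + Δ ≤ 0 ) ≤ 4N/(T·Δ²). -/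
open MeasureTheory ProbabilityTheory
open scoped ProbabilityTheory BigOperators
open scoped ENNReal NNReal

/-- `log⁺ x = max (ln x) 0`. -/
noncomputable def posLog (x : ℝ) : ℝ := max (Real.log x) 0

section Aux

lemma exp_mul_gaussianPDFReal (t x : ℝ) :
    Real.exp (t * x) * gaussianPDFReal 0 1 x = Real.exp (t^2/2) * gaussianPDFReal t 1 x := by
  simp only [gaussianPDFReal, NNReal.coe_one, mul_one, sub_zero]
  rw [mul_left_comm, mul_left_comm (Real.exp (t^2/2))]
  congr 1
  rw [← Real.exp_add, ← Real.exp_add]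
  ring_nf

lemma integrable_exp_mul_gaussianReal (t : ℝ) :
    Integrable (fun x => Real.exp (t * x)) (gaussianReal 0 1) := by
  rw [gaussianReal_of_var_ne_zero 0 one_ne_zero]
  have hmeas : Measurable fun x => (gaussianPDFReal 0 1 x).toNNReal :=
    (measurable_gaussianPDFReal 0 1).real_toNNReal
  have h : gaussianPDF 0 1 = fun x => ((gaussianPDFReal 0 1 x).toNNReal : ℝ≥0∞) := rfl
  rw [h, integrable_withDensity_iff_integrable_smul hmeas]
  have h2 : (fun x => (gaussianPDFReal 0 1 x).toNNReal • Real.exp (t * x))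
      = fun x => Real.exp (t^2/2) * gaussianPDFReal t 1 x := by
    funext x
    rw [NNReal.smul_def, smul_eq_mul, Real.coe_toNNReal _ (gaussianPDFReal_nonneg 0 1 x),
      mul_comm, exp_mul_gaussianPDFReal]
  rw [h2]
  exact (integrable_gaussianPDFReal t 1).const_mul _

lemma integral_exp_mul_gaussianReal (t : ℝ) :
    ∫ x, Real.exp (t * x) ∂(gaussianReal 0 1) = Real.exp (t^2/2) := by
  rw [gaussianReal_of_var_ne_zero 0 one_ne_zero]
  have hmeas : Measurable fun x => (gaussianPDFReal 0 1 x).toNNReal :=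
    (measurable_gaussianPDFReal 0 1).real_toNNReal
  have h : gaussianPDF 0 1 = fun x => ((gaussianPDFReal 0 1 x).toNNReal : ℝ≥0∞) := rfl
  rw [h, integral_withDensity_eq_integral_smul hmeas]
  have h2 : (fun x => (gaussianPDFReal 0 1 x).toNNReal • Real.exp (t * x))
      = fun x => Real.exp (t^2/2) * gaussianPDFReal t 1 x := by
    funext x
    rw [NNReal.smul_def, smul_eq_mul, Real.coe_toNNReal _ (gaussianPDFReal_nonneg 0 1 x),
      mul_comm, exp_mul_gaussianPDFReal]
  rw [h2, integral_const_mul, integral_gaussianPDFReal_eq_one t one_ne_zero, mul_one]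

variable {Ω : Type*} [MeasureSpace Ω]

omit [MeasureSpace Ω] in
lemma aux_int' [MeasureSpace Ω] (X : ℕ → Ω → ℝ) (hmeas : ∀ i, Measurable (X i))
    (hlaw : ∀ i, Measure.map (X i) ℙ = gaussianReal 0 1) (i : ℕ) (t : ℝ) :
    Integrable (fun ω => Real.exp (t * X i ω)) ℙ := by
  have h := _root_.integrable_exp_mul_gaussianReal t
  rw [← hlaw i] at h
  exact (integrable_map_measure (Continuous.aestronglyMeasurable (by continuity))
    (hmeas i).aemeasurable).mp h

omit [MeasureSpace Ω] in
lemma aux_mgf' [MeasureSpace Ω] (X : ℕ → Ω → ℝ) (hmeas : ∀ i, Measurable (X i))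
    (hlaw : ∀ i, Measure.map (X i) ℙ = gaussianReal 0 1) (i : ℕ) (t : ℝ) :
    mgf (X i) ℙ t = Real.exp (t^2/2) := by
  have h : mgf (X i) ℙ t = ∫ x, Real.exp (t * x) ∂(Measure.map (X i) ℙ) := by
    rw [integral_map (hmeas i).aemeasurable (Continuous.aestronglyMeasurable (by continuity))]
    rfl
  rw [h, hlaw i, integral_exp_mul_gaussianReal]

lemma aux_chernoff [IsProbabilityMeasure (ℙ : Measure Ω)]
    (X : ℕ → Ω → ℝ) (hmeas : ∀ i, Measurable (X i))
    (hindep : iIndepFun (m := fun _ => Real.measurableSpace) X ℙ)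
    (hlaw : ∀ i, Measure.map (X i) ℙ = gaussianReal 0 1)
    (n : ℕ) (hn : 0 < n) (a : ℝ) (ha : 0 ≤ a) :
    (ℙ {ω | ∑ j ∈ Finset.Icc 1 n, X j ω ≤ -a}).toReal ≤ Real.exp (-(a^2/(2*n))) := by
  have hnR : (0:ℝ) < n := Nat.cast_pos.mpr hn
  set t : ℝ := -(a / n) with ht_def
  have ht : t ≤ 0 := neg_nonpos.mpr (div_nonneg ha hnR.le)
  have hintsum : Integrable (fun ω => Real.exp (t * (∑ j ∈ Finset.Icc 1 n, X j) ω)) ℙ :=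
    hindep.integrable_exp_mul_sum hmeas (fun j _ => aux_int' X hmeas hlaw j t)
  have hset : {ω | ∑ j ∈ Finset.Icc 1 n, X j ω ≤ -a}
      = {ω | (∑ j ∈ Finset.Icc 1 n, X j) ω ≤ -a} := by
    ext ω; simp [Finset.sum_apply]
  rw [hset]
  refine le_trans (measure_le_le_exp_mul_mgf (-a) ht hintsum) ?_
  rw [hindep.mgf_sum hmeas]
  have hprod : ∏ j ∈ Finset.Icc 1 n, mgf (X j) ℙ t = Real.exp (n * (t^2/2)) := by
    rw [Finset.prod_congr rfl (fun j _ => aux_mgf' X hmeas hlaw j t), Finset.prod_const,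
      Nat.card_Icc, ← Real.exp_nat_mul]
    norm_num
  rw [hprod, ← Real.exp_add]
  apply le_of_eq
  congr 1
  rw [ht_def]
  field_simp
  ring

lemma geom_exp_sum_le' {c : ℝ} (hc : 0 < c) (m : ℕ) :
    c * ∑ i ∈ Finset.range (m+1), (2:ℝ)^i * Real.exp (-((2:ℝ)^i * c))
      ≤ 2 * (1 - Real.exp (-((2:ℝ)^m * c))) := by
  induction m with
  | zero =>
    norm_num [Finset.sum_range_succ]
    have h1 : c + 1 ≤ Real.exp c := Real.add_one_le_exp c
    have h2 : Real.exp (-c) * Real.exp c = 1 := by rw [← Real.exp_add]; simp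
    nlinarith [Real.exp_pos (-c), Real.exp_pos c]
  | succ m ih =>
    rw [Finset.sum_range_succ, mul_add]
    have hu : (0:ℝ) < (2:ℝ)^m * c := by positivity
    set u : ℝ := (2:ℝ)^m * c with hu_def
    have h2 : ((2:ℝ)^(m+1) * c) = 2 * u := by rw [hu_def]; ring
    have hy : Real.exp (-(2*u)) = Real.exp (-u) * Real.exp (-u) := by
      rw [← Real.exp_add]; ring_nf
    have h1 : u + 1 ≤ Real.exp u := Real.add_one_le_exp u
    have h3 : Real.exp (-u) * Real.exp u = 1 := by rw [← Real.exp_add]; simp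
    have hterm : c * ((2:ℝ)^(m+1) * Real.exp (-((2:ℝ)^(m+1) * c)))
        ≤ 2 * (Real.exp (-u) - Real.exp (-(2*u))) := by
      rw [h2, hy]
      have h2pow : c * (2:ℝ)^(m+1) = 2 * u := by rw [hu_def]; ring
      have hk : Real.exp (-u) * (1 + u) ≤ 1 := by
        nlinarith [Real.exp_pos (-u)]
      nlinarith [Real.exp_pos (-u), sq_nonneg (Real.exp (-u))]
    calc c * ∑ i ∈ Finset.range (m+1), (2:ℝ)^i * Real.exp (-((2:ℝ)^i * c))
          + c * ((2:ℝ)^(m+1) * Real.exp (-((2:ℝ)^(m+1) * c)))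
        ≤ 2 * (1 - Real.exp (-u)) + 2 * (Real.exp (-u) - Real.exp (-(2*u))) :=
          add_le_add ih hterm
      _ = 2 * (1 - Real.exp (-((2:ℝ)^(m+1) * c))) := by rw [h2]; ring

lemma div_event_iff {sv S c : ℝ} (hs : 0 < sv) : (1/sv) * S + c ≤ 0 ↔ S ≤ -(sv * c) := by
  rw [one_div, inv_mul_eq_div, ← le_sub_iff_add_le, zero_sub, div_le_iff₀ hs]
  constructor <;> intro h <;> nlinarith

end Aux

/-- Maximal concentration bound over powers of two for averages of independent standard
Gaussian variables: for `T ≥ N ≥ 1`, `α > 2`, `Δ > 0`,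
`P(∃ s ∈ 𝔅, β̂_s + √((α/s)·log⁺(T/(sN))) + Δ ≤ 0) ≤ 4N/(TΔ²)`, where
`𝔅 = {2^i : 0 ≤ i ≤ ⌊log₂ T⌋}` and `β̂_s = (1/s)·∑_{j=1}^s X_j`. -/
theorem gaussian_powers_of_two_concentration {Ω : Type*} [MeasureSpace Ω]
    [IsProbabilityMeasure (ℙ : Measure Ω)]
    (X : ℕ → Ω → ℝ) (hmeas : ∀ i, Measurable (X i))
    (hindep : iIndepFun (m := fun _ => Real.measurableSpace) X ℙ)
    (hlaw : ∀ i, Measure.map (X i) ℙ = gaussianReal 0 1)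
    (T N : ℕ) (hN : 1 ≤ N) (hNT : N ≤ T)
    (α : ℝ) (hα : 2 < α) (Δ : ℝ) (hΔ : 0 < Δ) :
    (ℙ {ω | ∃ i ≤ Nat.log 2 T,
          (1 / ((2 ^ i : ℕ) : ℝ)) * ∑ j ∈ Finset.Icc 1 (2 ^ i), X j ω
            + Real.sqrt ((α / ((2 ^ i : ℕ) : ℝ)) * posLog ((T : ℝ) / (((2 ^ i : ℕ) : ℝ) * N)))
            + Δ ≤ 0}).toReal
      ≤ 4 * N / (T * Δ ^ 2) := by
  set m := Nat.log 2 T with hm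
  have hTR : (0:ℝ) < T := by exact_mod_cast lt_of_lt_of_le one_pos (le_trans hN hNT)
  have hNR : (0:ℝ) < N := by exact_mod_cast hN
  set s : ℕ → ℝ := fun i => (2:ℝ)^i with hs
  have hspos : ∀ i, (0:ℝ) < s i := fun i => by positivity
  have hcast : ∀ i : ℕ, ((2 ^ i : ℕ) : ℝ) = s i := fun i => by push_cast; rfl
  set L : ℕ → ℝ := fun i => posLog ((T : ℝ) / (s i * N)) with hL
  have hLnn : ∀ i, 0 ≤ L i := fun i => le_max_right _ _
  set a : ℕ → ℝ := fun i => s i * (Real.sqrt ((α / s i) * L i) + Δ) with ha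
  have hann : ∀ i, 0 ≤ a i := fun i =>
    mul_nonneg (hspos i).le (add_nonneg (Real.sqrt_nonneg _) hΔ.le)
  set E : ℕ → Set Ω := fun i => {ω | ∑ j ∈ Finset.Icc 1 (2^i), X j ω ≤ -(a i)} with hE
  -- rewrite the event as a finite union
  have hsetEq : {ω | ∃ i ≤ m,
          (1 / ((2 ^ i : ℕ) : ℝ)) * ∑ j ∈ Finset.Icc 1 (2 ^ i), X j ω
            + Real.sqrt ((α / ((2 ^ i : ℕ) : ℝ)) * posLog ((T : ℝ) / (((2 ^ i : ℕ) : ℝ) * N)))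
            + Δ ≤ 0} = ⋃ i ∈ Finset.range (m+1), E i := by
    ext ω
    simp only [Set.mem_setOf_eq, Set.mem_iUnion, Finset.mem_range, Nat.lt_succ_iff, hE, hcast]
    refine exists_congr fun i => ?_
    rw [exists_prop]
    refine and_congr_right fun _ => ?_
    rw [add_assoc]
    exact div_event_iff (hspos i)
  rw [hsetEq]
  -- union bound
  have h1 : (ℙ (⋃ i ∈ Finset.range (m+1), E i)).toReal
      ≤ ∑ i ∈ Finset.range (m+1), (ℙ (E i)).toReal := by
    rw [← ENNReal.toReal_sum (fun i _ => measure_ne_top ℙ _)]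
    refine ENNReal.toReal_mono ?_ (measure_biUnion_finset_le _ _)
    exact (ENNReal.sum_lt_top.mpr fun i _ => measure_lt_top ℙ _).ne
  -- individual bounds
  have hub : ∀ i, (ℙ (E i)).toReal ≤ (s i * N / T) * Real.exp (-(s i * (Δ^2/2))) := by
    intro i
    have hsi := hspos i
    have hch : (ℙ (E i)).toReal ≤ Real.exp (-((a i)^2 / (2 * ((2^i : ℕ) : ℝ)))) :=
      aux_chernoff X hmeas hindep hlaw (2^i) (Nat.pow_pos two_pos) (a i) (hann i)
    rw [hcast i] at hch
    refine hch.trans ?_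
    set R : ℝ := Real.sqrt ((α / s i) * L i) with hR
    have hq : 0 ≤ (α / s i) * L i := mul_nonneg (div_nonneg (by linarith) hsi.le) (hLnn i)
    have hsq : R^2 = (α / s i) * L i := Real.sq_sqrt hq
    have hRnn : 0 ≤ R := Real.sqrt_nonneg _
    have hai : a i = s i * (R + Δ) := rfl
    have hsq3 : (s i)^2 * ((α / s i) * L i) = s i * (α * L i) := by
      field_simp
    -- step A
    have hA : Real.exp (-((a i)^2 / (2 * s i)))
        ≤ Real.exp (-((α/2) * L i + s i * (Δ^2/2))) := by
      apply Real.exp_le_exp.mpr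
      apply neg_le_neg
      rw [le_div_iff₀ (by positivity)]
      have h5 : (s i)^2 * R^2 = s i * (α * L i) := by rw [hsq, hsq3]
      rw [hai]
      nlinarith [h5, mul_nonneg (mul_nonneg (sq_nonneg (s i)) hRnn) hΔ.le]
    refine hA.trans ?_
    -- step B
    have hexpL : Real.exp (-((α/2) * L i)) ≤ s i * N / T := by
      rcases le_or_gt ((T:ℝ) / (s i * N)) 1 with hle | hgt
      · have hL0 : L i = 0 := by
          have hlog : Real.log ((T:ℝ)/(s i * N)) ≤ 0 := Real.log_nonpos (by positivity) hle
          simp only [hL, posLog]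
          exact max_eq_right hlog
        rw [hL0, mul_zero, neg_zero, Real.exp_zero, le_div_iff₀ hTR]
        rw [div_le_one (by positivity)] at hle
        linarith
      · have hlog : 0 ≤ Real.log ((T:ℝ)/(s i * N)) := Real.log_nonneg hgt.le
        have hLi : L i = Real.log ((T:ℝ)/(s i * N)) := max_eq_left hlog
        have h1' : Real.exp (-((α/2)*L i)) ≤ Real.exp (-(1 * L i)) := by
          apply Real.exp_le_exp.mpr
          apply neg_le_neg
          exact mul_le_mul_of_nonneg_right (by linarith) (hLnn i)
        refine h1'.trans (le_of_eq ?_)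
        rw [one_mul, hLi, Real.exp_neg, Real.exp_log (by positivity), inv_div]
    calc Real.exp (-((α/2) * L i + s i * (Δ^2/2)))
        = Real.exp (-((α/2) * L i)) * Real.exp (-(s i * (Δ^2/2))) := by
          rw [← Real.exp_add]; ring_nf
      _ ≤ (s i * N / T) * Real.exp (-(s i * (Δ^2/2))) :=
          mul_le_mul_of_nonneg_right hexpL (Real.exp_pos _).le
  -- sum bound
  have hsum : ∑ i ∈ Finset.range (m+1), (s i * N / T) * Real.exp (-(s i * (Δ^2/2)))
      ≤ 4 * N / (T * Δ^2) := by
    have hc : (0:ℝ) < Δ^2/2 := by positivity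
    have h2 := geom_exp_sum_le' hc m
    have hrw : ∑ i ∈ Finset.range (m+1), (s i * N / T) * Real.exp (-(s i * (Δ^2/2)))
        = (N/T) * ∑ i ∈ Finset.range (m+1), (2:ℝ)^i * Real.exp (-((2:ℝ)^i * (Δ^2/2))) := by
      rw [Finset.mul_sum]
      refine Finset.sum_congr rfl fun i _ => ?_
      show s i * N / T * Real.exp (-(s i * (Δ^2/2)))
        = (N:ℝ)/T * ((2:ℝ)^i * Real.exp (-((2:ℝ)^i * (Δ^2/2))))
      rw [hs]; ring
    rw [hrw]
    have hS : ∑ i ∈ Finset.range (m+1), (2:ℝ)^i * Real.exp (-((2:ℝ)^i * (Δ^2/2))) ≤ 4/Δ^2 := by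
      have h3 : (Δ^2/2) * ∑ i ∈ Finset.range (m+1),
          (2:ℝ)^i * Real.exp (-((2:ℝ)^i * (Δ^2/2))) ≤ 2 := by
        refine h2.trans ?_
        nlinarith [Real.exp_pos (-((2:ℝ)^m * (Δ^2/2)))]
      rw [le_div_iff₀ (by positivity : (0:ℝ) < Δ^2)]
      nlinarith [h3]
    calc (N:ℝ)/T * ∑ i ∈ Finset.range (m+1), (2:ℝ)^i * Real.exp (-((2:ℝ)^i * (Δ^2/2)))
        ≤ (N:ℝ)/T * (4/Δ^2) := mul_le_mul_of_nonneg_left hS (by positivity)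
      _ = 4 * N / (T * Δ^2) := by ring
  exact h1.trans ((Finset.sum_le_sum fun i _ => hub i).trans hsum)
end

section
/- Fix ρ ∈ (1/2, 1). Let X₁, X₂, … be independent random variables with mean μ₁ such that X_i − μ₁ is 1-subgaussian, and let μ̂_s = (1/s)·Σ_{i=1}^{s} X_i. For s ≥ 1 let h(s) = 2^{⌊log₂ s⌋} and, for ε > 0, define the random variable G'_{1h(s)}(ε) = 1 − Φ(√(ρ·h(s))·(μ₁ − ε − μ̂_{h(s)})). Then there exists a constant c > 0 (depending only on ρ) such that for every integer T ≥ 1 and every ε > 0, E[ Σ_{s=1}^{T−1} ( 1/G'_{1h(s)}(ε) − 1 ) ] ≤ c/ε². -/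
open MeasureTheory ProbabilityTheory
open scoped ProbabilityTheory BigOperators

/-- The standard normal CDF `Φ`. -/
noncomputable def stdGaussianCDF (x : ℝ) : ℝ := ((gaussianReal 0 1) (Set.Iic x)).toReal

/-- `h s` is the largest power of two less than or equal to `s` (for `s ≥ 1`). -/
def hpow (s : ℕ) : ℕ := 2 ^ Nat.log 2 s

open Real
open scoped ENNReal

namespace EITS

noncomputable def phi (t : ℝ) : ℝ := gaussianPDFReal 0 1 t

lemma phi_eq (t : ℝ) : phi t = (√(2 * π))⁻¹ * rexp (-t ^ 2 / 2) := by
  simp [phi, gaussianPDFReal]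

lemma phi_nonneg (t : ℝ) : 0 ≤ phi t := gaussianPDFReal_nonneg _ _ _

lemma integrable_phi : Integrable phi := integrable_gaussianPDFReal 0 1

lemma integral_phi : ∫ t, phi t = 1 := integral_gaussianPDFReal_eq_one 0 one_ne_zero

lemma cdf_eq (x : ℝ) : stdGaussianCDF x = ∫ t in Set.Iic x, phi t := by
  rw [stdGaussianCDF, gaussianReal_apply_eq_integral 0 one_ne_zero]
  rw [ENNReal.toReal_ofReal]
  · rfl
  · exact setIntegral_nonneg measurableSet_Iic fun t _ => phi_nonneg t

lemma one_sub_cdf (x : ℝ) : 1 - stdGaussianCDF x = ∫ t in Set.Ioi x, phi t := by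
  have h := integral_add_compl (s := Set.Iic x) measurableSet_Iic (integrable_phi) (f := phi)
  rw [Set.compl_Iic] at h
  rw [cdf_eq, ← integral_phi, ← h]
  ring

lemma cdf_nonneg (x : ℝ) : 0 ≤ stdGaussianCDF x := ENNReal.toReal_nonneg

lemma cdf_le_one (x : ℝ) : stdGaussianCDF x ≤ 1 := by
  rw [stdGaussianCDF]
  have := prob_le_one (μ := gaussianReal 0 1) (s := Set.Iic x)
  exact ENNReal.toReal_le_of_le_ofReal one_pos.le (by simpa using this)

end EITS

namespace EITS

lemma const_le_phi {a : ℝ} (t : ℝ) (ht : t ^ 2 ≤ a ^ 2) :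
    (√(2 * π))⁻¹ * rexp (-a ^ 2 / 2) ≤ phi t := by
  rw [phi_eq]
  have h2 : rexp (-a ^ 2 / 2) ≤ rexp (-t ^ 2 / 2) := by
    apply Real.exp_le_exp.2; linarith
  have : (0:ℝ) ≤ (√(2 * π))⁻¹ := by positivity
  exact mul_le_mul_of_nonneg_left h2 this

lemma sqrt_two_pi_exp_half_le : √(2 * π) * rexp (1 / 2) ≤ 5 := by
  have hpi : π < 3.15 := Real.pi_lt_d2
  have he : rexp 1 < 2.7182818286 := Real.exp_one_lt_d9
  have h1 : (0:ℝ) ≤ √(2 * π) * rexp (1 / 2) := by positivity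
  refine le_of_pow_le_pow_left₀ (two_ne_zero) (by norm_num) ?_
  have hsq : (√(2 * π)) ^ 2 = 2 * π := Real.sq_sqrt (by positivity)
  have hexp : rexp (1 / 2) ^ 2 = rexp 1 := by
    rw [pow_two, ← Real.exp_add]; norm_num
  have : (√(2 * π) * rexp (1 / 2)) ^ 2 = 2 * π * rexp 1 := by
    rw [mul_pow, hsq, hexp]
  rw [this]
  nlinarith [Real.exp_pos 1, Real.pi_pos]

lemma inv_five_le : (1 : ℝ) / 5 ≤ (√(2 * π))⁻¹ * rexp (-(1/2) : ℝ) := by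
  have h0 : (0:ℝ) < √(2 * π) * rexp (1 / 2) := by positivity
  have h := sqrt_two_pi_exp_half_le
  have : (√(2 * π))⁻¹ * rexp (-(1/2) : ℝ) = (√(2 * π) * rexp (1 / 2))⁻¹ := by
    rw [Real.exp_neg, mul_inv]
  rw [this, one_div]
  exact inv_anti₀ (by positivity) h

/-- Lower bound for the Gaussian upper tail. -/
lemma psi_lb (x : ℝ) :
    (1 / 5 : ℝ) * rexp (-(max x 0) - (max x 0) ^ 2 / 2) ≤ 1 - stdGaussianCDF x := by
  set a := max x 0 with ha
  have ha0 : 0 ≤ a := le_max_right _ _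
  have hxa : x ≤ a := le_max_left _ _
  rw [one_sub_cdf]
  have hsub : Set.Ioc a (a + 1) ⊆ Set.Ioi x := fun t h => lt_of_le_of_lt hxa h.1
  have h1 : ∫ t in Set.Ioc a (a + 1), phi t ≤ ∫ t in Set.Ioi x, phi t := by
    apply setIntegral_mono_set (integrable_phi.integrableOn)
      (Filter.Eventually.of_forall fun t => phi_nonneg t) (HasSubset.Subset.eventuallyLE hsub)
  refine le_trans ?_ h1
  have h2 : ((√(2 * π))⁻¹ * rexp (-(a+1) ^ 2 / 2)) * (volume (Set.Ioc a (a + 1))).toReal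
      ≤ ∫ t in Set.Ioc a (a + 1), phi t := by
    apply setIntegral_ge_of_const_le_real measurableSet_Ioc
    · simp [Real.volume_Ioc]
    · intro t ht
      apply const_le_phi
      have h3 : 0 < t := lt_of_le_of_lt ha0 ht.1
      nlinarith [ht.1, ht.2]
    · exact integrable_phi.integrableOn
  have hvol : (volume (Set.Ioc a (a + 1))).toReal = 1 := by
    rw [Real.volume_Ioc]; simp
  rw [hvol, mul_one] at h2
  refine le_trans ?_ h2
  have : rexp (-(a+1) ^ 2 / 2) = rexp (-(1/2) : ℝ) * rexp (-a - a ^ 2 / 2) := by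
    rw [← Real.exp_add]; ring_nf
  rw [this, ← mul_assoc]
  apply mul_le_mul_of_nonneg_right _ (Real.exp_nonneg _)
  exact inv_five_le

lemma psi_pos (x : ℝ) : 0 < 1 - stdGaussianCDF x :=
  lt_of_lt_of_le (by positivity) (psi_lb x)

/-- Lower bound for the CDF at nonneg points. -/
lemma cdf_lb {x : ℝ} (hx : 0 ≤ x) : (1 / 5 : ℝ) ≤ stdGaussianCDF x := by
  rw [cdf_eq]
  have hsub : Set.Ioc (-1 : ℝ) 0 ⊆ Set.Iic x := fun t h => le_trans h.2 hx
  have h1 : ∫ t in Set.Ioc (-1 : ℝ) 0, phi t ≤ ∫ t in Set.Iic x, phi t :=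
    setIntegral_mono_set (integrable_phi.integrableOn)
      (Filter.Eventually.of_forall fun t => phi_nonneg t) (HasSubset.Subset.eventuallyLE hsub)
  refine le_trans ?_ h1
  have h2 : ((√(2 * π))⁻¹ * rexp (-(1:ℝ) ^ 2 / 2)) * (volume (Set.Ioc (-1:ℝ) 0)).toReal
      ≤ ∫ t in Set.Ioc (-1:ℝ) 0, phi t := by
    apply setIntegral_ge_of_const_le_real measurableSet_Ioc
    · simp [Real.volume_Ioc]
    · intro t ht
      apply const_le_phi
      nlinarith [ht.1, ht.2]
    · exact integrable_phi.integrableOn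
  have hvol : (volume (Set.Ioc (-1:ℝ) 0)).toReal = 1 := by
    rw [Real.volume_Ioc]; norm_num
  rw [hvol, mul_one] at h2
  refine le_trans ?_ h2
  have : rexp (-(1:ℝ) ^ 2 / 2) = rexp (-(1/2) : ℝ) := by norm_num
  rw [this]
  exact inv_five_le

end EITS

namespace EITS

lemma pdf_shift (m t : ℝ) : gaussianPDFReal m 1 t = (√(2 * π))⁻¹ * rexp (-(t - m) ^ 2 / 2) := by
  simp [gaussianPDFReal]

lemma phi_le_shift {x t : ℝ} (h : 0 ≤ x * (t - x)) :
    phi t ≤ rexp (-x ^ 2 / 2) * gaussianPDFReal x 1 t := by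
  rw [phi_eq, pdf_shift, ← mul_assoc, mul_comm (rexp (-x ^ 2 / 2)) (√(2 * π))⁻¹, mul_assoc,
    ← Real.exp_add]
  have : (0:ℝ) ≤ (√(2 * π))⁻¹ := by positivity
  apply mul_le_mul_of_nonneg_left _ this
  apply Real.exp_le_exp.2
  nlinarith

lemma shift_setIntegral_le (x : ℝ) (s : Set ℝ) :
    ∫ t in s, rexp (-x ^ 2 / 2) * gaussianPDFReal x 1 t ≤ rexp (-x ^ 2 / 2) := by
  rw [integral_const_mul]
  have h1 : ∫ t in s, gaussianPDFReal x 1 t ≤ ∫ t, gaussianPDFReal x 1 t :=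
    setIntegral_le_integral (integrable_gaussianPDFReal _ _)
      (Filter.Eventually.of_forall fun t => gaussianPDFReal_nonneg _ _ t)
  rw [integral_gaussianPDFReal_eq_one x one_ne_zero] at h1
  calc rexp (-x ^ 2 / 2) * ∫ t in s, gaussianPDFReal x 1 t
      ≤ rexp (-x ^ 2 / 2) * 1 := mul_le_mul_of_nonneg_left h1 (Real.exp_nonneg _)
    _ = rexp (-x ^ 2 / 2) := mul_one _

lemma psi_ub {x : ℝ} (hx : 0 ≤ x) : 1 - stdGaussianCDF x ≤ rexp (-x ^ 2 / 2) := by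
  rw [one_sub_cdf]
  have h1 : ∫ t in Set.Ioi x, phi t
      ≤ ∫ t in Set.Ioi x, rexp (-x ^ 2 / 2) * gaussianPDFReal x 1 t := by
    apply setIntegral_mono_on integrable_phi.integrableOn
      (((integrable_gaussianPDFReal x 1).const_mul _).integrableOn) measurableSet_Ioi
    intro t ht
    exact phi_le_shift (mul_nonneg hx (by linarith [ht.out]))
  exact h1.trans (shift_setIntegral_le x _)

lemma cdf_ub {x : ℝ} (hx : x ≤ 0) : stdGaussianCDF x ≤ rexp (-x ^ 2 / 2) := by
  rw [cdf_eq]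
  have h1 : ∫ t in Set.Iic x, phi t
      ≤ ∫ t in Set.Iic x, rexp (-x ^ 2 / 2) * gaussianPDFReal x 1 t := by
    apply setIntegral_mono_on integrable_phi.integrableOn
      (((integrable_gaussianPDFReal x 1).const_mul _).integrableOn) measurableSet_Iic
    intro t ht
    exact phi_le_shift (mul_nonneg_of_nonpos_of_nonpos hx (by linarith [ht.out]))
  exact h1.trans (shift_setIntegral_le x _)

lemma cdf_mono : Monotone stdGaussianCDF := by
  intro a b hab
  unfold stdGaussianCDF
  exact ENNReal.toReal_mono (measure_ne_top _ _) (measure_mono (Set.Iic_subset_Iic.2 hab))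

lemma measurable_cdf : Measurable stdGaussianCDF := cdf_mono.measurable

end EITS

namespace EITS

lemma inv_psi_le (x : ℝ) :
    (1 - stdGaussianCDF x)⁻¹ ≤ 5 * rexp (max x 0 + (max x 0) ^ 2 / 2) := by
  have h := psi_lb x
  have hpos : (0:ℝ) < 1 / 5 * rexp (-max x 0 - max x 0 ^ 2 / 2) := by positivity
  have h2 := inv_anti₀ hpos h
  calc (1 - stdGaussianCDF x)⁻¹ ≤ (1 / 5 * rexp (-max x 0 - max x 0 ^ 2 / 2))⁻¹ := h2
    _ = 5 * rexp (max x 0 + max x 0 ^ 2 / 2) := by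
        rw [mul_inv, ← Real.exp_neg]
        ring_nf

lemma master_neg {x : ℝ} (hx : x ≤ 0) (v : ℝ) :
    1 / (1 - stdGaussianCDF x) - 1 ≤ 5 * rexp (v ^ 2 / 2) * rexp (v * x) := by
  have hψ := psi_pos x
  have hmax : max x 0 = 0 := max_eq_right hx
  have hinv : (1 - stdGaussianCDF x)⁻¹ ≤ 5 := by
    have := inv_psi_le x
    rw [hmax] at this
    simpa using this
  have h1 : 1 / (1 - stdGaussianCDF x) - 1 = stdGaussianCDF x * (1 - stdGaussianCDF x)⁻¹ := by
    field_simp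
    ring
  rw [h1]
  have hcdf : stdGaussianCDF x ≤ rexp (-x ^ 2 / 2) := cdf_ub hx
  have hcdf0 : 0 ≤ stdGaussianCDF x := cdf_nonneg x
  calc stdGaussianCDF x * (1 - stdGaussianCDF x)⁻¹ ≤ rexp (-x ^ 2 / 2) * 5 := by
        apply mul_le_mul hcdf hinv (by positivity) (Real.exp_nonneg _)
    _ ≤ 5 * rexp (v ^ 2 / 2) * rexp (v * x) := by
        rw [mul_comm, mul_assoc, ← Real.exp_add]
        apply mul_le_mul_of_nonneg_left _ (by norm_num)
        apply Real.exp_le_exp.2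
        nlinarith [sq_nonneg (v + x)]

lemma master_pos {x : ℝ} (hx : 0 < x) :
    1 / (1 - stdGaussianCDF x) - 1 ≤
      5 * rexp ((Nat.floor x + 2 : ℝ) - (Nat.floor x + 2 : ℝ) ^ 2 / 2) *
        rexp ((Nat.floor x + 2 : ℝ) * x) := by
  have hψ := psi_pos x
  set j : ℝ := (Nat.floor x + 2 : ℝ) with hj
  have hfl : (Nat.floor x : ℝ) ≤ x := Nat.floor_le hx.le
  have hfl2 : x < (Nat.floor x : ℝ) + 1 := Nat.lt_floor_add_one x
  have hd1 : 1 < j - x := by simp only [hj]; linarith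
  have hd2 : j - x ≤ 2 := by simp only [hj]; linarith
  have h1 : 1 / (1 - stdGaussianCDF x) - 1 ≤ (1 - stdGaussianCDF x)⁻¹ := by
    rw [one_div]; linarith
  refine h1.trans ?_
  have h2 := inv_psi_le x
  have hmax : max x 0 = x := max_eq_left hx.le
  rw [hmax] at h2
  refine h2.trans ?_
  rw [mul_assoc, ← Real.exp_add]
  apply mul_le_mul_of_nonneg_left _ (by norm_num)
  apply Real.exp_le_exp.2
  nlinarith [sq_nonneg (j - x)]

open scoped ENNReal in
lemma master_ennreal (x : ℝ) {v : ℝ} (hv : 0 ≤ v) :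
    ENNReal.ofReal (1 / (1 - stdGaussianCDF x) - 1) ≤
      ENNReal.ofReal (5 * rexp (v ^ 2 / 2)) * ENNReal.ofReal (rexp (v * x)) +
      ∑' (j : ℕ), ENNReal.ofReal (5 * rexp ((j + 1 : ℝ) - (j + 1 : ℝ) ^ 2 / 2)) *
        ENNReal.ofReal (rexp ((j + 1 : ℝ) * x)) := by
  rcases le_or_gt x 0 with hx | hx
  · refine le_trans ?_ le_self_add
    rw [← ENNReal.ofReal_mul (by positivity)]
    exact ENNReal.ofReal_le_ofReal (master_neg hx v)
  · refine le_trans ?_ le_add_self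
    have hle := master_pos hx
    have : ENNReal.ofReal (1 / (1 - stdGaussianCDF x) - 1) ≤
        ENNReal.ofReal (5 * rexp (((Nat.floor x + 1 : ℕ) + 1 : ℝ) - ((Nat.floor x + 1 : ℕ) + 1 : ℝ) ^ 2 / 2)) *
          ENNReal.ofReal (rexp (((Nat.floor x + 1 : ℕ) + 1 : ℝ) * x)) := by
      rw [← ENNReal.ofReal_mul (by positivity)]
      refine ENNReal.ofReal_le_ofReal ?_
      have e1 : ((Nat.floor x + 1 : ℕ) + 1 : ℝ) = (Nat.floor x + 2 : ℝ) := by push_cast; ring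
      rw [e1]
      exact hle
    exact this.trans (ENNReal.le_tsum (Nat.floor x + 1))

end EITS

namespace EITS
open scoped ENNReal

variable {Ω : Type} [MeasureSpace Ω] [IsProbabilityMeasure (ℙ : Measure Ω)]

lemma lintegral_indep_prod (X : ℕ → Ω → ℝ) (hX : ∀ i, Measurable (X i))
    (hind : iIndepFun X ℙ)
    (g : ℕ → ℝ → ℝ≥0∞) (hg : ∀ i, Measurable (g i)) (S : Finset ℕ) :
    ∫⁻ ω, ∏ i ∈ S, g i (X i ω) ∂ℙ = ∏ i ∈ S, ∫⁻ ω, g i (X i ω) ∂ℙ := by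
  classical
  have hY : iIndepFun
      (fun i => (g i) ∘ (X i)) ℙ := hind.comp g hg
  have hYm : ∀ i, Measurable ((g i) ∘ (X i)) := fun i => (hg i).comp (hX i)
  induction S using Finset.induction_on with
  | empty => simp
  | @insert a S hi ih =>
    rw [Finset.prod_insert hi, ← ih]
    have heq : (∏ j ∈ S, (g j) ∘ (X j)) = fun ω => ∏ i ∈ S, g i (X i ω) := by
      funext ω; simp [Finset.prod_apply]
    have hindep := (hY.indepFun_finsetProd_of_notMem hYm hi).symm
    rw [heq] at hindep
    have key := lintegral_mul_eq_lintegral_mul_lintegral_of_indepFun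
      (μ := (ℙ : Measure Ω)) (f := (g a) ∘ (X a)) (g := fun ω => ∏ i ∈ S, g i (X i ω)) (hYm a)
      (Finset.measurable_prod S (fun i _ => hYm i))
      hindep
    calc ∫⁻ ω, ∏ i ∈ insert a S, g i (X i ω) ∂ℙ
        = ∫⁻ ω, ((g a ∘ X a) * fun ω => ∏ i ∈ S, g i (X i ω)) ω ∂ℙ := by
          apply lintegral_congr; intro ω
          simp [Finset.prod_insert hi]
      _ = (∫⁻ ω, g a (X a ω) ∂ℙ) * ∫⁻ ω, ∏ i ∈ S, g i (X i ω) ∂ℙ := key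

end EITS

namespace EITS
open scoped ENNReal
open Finset

variable {Ω : Type} [MeasureSpace Ω] [IsProbabilityMeasure (ℙ : Measure Ω)]

lemma factor_bound (X : Ω → ℝ) (μ₁ l : ℝ)
    (hmgf : ∫ ω, rexp (l * (X ω - μ₁)) ∂ℙ ≤ rexp (l ^ 2 / 2))
    (hint : Integrable (fun ω => rexp (l * (X ω - μ₁))) ℙ) :
    ∫⁻ ω, ENNReal.ofReal (rexp (l * (X ω - μ₁))) ∂ℙ ≤ ENNReal.ofReal (rexp (l ^ 2 / 2)) := by
  rw [← ofReal_integral_eq_lintegral_ofReal hint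
    (Filter.Eventually.of_forall fun ω => Real.exp_nonneg _)]
  exact ENNReal.ofReal_le_ofReal hmgf

lemma exp_decomp (X : ℕ → Ω → ℝ) (μ₁ ε ρ u : ℝ) (n : ℕ) (hn : 1 ≤ n) (ω : Ω) :
    rexp (u * (√(ρ * n) * (μ₁ - ε - (1 / (n:ℝ)) * ∑ i ∈ Icc 1 n, X i ω))) =
      rexp (-(u * √(ρ * n) * ε)) *
        ∏ i ∈ Icc 1 n, rexp ((-(u * √(ρ * n) / n)) * (X i ω - μ₁)) := by
  rw [← Real.exp_sum, ← Real.exp_add]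
  congr 1
  have hn' : (n:ℝ) ≠ 0 := by
    have : 0 < n := hn
    positivity
  simp only [mul_sub, Finset.sum_sub_distrib, ← Finset.mul_sum, Finset.sum_const,
    Nat.card_Icc, Nat.add_sub_cancel, nsmul_eq_mul]
  field_simp
  ring

end EITS

namespace EITS
open scoped ENNReal
open Finset

variable {Ω : Type} [MeasureSpace Ω] [IsProbabilityMeasure (ℙ : Measure Ω)]

lemma mgf_bound (X : ℕ → Ω → ℝ) (hX : ∀ i, Measurable (X i))
    (hind : iIndepFun X ℙ)
    (μ₁ : ℝ) (hmgf : ∀ i, ∀ l : ℝ, ∫ ω, rexp (l * (X i ω - μ₁)) ∂ℙ ≤ rexp (l ^ 2 / 2))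
    {ρ : ℝ} (hρ0 : 0 < ρ) (ε : ℝ) (n : ℕ) (hn : 1 ≤ n)
    (hint : ∀ i ∈ Icc 1 n, ∀ l : ℝ, l ≤ 0 → Integrable (fun ω => rexp (l * (X i ω - μ₁))) ℙ)
    (u : ℝ) (hu : 0 ≤ u) :
    ∫⁻ ω, ENNReal.ofReal
        (rexp (u * (√(ρ * n) * (μ₁ - ε - (1 / (n:ℝ)) * ∑ i ∈ Icc 1 n, X i ω)))) ∂ℙ
      ≤ ENNReal.ofReal (rexp (u ^ 2 * ρ / 2 - u * √(ρ * n) * ε)) := by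
  have hn0 : (0:ℝ) < n := by exact_mod_cast hn
  set l : ℝ := -(u * √(ρ * n) / n) with hl
  have hl0 : l ≤ 0 := by
    rw [hl]
    have : 0 ≤ u * √(ρ * n) / n := by positivity
    linarith
  have hconst : ∫⁻ ω, ENNReal.ofReal
      (rexp (u * (√(ρ * n) * (μ₁ - ε - (1 / (n:ℝ)) * ∑ i ∈ Icc 1 n, X i ω)))) ∂ℙ
      = ENNReal.ofReal (rexp (-(u * √(ρ * n) * ε))) *
        ∫⁻ ω, ∏ i ∈ Icc 1 n, ENNReal.ofReal (rexp (l * (X i ω - μ₁))) ∂ℙ := by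
    rw [← lintegral_const_mul' _ _ ENNReal.ofReal_ne_top]
    apply lintegral_congr
    intro ω
    rw [exp_decomp X μ₁ ε ρ u n hn ω, ENNReal.ofReal_mul (Real.exp_nonneg _),
      ENNReal.ofReal_prod_of_nonneg (fun i _ => Real.exp_nonneg _)]
  rw [hconst, lintegral_indep_prod X hX hind
    (fun _ t => ENNReal.ofReal (rexp (l * (t - μ₁)))) (fun i => by fun_prop) (Icc 1 n)]
  have hfac : ∀ i ∈ Icc 1 n, ∫⁻ ω, ENNReal.ofReal (rexp (l * (X i ω - μ₁))) ∂ℙ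
      ≤ ENNReal.ofReal (rexp (l ^ 2 / 2)) := fun i hi =>
    factor_bound (X i) μ₁ l (hmgf i l) (hint i hi l hl0)
  have hprod : ∏ i ∈ Icc 1 n, ∫⁻ ω, ENNReal.ofReal (rexp (l * (X i ω - μ₁))) ∂ℙ
      ≤ ENNReal.ofReal (rexp (u ^ 2 * ρ / 2)) := by
    calc ∏ i ∈ Icc 1 n, ∫⁻ ω, ENNReal.ofReal (rexp (l * (X i ω - μ₁))) ∂ℙ
        ≤ ∏ _i ∈ Icc 1 n, ENNReal.ofReal (rexp (l ^ 2 / 2)) := Finset.prod_le_prod' hfac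
      _ = ENNReal.ofReal (rexp (l ^ 2 / 2)) ^ (Icc 1 n).card := Finset.prod_const _
      _ = ENNReal.ofReal (rexp (l ^ 2 / 2) ^ n) := by
          rw [ENNReal.ofReal_pow (Real.exp_nonneg _), Nat.card_Icc, Nat.add_sub_cancel]
      _ = ENNReal.ofReal (rexp (u ^ 2 * ρ / 2)) := by
          rw [← Real.exp_nat_mul]
          congr 1
          have hsq : (√(ρ * n)) ^ 2 = ρ * n := Real.sq_sqrt (by positivity)
          have hn' : (n:ℝ) ≠ 0 := ne_of_gt hn0
          have ha : (u * √(ρ * (n:ℝ))) ^ 2 = u ^ 2 * (ρ * n) := by rw [mul_pow, hsq]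
          have hl2 : l ^ 2 = u ^ 2 * (ρ * n) / (n:ℝ) ^ 2 := by
            rw [hl, ← ha]; ring
          rw [hl2]
          field_simp
  calc ENNReal.ofReal (rexp (-(u * √(ρ * n) * ε))) *
        ∏ i ∈ Icc 1 n, ∫⁻ ω, ENNReal.ofReal (rexp (l * (X i ω - μ₁))) ∂ℙ
      ≤ ENNReal.ofReal (rexp (-(u * √(ρ * n) * ε))) * ENNReal.ofReal (rexp (u ^ 2 * ρ / 2)) :=
        mul_le_mul_right hprod _
    _ = ENNReal.ofReal (rexp (u ^ 2 * ρ / 2 - u * √(ρ * n) * ε)) := by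
        rw [← ENNReal.ofReal_mul (Real.exp_nonneg _), ← Real.exp_add]
        congr 1
        ring

end EITS

namespace EITS
open scoped ENNReal
open Finset

noncomputable def Kc (ρ : ℝ) : ℝ := ∑' (j : ℕ), 5 * rexp ((j + 1 : ℝ) - (1 - ρ) * (j + 1 : ℝ) ^ 2 / 2)

lemma summable_b {ρ : ℝ} (hρ1 : ρ < 1) :
    Summable (fun j : ℕ => 5 * rexp ((j + 1 : ℝ) - (1 - ρ) * (j + 1 : ℝ) ^ 2 / 2)) := by
  set β : ℝ := 1 - ρ with hβ
  have hβ0 : 0 < β := by simp [hβ]; linarith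
  apply summable_of_ratio_norm_eventually_le (r := 1/2) (by norm_num)
  rw [Filter.eventually_atTop]
  refine ⟨⌈2 / β⌉₊, fun j hj => ?_⟩
  have hjr : (2 / β) ≤ (j : ℝ) := le_trans (Nat.le_ceil _) (by exact_mod_cast hj)
  have hstep : (1:ℝ) - β * (2 * j + 3) / 2 ≤ -1 := by
    have h1 : 2 ≤ β * j := by
      rw [div_le_iff₀ hβ0] at hjr
      linarith
    nlinarith
  have hfact : ((j+1:ℕ) + 1 : ℝ) - (1 - ρ) * ((j+1:ℕ) + 1 : ℝ) ^ 2 / 2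
      = ((j + 1 : ℝ) - (1 - ρ) * (j + 1 : ℝ) ^ 2 / 2) + (1 - β * (2 * j + 3) / 2) := by
    push_cast
    rw [← hβ]
    ring
  have hhalf : rexp (1 - β * (2 * j + 3) / 2) ≤ 1/2 := by
    have : rexp (1 - β * (2 * j + 3) / 2) ≤ rexp (-1) := Real.exp_le_exp.2 hstep
    refine this.trans ?_
    rw [Real.exp_neg]
    have h2e : (2:ℝ) ≤ rexp 1 := by
      have := Real.add_one_le_exp 1
      linarith
    have : (rexp 1)⁻¹ ≤ 2⁻¹ := by
      apply inv_anti₀ (by norm_num) h2e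
    simpa using this
  rw [Real.norm_of_nonneg (by positivity), Real.norm_of_nonneg (by positivity)]
  rw [hfact, Real.exp_add]
  calc 5 * (rexp ((j + 1 : ℝ) - (1 - ρ) * (j + 1 : ℝ) ^ 2 / 2) * rexp (1 - β * (2 * j + 3) / 2))
      ≤ 5 * (rexp ((j + 1 : ℝ) - (1 - ρ) * (j + 1 : ℝ) ^ 2 / 2) * (1/2)) := by
        apply mul_le_mul_of_nonneg_left _ (by norm_num)
        exact mul_le_mul_of_nonneg_left hhalf (Real.exp_nonneg _)
    _ = 1/2 * (5 * rexp ((j + 1 : ℝ) - (1 - ρ) * (j + 1 : ℝ) ^ 2 / 2)) := by ring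

lemma Kc_nonneg {ρ : ℝ} : 0 ≤ Kc ρ := tsum_nonneg (fun j => by positivity)

end EITS

namespace EITS
open scoped ENNReal
open Finset

variable {Ω : Type} [MeasureSpace Ω] [IsProbabilityMeasure (ℙ : Measure Ω)]

lemma per_term_bound (X : ℕ → Ω → ℝ) (hX : ∀ i, Measurable (X i))
    (hind : iIndepFun X ℙ)
    (μ₁ : ℝ) (hmgf : ∀ i, ∀ l : ℝ, ∫ ω, rexp (l * (X i ω - μ₁)) ∂ℙ ≤ rexp (l ^ 2 / 2))
    {ρ : ℝ} (hρ : ρ ∈ Set.Ioo (1/2 : ℝ) 1) {ε : ℝ} (hε : 0 < ε) (n : ℕ) (hn : 1 ≤ n)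
    (hint : ∀ i ∈ Icc 1 n, ∀ l : ℝ, l ≤ 0 → Integrable (fun ω => rexp (l * (X i ω - μ₁))) ℙ) :
    ∫⁻ ω, ENNReal.ofReal
        (1 / (1 - stdGaussianCDF (√(ρ * n) * (μ₁ - ε - (1 / (n:ℝ)) * ∑ i ∈ Icc 1 n, X i ω))) - 1) ∂ℙ
      ≤ ENNReal.ofReal (5 * rexp (-(ρ * n * ε ^ 2 / 4)))
        + ENNReal.ofReal (Kc ρ * rexp (-(√(ρ * n) * ε))) := by
  have hρ0 : (0:ℝ) < ρ := lt_trans (by norm_num) hρ.1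
  have hρ1 : ρ < 1 := hρ.2
  have hn0 : (0:ℝ) < n := by exact_mod_cast hn
  set x : Ω → ℝ := fun ω => √(ρ * n) * (μ₁ - ε - (1 / (n:ℝ)) * ∑ i ∈ Icc 1 n, X i ω) with hx
  have hxm : Measurable x := by
    apply Measurable.const_mul
    apply Measurable.const_sub
    exact (Finset.measurable_sum _ (fun i _ => hX i)).const_mul _
  set v : ℝ := √(ρ * n) * ε / 2 with hv
  have hv0 : 0 ≤ v := by positivity
  have hsq : (√(ρ * n)) ^ 2 = ρ * n := Real.sq_sqrt (by positivity)
  -- pointwise master bound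
  have hmaster : ∀ ω, ENNReal.ofReal (1 / (1 - stdGaussianCDF (x ω)) - 1) ≤
      ENNReal.ofReal (5 * rexp (v ^ 2 / 2)) * ENNReal.ofReal (rexp (v * x ω)) +
      ∑' (j : ℕ), ENNReal.ofReal (5 * rexp ((j + 1 : ℝ) - (j + 1 : ℝ) ^ 2 / 2)) *
        ENNReal.ofReal (rexp ((j + 1 : ℝ) * x ω)) := fun ω => master_ennreal (x ω) hv0
  -- integrate
  have hM : ∀ u : ℝ, 0 ≤ u → ∫⁻ ω, ENNReal.ofReal (rexp (u * x ω)) ∂ℙ ≤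
      ENNReal.ofReal (rexp (u ^ 2 * ρ / 2 - u * √(ρ * n) * ε)) := fun u hu =>
    mgf_bound X hX hind μ₁ hmgf hρ0 ε n hn hint u hu
  have hEm : ∀ u : ℝ, Measurable (fun ω => ENNReal.ofReal (rexp (u * x ω))) := fun u => by fun_prop
  have hstep : ∫⁻ ω, ENNReal.ofReal (1 / (1 - stdGaussianCDF (x ω)) - 1) ∂ℙ ≤
      ENNReal.ofReal (5 * rexp (v ^ 2 / 2)) * ∫⁻ ω, ENNReal.ofReal (rexp (v * x ω)) ∂ℙ +
      ∑' (j : ℕ), ENNReal.ofReal (5 * rexp ((j + 1 : ℝ) - (j + 1 : ℝ) ^ 2 / 2)) *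
        ∫⁻ ω, ENNReal.ofReal (rexp ((j + 1 : ℝ) * x ω)) ∂ℙ := by
    calc ∫⁻ ω, ENNReal.ofReal (1 / (1 - stdGaussianCDF (x ω)) - 1) ∂ℙ
        ≤ ∫⁻ ω, (ENNReal.ofReal (5 * rexp (v ^ 2 / 2)) * ENNReal.ofReal (rexp (v * x ω)) +
            ∑' (j : ℕ), ENNReal.ofReal (5 * rexp ((j + 1 : ℝ) - (j + 1 : ℝ) ^ 2 / 2)) *
              ENNReal.ofReal (rexp ((j + 1 : ℝ) * x ω))) ∂ℙ := lintegral_mono hmaster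
      _ = ENNReal.ofReal (5 * rexp (v ^ 2 / 2)) * ∫⁻ ω, ENNReal.ofReal (rexp (v * x ω)) ∂ℙ +
          ∫⁻ ω, ∑' (j : ℕ), ENNReal.ofReal (5 * rexp ((j + 1 : ℝ) - (j + 1 : ℝ) ^ 2 / 2)) *
            ENNReal.ofReal (rexp ((j + 1 : ℝ) * x ω)) ∂ℙ := by
          rw [lintegral_add_left (((hEm v).const_mul _)), lintegral_const_mul' _ _ ENNReal.ofReal_ne_top]
      _ = ENNReal.ofReal (5 * rexp (v ^ 2 / 2)) * ∫⁻ ω, ENNReal.ofReal (rexp (v * x ω)) ∂ℙ +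
          ∑' (j : ℕ), ENNReal.ofReal (5 * rexp ((j + 1 : ℝ) - (j + 1 : ℝ) ^ 2 / 2)) *
            ∫⁻ ω, ENNReal.ofReal (rexp ((j + 1 : ℝ) * x ω)) ∂ℙ := by
          congr 1
          rw [lintegral_tsum (fun j => (((hEm _).const_mul _)).aemeasurable)]
          congr 1
          funext j
          rw [lintegral_const_mul' _ _ ENNReal.ofReal_ne_top]
  refine hstep.trans (add_le_add ?_ ?_)
  · -- first term
    calc ENNReal.ofReal (5 * rexp (v ^ 2 / 2)) * ∫⁻ ω, ENNReal.ofReal (rexp (v * x ω)) ∂ℙ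
        ≤ ENNReal.ofReal (5 * rexp (v ^ 2 / 2)) *
            ENNReal.ofReal (rexp (v ^ 2 * ρ / 2 - v * √(ρ * n) * ε)) :=
          mul_le_mul_right (hM v hv0) _
      _ = ENNReal.ofReal (5 * (rexp (v ^ 2 / 2) * rexp (v ^ 2 * ρ / 2 - v * √(ρ * n) * ε))) := by
          rw [← ENNReal.ofReal_mul (by positivity)]
          ring_nf
      _ ≤ ENNReal.ofReal (5 * rexp (-(ρ * n * ε ^ 2 / 4))) := by
          apply ENNReal.ofReal_le_ofReal
          rw [← Real.exp_add]
          apply mul_le_mul_of_nonneg_left _ (by norm_num)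
          apply Real.exp_le_exp.2
          have hveq : v ^ 2 = ρ * n * ε ^ 2 / 4 := by
            rw [hv, div_pow, mul_pow, hsq]; ring
          have hvB : v * (√(ρ * n) * ε) = ρ * n * ε ^ 2 / 2 := by
            rw [hv]
            calc √(ρ * n) * ε / 2 * (√(ρ * n) * ε) = (√(ρ * n)) ^ 2 * ε ^ 2 / 2 := by ring
              _ = ρ * n * ε ^ 2 / 2 := by rw [hsq]
          have h4 : 0 ≤ ρ * n * ε ^ 2 := by positivity
          nlinarith [hveq, hvB]
  · -- tsum term
    have hterm : ∀ j : ℕ, ENNReal.ofReal (5 * rexp ((j + 1 : ℝ) - (j + 1 : ℝ) ^ 2 / 2)) *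
        ∫⁻ ω, ENNReal.ofReal (rexp ((j + 1 : ℝ) * x ω)) ∂ℙ
        ≤ ENNReal.ofReal ((5 * rexp ((j + 1 : ℝ) - (1 - ρ) * (j + 1 : ℝ) ^ 2 / 2)) *
            rexp (-(√(ρ * n) * ε))) := by
      intro j
      have hj0 : (0:ℝ) ≤ (j + 1 : ℝ) := by positivity
      calc ENNReal.ofReal (5 * rexp ((j + 1 : ℝ) - (j + 1 : ℝ) ^ 2 / 2)) *
            ∫⁻ ω, ENNReal.ofReal (rexp ((j + 1 : ℝ) * x ω)) ∂ℙ
          ≤ ENNReal.ofReal (5 * rexp ((j + 1 : ℝ) - (j + 1 : ℝ) ^ 2 / 2)) *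
            ENNReal.ofReal (rexp ((j + 1 : ℝ) ^ 2 * ρ / 2 - (j + 1 : ℝ) * √(ρ * n) * ε)) :=
            mul_le_mul_right (hM _ hj0) _
        _ = ENNReal.ofReal (5 * (rexp ((j + 1 : ℝ) - (j + 1 : ℝ) ^ 2 / 2) *
              rexp ((j + 1 : ℝ) ^ 2 * ρ / 2 - (j + 1 : ℝ) * √(ρ * n) * ε))) := by
            rw [← ENNReal.ofReal_mul (by positivity)]
            ring_nf
        _ ≤ ENNReal.ofReal ((5 * rexp ((j + 1 : ℝ) - (1 - ρ) * (j + 1 : ℝ) ^ 2 / 2)) *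
              rexp (-(√(ρ * n) * ε))) := by
            apply ENNReal.ofReal_le_ofReal
            rw [← Real.exp_add, mul_assoc (5:ℝ), ← Real.exp_add]
            apply mul_le_mul_of_nonneg_left _ (by norm_num)
            apply Real.exp_le_exp.2
            have hB : 0 ≤ √(ρ * n) * ε := by positivity
            have h1j : (1:ℝ) ≤ (j + 1 : ℝ) := by
              have : (0:ℝ) ≤ (j:ℝ) := Nat.cast_nonneg j
              linarith
            nlinarith
    calc ∑' (j : ℕ), ENNReal.ofReal (5 * rexp ((j + 1 : ℝ) - (j + 1 : ℝ) ^ 2 / 2)) *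
          ∫⁻ ω, ENNReal.ofReal (rexp ((j + 1 : ℝ) * x ω)) ∂ℙ
        ≤ ∑' (j : ℕ), ENNReal.ofReal ((5 * rexp ((j + 1 : ℝ) - (1 - ρ) * (j + 1 : ℝ) ^ 2 / 2)) *
            rexp (-(√(ρ * n) * ε))) := ENNReal.tsum_le_tsum hterm
      _ = ENNReal.ofReal (∑' (j : ℕ), (5 * rexp ((j + 1 : ℝ) - (1 - ρ) * (j + 1 : ℝ) ^ 2 / 2)) *
            rexp (-(√(ρ * n) * ε))) := by
          rw [ENNReal.ofReal_tsum_of_nonneg (fun j => by positivity)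
            ((summable_b hρ1).mul_right _)]
      _ = ENNReal.ofReal (Kc ρ * rexp (-(√(ρ * n) * ε))) := by
          congr 1
          rw [Kc, tsum_mul_right]

end EITS

namespace EITS
open Finset

lemma sumA_bound {a : ℝ} (ha : 0 < a) (m : ℕ) :
    ∑ s ∈ Icc 1 m, rexp (-(a * s)) ≤ 1 / a := by
  set q := rexp (-a) with hqdef
  have hq0 : 0 < q := Real.exp_pos _
  have hq1 : q < 1 := Real.exp_lt_one_iff.2 (by linarith)
  have hterm : ∀ s : ℕ, rexp (-(a * s)) = q ^ s := by
    intro s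
    rw [hqdef, ← Real.exp_nat_mul]
    congr 1
    ring
  have hicc : Finset.Icc 1 m = (Finset.range (m + 1)).erase 0 := by
    ext s
    simp only [Finset.mem_Icc, Finset.mem_erase, Finset.mem_range]
    omega
  have hsum : ∑ s ∈ Icc 1 m, rexp (-(a * s)) = (∑ s ∈ Finset.range (m + 1), q ^ s) - q ^ 0 := by
    simp_rw [hterm, hicc]
    exact Finset.sum_erase_eq_sub (Finset.mem_range.2 (Nat.succ_pos m))
  rw [hsum]
  have htsum : ∑ s ∈ Finset.range (m + 1), q ^ s ≤ (1 - q)⁻¹ := by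
    have := Summable.sum_le_tsum (Finset.range (m + 1)) (fun i _ => (pow_nonneg hq0.le i))
      (summable_geometric_of_lt_one hq0.le hq1)
    rwa [tsum_geometric_of_lt_one hq0.le hq1] at this
  have hkey : q * (1 + a) ≤ 1 := by
    have h1 : a + 1 ≤ rexp a := Real.add_one_le_exp a
    have h2 : q * rexp a = 1 := by rw [hqdef, ← Real.exp_add]; simp
    nlinarith
  have h1q : 0 < 1 - q := by linarith
  have hfin : (1 - q)⁻¹ - 1 ≤ 1 / a := by
    rw [inv_eq_one_div, div_sub' (ne_of_gt h1q), div_le_div_iff₀ h1q ha]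
    nlinarith
  simp only [pow_zero]
  linarith [htsum]

lemma sumB_bound {b : ℝ} (hb : 0 < b) (m : ℕ) :
    ∑ s ∈ Icc 1 m, rexp (-(b * Real.sqrt (s : ℝ))) ≤ 12 / b ^ 2 := by
  classical
  set q := rexp (-b) with hqdef
  have hq0 : 0 < q := Real.exp_pos _
  have hq1 : q < 1 := Real.exp_lt_one_iff.2 (by linarith)
  have hterm : ∀ s : ℕ, rexp (-(b * Real.sqrt (s:ℝ))) ≤ q ^ (Nat.sqrt s) := by
    intro s
    rw [hqdef, ← Real.exp_nat_mul]
    apply Real.exp_le_exp.2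
    have hle : ((Nat.sqrt s : ℝ)) ≤ Real.sqrt (s : ℝ) := by
      have h1 : ((Nat.sqrt s : ℝ)) = Real.sqrt (((Nat.sqrt s : ℝ)) ^ 2) :=
        (Real.sqrt_sq (Nat.cast_nonneg _)).symm
      rw [h1]
      apply Real.sqrt_le_sqrt
      exact_mod_cast Nat.sqrt_le' s
    nlinarith
  have h1 : ∑ s ∈ Icc 1 m, rexp (-(b * Real.sqrt (s:ℝ))) ≤
      ∑ s ∈ Icc 1 m, q ^ (Nat.sqrt s) :=
    Finset.sum_le_sum (fun s _ => hterm s)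
  refine h1.trans ?_
  rw [Finset.sum_comp (fun k => q ^ k) Nat.sqrt]
  have hcard : ∀ k ∈ (Icc 1 m).image Nat.sqrt,
      (((Icc 1 m).filter (fun s => Nat.sqrt s = k)).card • (q ^ k) : ℝ) ≤ 3 * k * q ^ k := by
    intro k hk
    obtain ⟨s, hs, hks⟩ := Finset.mem_image.1 hk
    have hs1 : 1 ≤ s := (Finset.mem_Icc.1 hs).1
    have hk1 : 1 ≤ k := by
      rw [← hks]
      exact Nat.sqrt_pos.2 hs1
    have hsub : (Icc 1 m).filter (fun s => Nat.sqrt s = k) ⊆ Icc (k * k) (k * k + 2 * k) := by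
      intro t ht
      obtain ⟨ht1, ht2⟩ := Finset.mem_filter.1 ht
      rw [Finset.mem_Icc]
      constructor
      · rw [← ht2]; exact Nat.sqrt_le t
      · have := Nat.sqrt_le_add t
        rw [ht2] at this
        omega
    have hcard2 : ((Icc 1 m).filter (fun s => Nat.sqrt s = k)).card ≤ 2 * k + 1 := by
      have h := Finset.card_le_card hsub
      rw [Nat.card_Icc] at h
      omega
    rw [nsmul_eq_mul]
    have hqk : (0:ℝ) ≤ q ^ k := pow_nonneg hq0.le k
    have : (((Icc 1 m).filter (fun s => Nat.sqrt s = k)).card : ℝ) ≤ 3 * k := by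
      have hk1' : (1:ℝ) ≤ (k:ℝ) := by exact_mod_cast hk1
      have : (((Icc 1 m).filter (fun s => Nat.sqrt s = k)).card : ℝ) ≤ 2 * k + 1 := by
        exact_mod_cast hcard2
      linarith
    calc (((Icc 1 m).filter (fun s => Nat.sqrt s = k)).card : ℝ) * q ^ k
        ≤ (3 * k) * q ^ k := mul_le_mul_of_nonneg_right this hqk
      _ = 3 * k * q ^ k := by ring
  have h2 : ∑ k ∈ (Icc 1 m).image Nat.sqrt,
      ((((Icc 1 m).filter (fun s => Nat.sqrt s = k)).card • (q ^ k)) : ℝ) ≤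
      ∑ k ∈ (Icc 1 m).image Nat.sqrt, 3 * ((k : ℝ) * q ^ k) := by
    apply Finset.sum_le_sum
    intro k hk
    have := hcard k hk
    linarith [this]
  refine h2.trans ?_
  have hsummable : Summable (fun k : ℕ => (k : ℝ) * q ^ k) :=
    (hasSum_coe_mul_geometric_of_norm_lt_one
      (by rwa [Real.norm_of_nonneg hq0.le] : ‖q‖ < 1)).summable
  have h3 : ∑ k ∈ (Icc 1 m).image Nat.sqrt, 3 * ((k : ℝ) * q ^ k) ≤
      ∑' k : ℕ, 3 * ((k : ℝ) * q ^ k) := by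
    apply Summable.sum_le_tsum
    · intro k _
      positivity
    · exact hsummable.mul_left 3
  refine h3.trans ?_
  have h4 : ∑' k : ℕ, 3 * ((k : ℝ) * q ^ k) = 3 * (q / (1 - q) ^ 2) := by
    rw [tsum_mul_left, tsum_coe_mul_geometric_of_norm_lt_one
      (by rwa [Real.norm_of_nonneg hq0.le] : ‖q‖ < 1)]
  rw [h4]
  -- final numeric bound : 3 * (q / (1-q)^2) ≤ 12 / b^2
  have hE : q * rexp b = 1 := by rw [hqdef, ← Real.exp_add]; simp
  have hkey1 : (1 + b) ^ 2 ≤ 4 * rexp b := by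
    have hh := Real.add_one_le_exp (b / 2)
    have hsq : rexp (b / 2) * rexp (b / 2) = rexp b := by rw [← Real.exp_add]; ring_nf
    nlinarith [Real.exp_pos (b / 2)]
  have hkey2 : 1 + b ≤ rexp b := by
    have := Real.add_one_le_exp b
    linarith
  set u : ℝ := 1 - q with hu
  have hu0 : 0 < u := by simp only [hu]; linarith
  have hub : b ≤ u * (1 + b) := by
    have hq1b : q * (1 + b) ≤ 1 := by
      have := mul_le_mul_of_nonneg_left hkey2 hq0.le
      rw [mul_comm q (rexp b)] at hE
      nlinarith
    simp only [hu]
    nlinarith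
  have hq4 : q * (1 + b) ^ 2 ≤ 4 := by
    have := mul_le_mul_of_nonneg_left hkey1 hq0.le
    rw [mul_comm q (rexp b)] at hE
    nlinarith
  have hmain : q * b ^ 2 ≤ 4 * u ^ 2 := by
    have hb2 : b ^ 2 ≤ (u * (1 + b)) ^ 2 := by
      apply pow_le_pow_left₀ hb.le hub
    calc q * b ^ 2 ≤ q * (u * (1 + b)) ^ 2 := mul_le_mul_of_nonneg_left hb2 hq0.le
      _ = u ^ 2 * (q * (1 + b) ^ 2) := by ring
      _ ≤ u ^ 2 * 4 := mul_le_mul_of_nonneg_left hq4 (sq_nonneg u)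
      _ = 4 * u ^ 2 := by ring
  rw [show (3:ℝ) * (q / u ^ 2) = (3 * q) / u ^ 2 by ring,
    div_le_div_iff₀ (by positivity) (by positivity)]
  nlinarith

end EITS

namespace EITS
open scoped ENNReal
open Finset

lemma f_nonneg (y : ℝ) : 0 ≤ 1 / (1 - stdGaussianCDF y) - 1 := by
  have h1 := psi_pos y
  have h2 : 1 - stdGaussianCDF y ≤ 1 := by linarith [cdf_nonneg y]
  have := one_le_one_div h1 h2
  linarith

lemma lower_master (x : ℝ) {v : ℝ} (hv : 0 ≤ v) :
    rexp (v * x) ≤ 5 * rexp (v ^ 2 / 2) * (1 / (1 - stdGaussianCDF x) - 1) + 1 := by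
  have hψ := psi_pos x
  have hf0 := f_nonneg x
  rcases le_or_gt x 0 with hx | hx
  · have h1 : rexp (v * x) ≤ 1 := by
      rw [Real.exp_le_one_iff]
      exact mul_nonpos_of_nonneg_of_nonpos hv hx
    have h2 : (0:ℝ) ≤ 5 * rexp (v ^ 2 / 2) * (1 / (1 - stdGaussianCDF x) - 1) := by positivity
    linarith
  · have hcdf : (1/5 : ℝ) ≤ stdGaussianCDF x := cdf_lb hx.le
    have hub : 1 - stdGaussianCDF x ≤ rexp (-x ^ 2 / 2) := psi_ub hx.le
    have h1 : 1 / (1 - stdGaussianCDF x) - 1 = stdGaussianCDF x * (1 - stdGaussianCDF x)⁻¹ := by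
      field_simp
      ring
    have hinv : rexp (x ^ 2 / 2) ≤ (1 - stdGaussianCDF x)⁻¹ := by
      have h2 : rexp (x ^ 2 / 2) = (rexp (-x ^ 2 / 2))⁻¹ := by
        rw [← Real.exp_neg]; ring_nf
      rw [h2]
      exact inv_anti₀ hψ hub
    have h3 : (1/5 : ℝ) * rexp (x ^ 2 / 2) ≤ stdGaussianCDF x * (1 - stdGaussianCDF x)⁻¹ := by
      apply mul_le_mul hcdf hinv (Real.exp_nonneg _) (cdf_nonneg x)
    rw [h1]
    have h4 : rexp (v * x) ≤ rexp (v ^ 2 / 2) * rexp (x ^ 2 / 2) := by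
      rw [← Real.exp_add]
      apply Real.exp_le_exp.2
      nlinarith [sq_nonneg (x - v)]
    nlinarith [Real.exp_pos (v ^ 2 / 2), Real.exp_pos (x ^ 2 / 2)]

variable {Ω : Type} [MeasureSpace Ω] [IsProbabilityMeasure (ℙ : Measure Ω)]

lemma mgf_eq (X : ℕ → Ω → ℝ) (hX : ∀ i, Measurable (X i))
    (hind : iIndepFun X ℙ)
    (μ₁ ε ρ : ℝ) (n : ℕ) (hn : 1 ≤ n) (u : ℝ) :
    ∫⁻ ω, ENNReal.ofReal
        (rexp (u * (√(ρ * n) * (μ₁ - ε - (1 / (n:ℝ)) * ∑ i ∈ Icc 1 n, X i ω)))) ∂ℙ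
      = ENNReal.ofReal (rexp (-(u * √(ρ * n) * ε))) *
          ∏ i ∈ Icc 1 n, ∫⁻ ω, ENNReal.ofReal
            (rexp ((-(u * √(ρ * n) / n)) * (X i ω - μ₁))) ∂ℙ := by
  set l : ℝ := -(u * √(ρ * n) / n) with hl
  have hconst : ∫⁻ ω, ENNReal.ofReal
      (rexp (u * (√(ρ * n) * (μ₁ - ε - (1 / (n:ℝ)) * ∑ i ∈ Icc 1 n, X i ω)))) ∂ℙ
      = ENNReal.ofReal (rexp (-(u * √(ρ * n) * ε))) *
        ∫⁻ ω, ∏ i ∈ Icc 1 n, ENNReal.ofReal (rexp (l * (X i ω - μ₁))) ∂ℙ := by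
    rw [← lintegral_const_mul' _ _ ENNReal.ofReal_ne_top]
    apply lintegral_congr
    intro ω
    rw [exp_decomp X μ₁ ε ρ u n hn ω, ENNReal.ofReal_mul (Real.exp_nonneg _),
      ENNReal.ofReal_prod_of_nonneg (fun i _ => Real.exp_nonneg _)]
  rw [hconst, lintegral_indep_prod X hX hind
    (fun _ t => ENNReal.ofReal (rexp (l * (t - μ₁)))) (fun i => by fun_prop) (Icc 1 n)]

lemma bad_case (X : ℕ → Ω → ℝ) (hX : ∀ i, Measurable (X i))
    (hind : iIndepFun X ℙ)
    (μ₁ : ℝ) {ρ : ℝ} (hρ0 : 0 < ρ) (ε : ℝ) (n : ℕ) (hn : 1 ≤ n)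
    {i₀ : ℕ} (hi₀ : i₀ ∈ Icc 1 n) {l₀ : ℝ} (hl₀ : l₀ < 0)
    (hni : ¬ Integrable (fun ω => rexp (l₀ * (X i₀ ω - μ₁))) ℙ) :
    ∫⁻ ω, ENNReal.ofReal
        (1 / (1 - stdGaussianCDF (√(ρ * n) * (μ₁ - ε - (1 / (n:ℝ)) * ∑ i ∈ Icc 1 n, X i ω))) - 1) ∂ℙ
      = ⊤ := by
  have hn0 : (0:ℝ) < n := by exact_mod_cast hn
  have hsq0 : 0 < √(ρ * n) := Real.sqrt_pos.2 (by positivity)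
  set v : ℝ := -l₀ * n / √(ρ * n) with hv
  have hv0 : 0 < v := by
    rw [hv]
    have : 0 < -l₀ := by linarith
    positivity
  have hlv : -(v * √(ρ * n) / n) = l₀ := by
    rw [hv]
    field_simp
  set x : Ω → ℝ := fun ω => √(ρ * n) * (μ₁ - ε - (1 / (n:ℝ)) * ∑ i ∈ Icc 1 n, X i ω) with hx
  have hxm : Measurable x := by
    apply Measurable.const_mul
    apply Measurable.const_sub
    exact (Finset.measurable_sum _ (fun i _ => hX i)).const_mul _
  -- the mgf at v is infinite
  have hA : ∫⁻ ω, ENNReal.ofReal (rexp (v * x ω)) ∂ℙ = ⊤ := by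
    have heq := mgf_eq X hX hind μ₁ ε ρ n hn v
    rw [hx]
    rw [heq, hlv]
    have hfact_top : ∫⁻ ω, ENNReal.ofReal (rexp (l₀ * (X i₀ ω - μ₁))) ∂ℙ = ⊤ := by
      have hmeas : Measurable (fun ω => rexp (l₀ * (X i₀ ω - μ₁))) := by fun_prop
      have hnfin : ¬ HasFiniteIntegral (fun ω => rexp (l₀ * (X i₀ ω - μ₁))) ℙ :=
        fun h => hni ⟨hmeas.aestronglyMeasurable, h⟩
      rw [HasFiniteIntegral, not_lt, top_le_iff] at hnfin
      rw [← hnfin]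
      apply lintegral_congr
      intro ω
      rw [← enorm_eq_ofReal (Real.exp_nonneg _)]
    have hother : ∀ i ∈ Icc 1 n,
        (0:ℝ≥0∞) < ∫⁻ ω, ENNReal.ofReal (rexp (l₀ * (X i ω - μ₁))) ∂ℙ := by
      intro i _
      rw [lintegral_pos_iff_support (by fun_prop)]
      have hsupp : (Function.support fun ω => ENNReal.ofReal (rexp (l₀ * (X i ω - μ₁))))
          = Set.univ := by
        ext ω
        simp [Function.mem_support, (ENNReal.ofReal_pos.2 (Real.exp_pos _)).ne']
      rw [hsupp]
      simp
    have hprod : ∏ i ∈ Icc 1 n, ∫⁻ ω, ENNReal.ofReal (rexp (l₀ * (X i ω - μ₁))) ∂ℙ = ⊤ := by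
      rw [← Finset.mul_prod_erase _ _ hi₀, hfact_top]
      apply ENNReal.top_mul
      refine (CanonicallyOrderedAdd.prod_pos.2 ?_).ne'
      exact fun i hi => hother i (Finset.mem_of_mem_erase hi)
    rw [hprod]
    apply ENNReal.mul_top
    exact (ENNReal.ofReal_pos.2 (Real.exp_pos _)).ne'
  -- conclude
  by_contra hne
  have hfin : ∫⁻ ω, ENNReal.ofReal
      (1 / (1 - stdGaussianCDF (x ω)) - 1) ∂ℙ < ⊤ := lt_top_iff_ne_top.2 hne
  have hpoint : ∀ ω, ENNReal.ofReal (rexp (v * x ω)) ≤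
      ENNReal.ofReal (5 * rexp (v ^ 2 / 2)) *
        ENNReal.ofReal (1 / (1 - stdGaussianCDF (x ω)) - 1) + 1 := by
    intro ω
    have h := lower_master (x ω) hv0.le
    calc ENNReal.ofReal (rexp (v * x ω))
        ≤ ENNReal.ofReal (5 * rexp (v ^ 2 / 2) * (1 / (1 - stdGaussianCDF (x ω)) - 1) + 1) :=
          ENNReal.ofReal_le_ofReal h
      _ ≤ ENNReal.ofReal (5 * rexp (v ^ 2 / 2) * (1 / (1 - stdGaussianCDF (x ω)) - 1)) +
          ENNReal.ofReal 1 := ENNReal.ofReal_add_le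
      _ = ENNReal.ofReal (5 * rexp (v ^ 2 / 2)) *
            ENNReal.ofReal (1 / (1 - stdGaussianCDF (x ω)) - 1) + 1 := by
          rw [ENNReal.ofReal_mul (by positivity), ENNReal.ofReal_one]
  have hmeasf : Measurable (fun ω => ENNReal.ofReal (1 / (1 - stdGaussianCDF (x ω)) - 1)) := by
    apply Measurable.ennreal_ofReal
    apply Measurable.sub_const
    apply Measurable.div
    · exact measurable_const
    · exact (measurable_cdf.comp hxm).const_sub 1
  have hineq : (⊤ : ℝ≥0∞) ≤
      ENNReal.ofReal (5 * rexp (v ^ 2 / 2)) *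
        (∫⁻ ω, ENNReal.ofReal (1 / (1 - stdGaussianCDF (x ω)) - 1) ∂ℙ) + 1 := by
    rw [← hA]
    calc ∫⁻ ω, ENNReal.ofReal (rexp (v * x ω)) ∂ℙ
        ≤ ∫⁻ ω, (ENNReal.ofReal (5 * rexp (v ^ 2 / 2)) *
            ENNReal.ofReal (1 / (1 - stdGaussianCDF (x ω)) - 1) + 1) ∂ℙ := lintegral_mono hpoint
      _ = ENNReal.ofReal (5 * rexp (v ^ 2 / 2)) *
            (∫⁻ ω, ENNReal.ofReal (1 / (1 - stdGaussianCDF (x ω)) - 1) ∂ℙ) + 1 := by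
          rw [lintegral_add_right _ measurable_const, lintegral_const_mul' _ _ ENNReal.ofReal_ne_top]
          simp
  have hrhs : ENNReal.ofReal (5 * rexp (v ^ 2 / 2)) *
      (∫⁻ ω, ENNReal.ofReal (1 / (1 - stdGaussianCDF (x ω)) - 1) ∂ℙ) + 1 < ⊤ := by
    apply ENNReal.add_lt_top.2
    constructor
    · exact ENNReal.mul_lt_top ENNReal.ofReal_lt_top hfin
    · exact ENNReal.one_lt_top
  exact hrhs.ne (top_le_iff.1 hineq)

end EITS


namespace EITS
open scoped ENNReal
open Finset

lemma hpow_pos (s : ℕ) : 1 ≤ hpow s := Nat.one_le_two_pow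

lemma hpow_mono {s t : ℕ} (h : s ≤ t) : hpow s ≤ hpow t :=
  Nat.pow_le_pow_right (by norm_num) (Nat.log_mono_right h)

lemma hpow_half {s : ℕ} : (s : ℝ) ≤ 2 * hpow s := by
  have h := Nat.lt_pow_succ_log_self (by norm_num : 1 < 2) s
  have h2 : s < 2 * hpow s := by
    rw [hpow, ← pow_succ']
    exact h
  exact_mod_cast h2.le

end EITS

open EITS

/-- Fix `ρ ∈ (1/2, 1)`.  There exists a constant `c > 0` depending only on `ρ` such that
for all independent variables `X i` with mean `μ₁` and `X i − μ₁` 1-subgaussian, with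
`μ̂_s = (1/s)∑_{i=1}^s X_i` and
`G'_{1h(s)}(ε) = 1 − Φ(√(ρ·h(s))·(μ₁ − ε − μ̂_{h(s)}))`, for every `T ≥ 1` and `ε > 0`:
`E[∑_{s=1}^{T−1} (1/G'_{1h(s)}(ε) − 1)] ≤ c/ε²`. -/
theorem expected_inverse_tail_sum_le (ρ : ℝ) (hρ : ρ ∈ Set.Ioo (1/2 : ℝ) 1) :
    ∃ c : ℝ, 0 < c ∧
      ∀ (Ω : Type) [MeasureSpace Ω] [IsProbabilityMeasure (ℙ : Measure Ω)],
        ∀ (X : ℕ → Ω → ℝ), (∀ i, Measurable (X i)) →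
          iIndepFun X ℙ →
          ∀ μ₁ : ℝ, (∀ i, ∫ ω, X i ω ∂ℙ = μ₁) →
            (∀ i, ∀ l : ℝ, ∫ ω, Real.exp (l * (X i ω - μ₁)) ∂ℙ ≤ Real.exp (l ^ 2 / 2)) →
            ∀ T : ℕ, 1 ≤ T → ∀ ε : ℝ, 0 < ε →
              (∫ ω, ∑ s ∈ Finset.Icc 1 (T - 1),
                  (1 / (1 - stdGaussianCDF (Real.sqrt (ρ * (hpow s : ℝ)) *
                      (μ₁ - ε - (1 / (hpow s : ℝ)) * ∑ i ∈ Finset.Icc 1 (hpow s), X i ω))) - 1)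
                ∂ℙ)
              ≤ c / ε ^ 2 := by
  have hρ0 : (0:ℝ) < ρ := lt_trans (by norm_num) hρ.1
  have hKc : 0 ≤ Kc ρ := Kc_nonneg
  refine ⟨(40 + 24 * Kc ρ) / ρ, div_pos (by linarith) hρ0, ?_⟩
  intro Ω _ _ X hXm hind μ₁ _hmean hmgf T hT ε hε
  -- measurability of the summands
  have hxm : ∀ s : ℕ, Measurable (fun ω => Real.sqrt (ρ * (hpow s : ℝ)) *
      (μ₁ - ε - (1 / (hpow s : ℝ)) * ∑ i ∈ Finset.Icc 1 (hpow s), X i ω)) := by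
    intro s
    apply Measurable.const_mul
    apply Measurable.const_sub
    exact (Finset.measurable_sum _ (fun i _ => hXm i)).const_mul _
  have hfm : ∀ s : ℕ, Measurable (fun ω => 1 / (1 - stdGaussianCDF (Real.sqrt (ρ * (hpow s : ℝ)) *
      (μ₁ - ε - (1 / (hpow s : ℝ)) * ∑ i ∈ Finset.Icc 1 (hpow s), X i ω))) - 1) := by
    intro s
    exact (measurable_const.div ((measurable_cdf.comp (hxm s)).const_sub 1)).sub_const 1
  have hFm : Measurable (fun ω => ∑ s ∈ Finset.Icc 1 (T - 1),
      (1 / (1 - stdGaussianCDF (Real.sqrt (ρ * (hpow s : ℝ)) *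
        (μ₁ - ε - (1 / (hpow s : ℝ)) * ∑ i ∈ Finset.Icc 1 (hpow s), X i ω))) - 1)) :=
    Finset.measurable_sum _ (fun s _ => hfm s)
  have hFnn : ∀ ω, 0 ≤ ∑ s ∈ Finset.Icc 1 (T - 1),
      (1 / (1 - stdGaussianCDF (Real.sqrt (ρ * (hpow s : ℝ)) *
        (μ₁ - ε - (1 / (hpow s : ℝ)) * ∑ i ∈ Finset.Icc 1 (hpow s), X i ω))) - 1) :=
    fun ω => Finset.sum_nonneg (fun s _ => f_nonneg _)
  by_cases hgood : ∀ i ∈ Finset.Icc 1 (hpow (T - 1)), ∀ l : ℝ, l ≤ 0 →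
      Integrable (fun ω => rexp (l * (X i ω - μ₁))) ℙ
  · -- good case
    rw [integral_eq_lintegral_of_nonneg_ae (Filter.Eventually.of_forall hFnn)
      hFm.aestronglyMeasurable]
    have key : ∫⁻ ω, ENNReal.ofReal (∑ s ∈ Finset.Icc 1 (T - 1),
        (1 / (1 - stdGaussianCDF (Real.sqrt (ρ * (hpow s : ℝ)) *
          (μ₁ - ε - (1 / (hpow s : ℝ)) * ∑ i ∈ Finset.Icc 1 (hpow s), X i ω))) - 1)) ∂ℙ
        ≤ ENNReal.ofReal ((40 + 24 * Kc ρ) / ρ / ε ^ 2) := by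
      have hsplit : ∫⁻ ω, ENNReal.ofReal (∑ s ∈ Finset.Icc 1 (T - 1),
          (1 / (1 - stdGaussianCDF (Real.sqrt (ρ * (hpow s : ℝ)) *
            (μ₁ - ε - (1 / (hpow s : ℝ)) * ∑ i ∈ Finset.Icc 1 (hpow s), X i ω))) - 1)) ∂ℙ
          = ∑ s ∈ Finset.Icc 1 (T - 1), ∫⁻ ω, ENNReal.ofReal
            (1 / (1 - stdGaussianCDF (Real.sqrt (ρ * (hpow s : ℝ)) *
              (μ₁ - ε - (1 / (hpow s : ℝ)) * ∑ i ∈ Finset.Icc 1 (hpow s), X i ω))) - 1) ∂ℙ := by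
        rw [← lintegral_finset_sum _ (fun s _ => (hfm s).ennreal_ofReal)]
        apply lintegral_congr
        intro ω
        rw [ENNReal.ofReal_sum_of_nonneg (fun s _ => f_nonneg _)]
      rw [hsplit]
      have hper : ∀ s ∈ Finset.Icc 1 (T - 1), ∫⁻ ω, ENNReal.ofReal
          (1 / (1 - stdGaussianCDF (Real.sqrt (ρ * (hpow s : ℝ)) *
            (μ₁ - ε - (1 / (hpow s : ℝ)) * ∑ i ∈ Finset.Icc 1 (hpow s), X i ω))) - 1) ∂ℙ
          ≤ ENNReal.ofReal (5 * rexp (-(ρ * ε ^ 2 / 8 * s)))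
            + ENNReal.ofReal (Kc ρ * rexp (-(Real.sqrt (ρ / 2) * ε * Real.sqrt (s : ℝ)))) := by
        intro s hs
        have hs1 : 1 ≤ s := (Finset.mem_Icc.1 hs).1
        have hsT : s ≤ T - 1 := (Finset.mem_Icc.1 hs).2
        have hint : ∀ i ∈ Finset.Icc 1 (hpow s), ∀ l : ℝ, l ≤ 0 →
            Integrable (fun ω => rexp (l * (X i ω - μ₁))) ℙ := by
          intro i hi l hl
          apply hgood i _ l hl
          have := (Finset.mem_Icc.1 hi)
          exact Finset.mem_Icc.2 ⟨this.1, le_trans this.2 (hpow_mono hsT)⟩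
        refine (per_term_bound X hXm hind μ₁ hmgf hρ hε (hpow s) (hpow_pos s) hint).trans ?_
        have hn2 : (s : ℝ) ≤ 2 * hpow s := hpow_half
        have hnn : (0:ℝ) < (hpow s : ℝ) := by exact_mod_cast hpow_pos s
        apply add_le_add
        · apply ENNReal.ofReal_le_ofReal
          apply mul_le_mul_of_nonneg_left _ (by norm_num)
          apply Real.exp_le_exp.2
          have : ρ * ε ^ 2 / 8 * s ≤ ρ * (hpow s) * ε ^ 2 / 4 := by
            nlinarith [mul_le_mul_of_nonneg_left hn2 (by positivity : (0:ℝ) ≤ ρ * ε ^ 2 / 8)]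
          linarith
        · apply ENNReal.ofReal_le_ofReal
          apply mul_le_mul_of_nonneg_left _ hKc
          apply Real.exp_le_exp.2
          have hsqle : Real.sqrt (ρ / 2) * Real.sqrt (s:ℝ) ≤ Real.sqrt (ρ * hpow s) := by
            rw [← Real.sqrt_mul (by positivity)]
            apply Real.sqrt_le_sqrt
            nlinarith
          have hss : Real.sqrt (ρ / 2) * ε * Real.sqrt (s:ℝ)
              = (Real.sqrt (ρ / 2) * Real.sqrt (s:ℝ)) * ε := by ring
          rw [hss]
          have := mul_le_mul_of_nonneg_right hsqle hε.le
          linarith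
      calc ∑ s ∈ Finset.Icc 1 (T - 1), ∫⁻ ω, ENNReal.ofReal
            (1 / (1 - stdGaussianCDF (Real.sqrt (ρ * (hpow s : ℝ)) *
              (μ₁ - ε - (1 / (hpow s : ℝ)) * ∑ i ∈ Finset.Icc 1 (hpow s), X i ω))) - 1) ∂ℙ
          ≤ ∑ s ∈ Finset.Icc 1 (T - 1), (ENNReal.ofReal (5 * rexp (-(ρ * ε ^ 2 / 8 * s)))
            + ENNReal.ofReal (Kc ρ * rexp (-(Real.sqrt (ρ / 2) * ε * Real.sqrt (s : ℝ))))) :=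
            Finset.sum_le_sum hper
        _ = ENNReal.ofReal (∑ s ∈ Finset.Icc 1 (T - 1), 5 * rexp (-(ρ * ε ^ 2 / 8 * s)))
            + ENNReal.ofReal (∑ s ∈ Finset.Icc 1 (T - 1),
              Kc ρ * rexp (-(Real.sqrt (ρ / 2) * ε * Real.sqrt (s : ℝ)))) := by
            rw [Finset.sum_add_distrib,
              ENNReal.ofReal_sum_of_nonneg (fun s _ => by positivity),
              ENNReal.ofReal_sum_of_nonneg (fun s _ => by positivity)]
        _ ≤ ENNReal.ofReal (40 / (ρ * ε ^ 2)) + ENNReal.ofReal (Kc ρ * (24 / (ρ * ε ^ 2))) := by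
            apply add_le_add
            · apply ENNReal.ofReal_le_ofReal
              have ha : (0:ℝ) < ρ * ε ^ 2 / 8 := by positivity
              have h1 : ∑ s ∈ Finset.Icc 1 (T - 1), 5 * rexp (-(ρ * ε ^ 2 / 8 * s))
                  = 5 * ∑ s ∈ Finset.Icc 1 (T - 1), rexp (-(ρ * ε ^ 2 / 8 * s)) := by
                rw [Finset.mul_sum]
              rw [h1]
              have h2 := sumA_bound ha (T - 1)
              calc 5 * ∑ s ∈ Finset.Icc 1 (T - 1), rexp (-(ρ * ε ^ 2 / 8 * s))
                  ≤ 5 * (1 / (ρ * ε ^ 2 / 8)) := by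
                    apply mul_le_mul_of_nonneg_left h2 (by norm_num)
                _ = 40 / (ρ * ε ^ 2) := by field_simp; norm_num
            · apply ENNReal.ofReal_le_ofReal
              have hb : (0:ℝ) < Real.sqrt (ρ / 2) * ε := by positivity
              have h1 : ∑ s ∈ Finset.Icc 1 (T - 1),
                  Kc ρ * rexp (-(Real.sqrt (ρ / 2) * ε * Real.sqrt (s : ℝ)))
                  = Kc ρ * ∑ s ∈ Finset.Icc 1 (T - 1),
                    rexp (-(Real.sqrt (ρ / 2) * ε * Real.sqrt (s : ℝ))) := by
                rw [Finset.mul_sum]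
              rw [h1]
              have h2 := sumB_bound hb (T - 1)
              have h3 : (Real.sqrt (ρ / 2) * ε) ^ 2 = ρ / 2 * ε ^ 2 := by
                rw [mul_pow, Real.sq_sqrt (by positivity)]
              apply mul_le_mul_of_nonneg_left _ hKc
              refine h2.trans ?_
              rw [h3]
              apply le_of_eq
              field_simp
              ring
        _ = ENNReal.ofReal ((40 + 24 * Kc ρ) / ρ / ε ^ 2) := by
            rw [← ENNReal.ofReal_add (by positivity) (by positivity)]
            congr 1
            field_simp
    refine le_trans (ENNReal.toReal_mono ENNReal.ofReal_ne_top key) ?_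
    rw [ENNReal.toReal_ofReal (by positivity)]
  · -- bad case
    push_neg at hgood
    obtain ⟨i₀, hi₀, l₀, hl₀le, hni⟩ := hgood
    have hl₀ : l₀ < 0 := by
      rcases lt_or_eq_of_le hl₀le with h | h
      · exact h
      · exfalso
        apply hni
        have : (fun ω => rexp (l₀ * (X i₀ ω - μ₁))) = fun _ => (1:ℝ) := by
          funext ω; rw [h]; simp
        rw [this]
        exact integrable_const 1
    rcases Nat.lt_or_ge T 2 with hT2 | hT2
    · -- T = 1 : empty sum
      have : T - 1 = 0 := by omega
      rw [this]
      simp only [Finset.Icc_eq_empty_of_lt (by norm_num : (1:ℕ) > 0), Finset.sum_empty]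
      · rw [integral_zero]
        positivity
    · have hT1 : 1 ≤ T - 1 := by omega
      have hbad := bad_case X hXm hind μ₁ hρ0 ε (hpow (T - 1)) (hpow_pos _) hi₀ hl₀ hni
      have hnint : ¬ Integrable (fun ω => ∑ s ∈ Finset.Icc 1 (T - 1),
          (1 / (1 - stdGaussianCDF (Real.sqrt (ρ * (hpow s : ℝ)) *
            (μ₁ - ε - (1 / (hpow s : ℝ)) * ∑ i ∈ Finset.Icc 1 (hpow s), X i ω))) - 1)) ℙ := by
        intro hI
        have h2 := hI.hasFiniteIntegral
        rw [HasFiniteIntegral] at h2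
        have h3 : (⊤:ℝ≥0∞) ≤ ∫⁻ ω, (‖∑ s ∈ Finset.Icc 1 (T - 1),
            (1 / (1 - stdGaussianCDF (Real.sqrt (ρ * (hpow s : ℝ)) *
              (μ₁ - ε - (1 / (hpow s : ℝ)) * ∑ i ∈ Finset.Icc 1 (hpow s), X i ω))) - 1)‖ₑ : ℝ≥0∞) ∂ℙ := by
          rw [← hbad]
          apply lintegral_mono
          intro ω
          have hle : (1 / (1 - stdGaussianCDF (Real.sqrt (ρ * (hpow (T-1) : ℝ)) *
              (μ₁ - ε - (1 / (hpow (T-1) : ℝ)) * ∑ i ∈ Finset.Icc 1 (hpow (T-1)), X i ω))) - 1)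
              ≤ ∑ s ∈ Finset.Icc 1 (T - 1),
                (1 / (1 - stdGaussianCDF (Real.sqrt (ρ * (hpow s : ℝ)) *
                  (μ₁ - ε - (1 / (hpow s : ℝ)) * ∑ i ∈ Finset.Icc 1 (hpow s), X i ω))) - 1) :=
            Finset.single_le_sum (f := fun s => 1 / (1 - stdGaussianCDF (Real.sqrt (ρ * (hpow s : ℝ)) *
                (μ₁ - ε - (1 / (hpow s : ℝ)) * ∑ i ∈ Finset.Icc 1 (hpow s), X i ω))) - 1)
              (fun s _ => f_nonneg _) (Finset.mem_Icc.2 ⟨hT1, le_refl _⟩)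
          exact le_trans (ENNReal.ofReal_le_ofReal hle) (Real.ofReal_le_enorm _)
        exact h2.ne (top_le_iff.1 h3)
      rw [integral_undef hnint]
      positivity
end

section
/- Fix ρ ∈ (1/2, 1). Let X₁, X₂, … be independent random variables with mean μ₁ such that X_i − μ₁ is 1-subgaussian, and let μ̂_s = (1/s)·Σ_{i=1}^{s} X_i. For s ≥ 1 let h(s) = 2^{⌊log₂ s⌋} and, for ε > 0, define the random variable G'_{1h(s)}(ε) = 1 − Φ(√(ρ·h(s))·(μ₁ − ε − μ̂_{h(s)})). Then there exists a constant c' > 0, depending only on ρ and independent of s, ε, and the distribution of the X_i, such that for every s ≥ 1 and every ε > 0, E[ 1/G'_{1h(s)}(ε) − 1 ] ≤ c'. -/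
open MeasureTheory ProbabilityTheory
open scoped ProbabilityTheory BigOperators

section Aux

open Real

/-- The standard normal upper tail function. -/
noncomputable def Qg (x : ℝ) : ℝ := ((gaussianReal 0 1) (Set.Ioi x)).toReal

lemma Qg_pos (x : ℝ) : 0 < Qg x := by
  rw [Qg, ENNReal.toReal_pos_iff]
  constructor
  · rw [pos_iff_ne_zero]
    intro h
    have := (gaussianReal_absolutelyContinuous' 0 (v := 1) one_ne_zero) h
    simp [Real.volume_Ioi] at this
  · exact lt_of_le_of_lt prob_le_one (by norm_num)

lemma Qg_le_one (x : ℝ) : Qg x ≤ 1 := by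
  rw [Qg]
  exact ENNReal.toReal_le_of_le_ofReal zero_le_one (by simpa using prob_le_one)

lemma Qg_antitone : Antitone Qg := by
  intro a b hab
  rw [Qg, Qg]
  exact ENNReal.toReal_mono (measure_ne_top _ _) (measure_mono (Set.Ioi_subset_Ioi hab))

lemma Qg_measurable : Measurable Qg := Qg_antitone.measurable

lemma one_sub_stdGaussianCDF (x : ℝ) : 1 - stdGaussianCDF x = Qg x := by
  have h : (gaussianReal 0 1) (Set.Iic x) + (gaussianReal 0 1) (Set.Ioi x) = 1 := by
    rw [← measure_union (Set.Iic_disjoint_Ioi le_rfl) measurableSet_Ioi, Set.Iic_union_Ioi,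
      measure_univ]
  have h1 : ((gaussianReal 0 1) (Set.Iic x)).toReal + Qg x = 1 := by
    rw [Qg, ← ENNReal.toReal_add (measure_ne_top _ _) (measure_ne_top _ _), h]
    simp
  rw [stdGaussianCDF]
  linarith

lemma gauss_shift (l z : ℝ) :
    rexp (l * z) * gaussianPDFReal 0 1 z = rexp (l ^ 2 / 2) * gaussianPDFReal l 1 z := by
  simp only [gaussianPDFReal, NNReal.coe_one, mul_one]
  rw [show (√(2 * π))⁻¹ * rexp (-(z - l) ^ 2 / 2) = rexp (-(z - l) ^ 2 / 2) * (√(2 * π))⁻¹ from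
    mul_comm _ _]
  rw [mul_comm (rexp (l * z)), mul_assoc, ← mul_assoc (rexp (l^2/2)), ← Real.exp_add,
    ← Real.exp_add]
  rw [mul_comm ((√(2 * π))⁻¹)]
  congr 2
  ring

lemma integrable_exp_mul_pdf (l : ℝ) :
    Integrable (fun z => rexp (l * z) * gaussianPDFReal 0 1 z) := by
  simp_rw [gauss_shift]
  exact (integrable_gaussianPDFReal l 1).const_mul _

lemma integral_exp_mul_pdf (l : ℝ) :
    ∫ z, rexp (l * z) * gaussianPDFReal 0 1 z = rexp (l ^ 2 / 2) := by
  simp_rw [gauss_shift]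
  rw [integral_const_mul, integral_gaussianPDFReal_eq_one l one_ne_zero, mul_one]

lemma Qg_eq_integral (x : ℝ) : Qg x = ∫ z in Set.Ioi x, gaussianPDFReal 0 1 z := by
  rw [Qg, gaussianReal_apply_eq_integral 0 one_ne_zero,
    ENNReal.toReal_ofReal (integral_nonneg fun z => gaussianPDFReal_nonneg 0 1 z)]

lemma Qg_le_exp {l : ℝ} (hl : 0 ≤ l) (x : ℝ) : Qg x ≤ rexp (l ^ 2 / 2 - l * x) := by
  have hfi : Integrable (fun z => rexp (-(l * x)) * (rexp (l * z) * gaussianPDFReal 0 1 z)) :=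
    (integrable_exp_mul_pdf l).const_mul _
  have h1 : Qg x ≤ ∫ z in Set.Ioi x, rexp (-(l * x)) * (rexp (l * z) * gaussianPDFReal 0 1 z) := by
    rw [Qg_eq_integral]
    refine setIntegral_mono_on (integrable_gaussianPDFReal 0 1).integrableOn
      hfi.integrableOn measurableSet_Ioi (fun z hz => ?_)
    have h2 : (1 : ℝ) ≤ rexp (-(l * x)) * rexp (l * z) := by
      rw [← Real.exp_add]
      refine Real.one_le_exp ?_
      have : x ≤ z := le_of_lt hz
      nlinarith
    calc gaussianPDFReal 0 1 z = 1 * gaussianPDFReal 0 1 z := (one_mul _).symm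
    _ ≤ (rexp (-(l * x)) * rexp (l * z)) * gaussianPDFReal 0 1 z := by
        exact mul_le_mul_of_nonneg_right h2 (gaussianPDFReal_nonneg 0 1 z)
    _ = rexp (-(l * x)) * (rexp (l * z) * gaussianPDFReal 0 1 z) := by ring
  have h3 : ∫ z in Set.Ioi x, rexp (-(l * x)) * (rexp (l * z) * gaussianPDFReal 0 1 z)
      ≤ ∫ z, rexp (-(l * x)) * (rexp (l * z) * gaussianPDFReal 0 1 z) := by
    refine setIntegral_le_integral hfi (Filter.Eventually.of_forall fun z => ?_)
    exact mul_nonneg (Real.exp_pos _).le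
      (mul_nonneg (Real.exp_pos _).le (gaussianPDFReal_nonneg 0 1 z))
  have h4 : ∫ z, rexp (-(l * x)) * (rexp (l * z) * gaussianPDFReal 0 1 z)
      = rexp (l ^ 2 / 2 - l * x) := by
    rw [integral_const_mul, integral_exp_mul_pdf, ← Real.exp_add]
    ring_nf
  linarith

lemma Qg_ge {t : ℝ} (ht : 0 ≤ t) : (Real.sqrt (2 * π))⁻¹ * rexp (-(t + 1) ^ 2 / 2) ≤ Qg t := by
  have hsub : Set.Ioc t (t + 1) ⊆ Set.Ioi t := Set.Ioc_subset_Ioi_self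
  have h1 : ∫ z in Set.Ioc t (t + 1), gaussianPDFReal 0 1 z ≤ Qg t := by
    rw [Qg_eq_integral]
    refine setIntegral_mono_set (integrable_gaussianPDFReal 0 1).integrableOn
      (Filter.Eventually.of_forall fun z => gaussianPDFReal_nonneg 0 1 z)
      (Filter.Eventually.of_forall hsub)
  have h2 : ∫ z in Set.Ioc t (t + 1), gaussianPDFReal 0 1 (t + 1)
      ≤ ∫ z in Set.Ioc t (t + 1), gaussianPDFReal 0 1 z := by
    refine setIntegral_mono_on (integrableOn_const measure_Ioc_lt_top.ne)
      (integrable_gaussianPDFReal 0 1).integrableOn measurableSet_Ioc (fun z hz => ?_)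
    simp only [gaussianPDFReal, NNReal.coe_one, mul_one, sub_zero]
    have hz1 : t < z := hz.1
    have hz2 : z ≤ t + 1 := hz.2
    have hzsq : z ^ 2 ≤ (t + 1) ^ 2 := by nlinarith
    exact mul_le_mul_of_nonneg_left (Real.exp_le_exp.mpr (by linarith))
      (by positivity)
  have h3 : ∫ z in Set.Ioc t (t + 1), gaussianPDFReal 0 1 (t + 1)
      = gaussianPDFReal 0 1 (t + 1) := by
    rw [setIntegral_const, Real.volume_real_Ioc]
    simp
  have h4 : gaussianPDFReal 0 1 (t + 1) = (Real.sqrt (2 * π))⁻¹ * rexp (-(t + 1) ^ 2 / 2) := by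
    simp [gaussianPDFReal]
  linarith [h1, h2, h3 ▸ h2]

lemma Qg_inv_le {t : ℝ} (ht : 0 ≤ t) : (Qg t)⁻¹ ≤ Real.sqrt (2 * π) * rexp ((t + 1) ^ 2 / 2) := by
  have h1 := Qg_ge ht
  have h2 : (0 : ℝ) < (Real.sqrt (2 * π))⁻¹ * rexp (-(t + 1) ^ 2 / 2) := by
    have : (0:ℝ) < Real.sqrt (2 * π) := Real.sqrt_pos.mpr (by positivity)
    positivity
  calc (Qg t)⁻¹ ≤ ((Real.sqrt (2 * π))⁻¹ * rexp (-(t + 1) ^ 2 / 2))⁻¹ := inv_anti₀ h2 h1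
  _ = Real.sqrt (2 * π) * rexp ((t + 1) ^ 2 / 2) := by
      rw [mul_inv, inv_inv, ← Real.exp_neg]
      ring_nf

lemma summable_u {ρ : ℝ} (hρl : 1/2 < ρ) (hρu : ρ < 1) :
    Summable (fun k : ℕ =>
      Real.sqrt (2 * π) * rexp (((k:ℝ) + 2) ^ 2 / 2 - (k:ℝ) ^ 2 / (2 * ρ))) := by
  have hρ0 : 0 < ρ := lt_trans (by norm_num) hρl
  set δ : ℝ := 1 / (2 * ρ) - 1 / 2 with hδ
  have hδ0 : 0 < δ := by
    rw [hδ, sub_pos]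
    rw [div_lt_div_iff₀ (by norm_num) (by positivity)]
    linarith
  have key : ∀ k : ℕ, rexp (((k:ℝ) + 2) ^ 2 / 2 - (k:ℝ) ^ 2 / (2 * ρ))
      ≤ rexp (2 + 2 / δ) * rexp (-(δ / 2)) ^ k := by
    intro k
    rw [← Real.exp_nat_mul, ← Real.exp_add]
    apply Real.exp_le_exp.mpr
    have hk0 : (0:ℝ) ≤ (k:ℝ) := Nat.cast_nonneg k
    have h1 : ((k:ℝ) + 2) ^ 2 / 2 - (k:ℝ) ^ 2 / (2 * ρ) = -δ * (k:ℝ)^2 + 2 * k + 2 := by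
      rw [hδ]; field_simp; ring
    have h2 : 2 * (k:ℝ) ≤ (δ / 2) * (k:ℝ)^2 + 2 / δ := by
      have hq : (0:ℝ) ≤ (δ * (k:ℝ) - 2) ^ 2 / (2 * δ) :=
        div_nonneg (sq_nonneg _) (by positivity)
      have he : (δ * (k:ℝ) - 2) ^ 2 / (2 * δ) = δ / 2 * (k:ℝ)^2 + 2 / δ - 2 * (k:ℝ) := by
        field_simp
        ring
      linarith [he ▸ hq]
    have h4 : (k:ℝ) ≤ (k:ℝ)^2 := by
      have := Nat.le_self_pow (two_ne_zero) k
      exact_mod_cast this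
    have h6 : (δ/2) * (k:ℝ) ≤ (δ/2) * (k:ℝ)^2 :=
      mul_le_mul_of_nonneg_left h4 (le_of_lt (half_pos hδ0))
    rw [h1]
    nlinarith
  refine Summable.of_nonneg_of_le (fun k => by positivity)
    (fun k => mul_le_mul_of_nonneg_left (key k) (Real.sqrt_nonneg _)) ?_
  have hgeo : Summable (fun k : ℕ => rexp (-(δ / 2)) ^ k) :=
    summable_geometric_of_lt_one (Real.exp_nonneg _)
      (Real.exp_lt_one_iff.mpr (by simp only [neg_lt, neg_zero]; positivity))
  simpa [mul_assoc] using (hgeo.mul_left (Real.sqrt (2 * π) * rexp (2 + 2 / δ)))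

end Aux

/-- Fix `ρ ∈ (1/2, 1)`.  There exists a constant `c' > 0` depending only on `ρ` —
independent of `s`, `ε`, and the distribution of the `X i` — such that for all independent
variables `X i` with mean `μ₁` and `X i − μ₁` 1-subgaussian, with
`μ̂_s = (1/s)∑_{i=1}^s X_i` and
`G'_{1h(s)}(ε) = 1 − Φ(√(ρ·h(s))·(μ₁ − ε − μ̂_{h(s)}))`, for every `s ≥ 1` and `ε > 0`:
`E[1/G'_{1h(s)}(ε) − 1] ≤ c'`. -/
theorem expected_inverse_tail_le_const (ρ : ℝ) (hρ : ρ ∈ Set.Ioo (1/2 : ℝ) 1) :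
    ∃ c' : ℝ, 0 < c' ∧
      ∀ (Ω : Type) [MeasureSpace Ω] [IsProbabilityMeasure (ℙ : Measure Ω)],
        ∀ (X : ℕ → Ω → ℝ), (∀ i, Measurable (X i)) →
          iIndepFun (m := fun _ => Real.measurableSpace) X ℙ →
          ∀ μ₁ : ℝ, (∀ i, ∫ ω, X i ω ∂ℙ = μ₁) →
            (∀ i, ∀ l : ℝ, ∫ ω, Real.exp (l * (X i ω - μ₁)) ∂ℙ ≤ Real.exp (l ^ 2 / 2)) →
            ∀ s : ℕ, 1 ≤ s → ∀ ε : ℝ, 0 < ε →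
              (∫ ω, (1 / (1 - stdGaussianCDF (Real.sqrt (ρ * (hpow s : ℝ)) *
                    (μ₁ - ε - (1 / (hpow s : ℝ)) * ∑ i ∈ Finset.Icc 1 (hpow s), X i ω))) - 1)
                ∂ℙ)
              ≤ c' := by
  obtain ⟨hρl, hρu⟩ := hρ
  have hρ0 : 0 < ρ := lt_trans (by norm_num) hρl
  set c₁ : ℝ := Real.sqrt (2 * Real.pi) with hc₁def
  have hc₁ : 0 < c₁ := Real.sqrt_pos.mpr (by positivity)
  set u : ℕ → ℝ := fun k => c₁ * Real.exp (((k:ℝ) + 2) ^ 2 / 2 - (k:ℝ) ^ 2 / (2 * ρ)) with hu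
  have hsum : Summable u := summable_u hρl hρu
  set C₀ : ℝ := c₁ * Real.exp (((0:ℝ) + 1) ^ 2 / 2) with hC₀def
  have hC₀0 : 0 < C₀ := by positivity
  have htsum0 : 0 ≤ ∑' k, u k := tsum_nonneg (fun k => by positivity)
  refine ⟨C₀ + (∑' k, u k) + 1, by linarith, ?_⟩
  intro Ω _ _ X hXmeas hindep μ₁ _ hsg s hs ε hε
  set n : ℕ := hpow s with hn
  have hn0 : 0 < n := by rw [hn, hpow]; exact pow_pos (by norm_num) _
  have hnR : (0:ℝ) < (n:ℝ) := Nat.cast_pos.mpr hn0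
  set Y : ℕ → Ω → ℝ := fun i => (fun x => μ₁ - x) ∘ X i with hY
  have hYmeas : ∀ i, Measurable (Y i) := fun i => measurable_const.sub (hXmeas i)
  have hYindep : iIndepFun (m := fun _ => Real.measurableSpace) Y ℙ :=
    hindep.comp _ (fun _ => measurable_const.sub measurable_id)
  set κ : ℝ := Real.sqrt (ρ * (n:ℝ)) / (n:ℝ) with hκdef
  have hκ : 0 < κ := div_pos (Real.sqrt_pos.mpr (by positivity)) hnR
  have hκsq : κ ^ 2 * (n:ℝ) = ρ := by
    have hne : (n:ℝ) ≠ 0 := ne_of_gt hnR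
    rw [hκdef, div_pow, Real.sq_sqrt (by positivity)]
    field_simp
  set A : Ω → ℝ := fun ω => Real.sqrt (ρ * (n:ℝ)) *
      (μ₁ - ε - 1 / (n:ℝ) * ∑ i ∈ Finset.Icc 1 n, X i ω) with hAdef
  have hcard : (Finset.Icc 1 n).card = n := by rw [Nat.card_Icc]; omega
  have hTsum : ∀ ω, (∑ i ∈ Finset.Icc 1 n, Y i) ω
      = (n:ℝ) * μ₁ - ∑ i ∈ Finset.Icc 1 n, X i ω := by
    intro ω
    rw [Finset.sum_apply]
    simp only [hY, Function.comp_apply]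
    rw [Finset.sum_sub_distrib, Finset.sum_const, hcard, nsmul_eq_mul]
  have hA_eq : ∀ ω, A ω = κ * (∑ i ∈ Finset.Icc 1 n, Y i) ω
      - Real.sqrt (ρ * (n:ℝ)) * ε := by
    intro ω
    have hne : (n:ℝ) ≠ 0 := ne_of_gt hnR
    simp only [hAdef]
    rw [hTsum ω, hκdef]
    field_simp
    ring
  have hAmeas : Measurable A := by
    simp only [hAdef]
    exact (measurable_const.sub
      ((Finset.measurable_sum _ (fun i _ => hXmeas i)).const_mul (1 / (n:ℝ)))).const_mul _
  set F : Ω → ℝ := fun ω => 1 / (1 - stdGaussianCDF (A ω)) - 1 with hFdef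
  have hF_eq : ∀ ω, F ω = (Qg (A ω))⁻¹ - 1 := by
    intro ω
    simp only [hFdef]
    rw [one_sub_stdGaussianCDF, one_div]
  have hFmeas : Measurable F := by
    have hFe : F = fun ω => (Qg (A ω))⁻¹ - 1 := funext hF_eq
    rw [hFe]
    exact ((Qg_measurable.comp hAmeas).inv).sub measurable_const
  have hF0 : ∀ ω, 0 ≤ F ω := by
    intro ω
    rw [hF_eq]
    have h1 : (1:ℝ)⁻¹ ≤ (Qg (A ω))⁻¹ := inv_anti₀ (Qg_pos _) (Qg_le_one _)
    rw [inv_one] at h1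
    linarith
  have hgoal_eq : (∫ ω, (1 / (1 - stdGaussianCDF (Real.sqrt (ρ * (n : ℝ)) *
        (μ₁ - ε - 1 / (n : ℝ) * ∑ i ∈ Finset.Icc 1 n, X i ω))) - 1) ∂ℙ)
      = ∫ ω, F ω ∂ℙ := rfl
  rw [hgoal_eq]
  have hmgfY : ∀ (t : ℝ) (i : ℕ), mgf (Y i) ℙ t ≤ Real.exp (t ^ 2 / 2) := by
    intro t i
    have he : (fun ω => Real.exp (t * Y i ω)) = fun ω => Real.exp ((-t) * (X i ω - μ₁)) := by
      funext ω
      congr 1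
      simp only [hY, Function.comp_apply]
      ring
    simp only [mgf]
    calc (∫ ω, Real.exp (t * Y i ω) ∂ℙ) = ∫ ω, Real.exp ((-t) * (X i ω - μ₁)) ∂ℙ := by rw [he]
    _ ≤ Real.exp ((-t) ^ 2 / 2) := hsg i (-t)
    _ = Real.exp (t ^ 2 / 2) := by rw [neg_pow]; norm_num
  by_cases hint : ∀ t : ℝ, 0 ≤ t →
      ∀ i ∈ Finset.Icc 1 n, Integrable (fun ω => Real.exp (t * Y i ω)) ℙ
  · -- Case 2: all the exponential moments exist; use Chernoff bounds.
    have htail : ∀ k : ℕ, (ℙ : Measure Ω) {ω | (k:ℝ) ≤ A ω}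
        ≤ ENNReal.ofReal (Real.exp (-(k:ℝ) ^ 2 / (2 * ρ))) := by
      intro k
      set t₀ : ℝ := (k:ℝ) / (κ * (n:ℝ)) with ht₀def
      have ht₀ : 0 ≤ t₀ := by positivity
      have hTint : Integrable (fun ω => Real.exp (t₀ * (∑ i ∈ Finset.Icc 1 n, Y i) ω)) ℙ :=
        hYindep.integrable_exp_mul_sum hYmeas (hint t₀ ht₀)
      have hsubset : {ω | (k:ℝ) ≤ A ω}
          ⊆ {ω | (k:ℝ)/κ ≤ (∑ i ∈ Finset.Icc 1 n, Y i) ω} := by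
        intro ω hω
        simp only [Set.mem_setOf_eq] at hω ⊢
        rw [hA_eq ω] at hω
        rw [div_le_iff₀ hκ]
        have hsq : 0 ≤ Real.sqrt (ρ * (n:ℝ)) := Real.sqrt_nonneg _
        nlinarith [mul_nonneg hsq hε.le]
      have hchern := measure_ge_le_exp_mul_mgf (μ := ℙ) (X := ∑ i ∈ Finset.Icc 1 n, Y i)
        ((k:ℝ)/κ) ht₀ hTint
      have hmgfT : mgf (∑ i ∈ Finset.Icc 1 n, Y i) ℙ t₀ ≤ Real.exp ((n:ℝ) * (t₀ ^ 2 / 2)) := by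
        rw [hYindep.mgf_sum hYmeas]
        calc ∏ i ∈ Finset.Icc 1 n, mgf (Y i) ℙ t₀
            ≤ ∏ i ∈ Finset.Icc 1 n, Real.exp (t₀ ^ 2 / 2) :=
            Finset.prod_le_prod (fun i _ => mgf_nonneg) (fun i _ => hmgfY t₀ i)
        _ = Real.exp (t₀ ^ 2 / 2) ^ n := by rw [Finset.prod_const, hcard]
        _ = Real.exp ((n:ℝ) * (t₀ ^ 2 / 2)) := (Real.exp_nat_mul _ n).symm
      have hnum : -t₀ * ((k:ℝ)/κ) + (n:ℝ) * (t₀ ^ 2 / 2) = -(k:ℝ) ^ 2 / (2 * ρ) := by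
        have hne : (n:ℝ) ≠ 0 := ne_of_gt hnR
        have hκne : κ ≠ 0 := ne_of_gt hκ
        rw [← hκsq, ht₀def]
        field_simp
        ring
      have htr : ((ℙ : Measure Ω) {ω | (k:ℝ)/κ ≤ (∑ i ∈ Finset.Icc 1 n, Y i) ω}).toReal
          ≤ Real.exp (-(k:ℝ) ^ 2 / (2 * ρ)) := by
        calc ((ℙ : Measure Ω) {ω | (k:ℝ)/κ ≤ (∑ i ∈ Finset.Icc 1 n, Y i) ω}).toReal
            ≤ Real.exp (-t₀ * ((k:ℝ)/κ)) * mgf (∑ i ∈ Finset.Icc 1 n, Y i) ℙ t₀ := hchern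
        _ ≤ Real.exp (-t₀ * ((k:ℝ)/κ)) * Real.exp ((n:ℝ) * (t₀ ^ 2 / 2)) :=
            mul_le_mul_of_nonneg_left hmgfT (Real.exp_nonneg _)
        _ = Real.exp (-(k:ℝ) ^ 2 / (2 * ρ)) := by rw [← Real.exp_add, hnum]
      calc (ℙ : Measure Ω) {ω | (k:ℝ) ≤ A ω}
          ≤ ℙ {ω | (k:ℝ)/κ ≤ (∑ i ∈ Finset.Icc 1 n, Y i) ω} := measure_mono hsubset
      _ ≤ ENNReal.ofReal (Real.exp (-(k:ℝ) ^ 2 / (2 * ρ))) := by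
          rw [← ENNReal.ofReal_toReal (measure_ne_top ℙ _)]
          exact ENNReal.ofReal_le_ofReal htr
    have hint_eq : ∫ ω, F ω ∂ℙ = (∫⁻ ω, ENNReal.ofReal (F ω) ∂ℙ).toReal :=
      integral_eq_lintegral_of_nonneg_ae (Filter.Eventually.of_forall hF0)
        hFmeas.aestronglyMeasurable
    have hpt : ∀ ω, ENNReal.ofReal (F ω) ≤ ENNReal.ofReal C₀
        + ∑' k : ℕ, Set.indicator {ω' | (k:ℝ) ≤ A ω'}
            (fun _ => ENNReal.ofReal (c₁ * Real.exp (((k:ℝ) + 2) ^ 2 / 2))) ω := by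
      intro ω
      rcases le_or_gt (A ω) 0 with h | h
      · refine le_trans ?_ le_self_add
        apply ENNReal.ofReal_le_ofReal
        rw [hF_eq]
        have h1 : (Qg (A ω))⁻¹ ≤ (Qg 0)⁻¹ := inv_anti₀ (Qg_pos 0) (Qg_antitone h)
        have h2 := Qg_inv_le (le_refl (0:ℝ))
        rw [hC₀def]
        linarith
      · refine le_trans ?_ le_add_self
        have hk1 : ((⌊A ω⌋₊ : ℕ) : ℝ) ≤ A ω := Nat.floor_le h.le
        have hk2 : A ω ≤ ((⌊A ω⌋₊ : ℕ) : ℝ) + 1 := (Nat.lt_floor_add_one _).le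
        have hF' : F ω ≤ c₁ * Real.exp ((((⌊A ω⌋₊ : ℕ) : ℝ) + 2) ^ 2 / 2) := by
          rw [hF_eq]
          have h1 : (Qg (A ω))⁻¹ ≤ (Qg (((⌊A ω⌋₊ : ℕ) : ℝ) + 1))⁻¹ :=
            inv_anti₀ (Qg_pos _) (Qg_antitone hk2)
          have h2 : (Qg (((⌊A ω⌋₊ : ℕ) : ℝ) + 1))⁻¹
              ≤ c₁ * Real.exp (((((⌊A ω⌋₊ : ℕ) : ℝ) + 1) + 1) ^ 2 / 2) :=
            Qg_inv_le (by positivity)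
          have h3 : (((((⌊A ω⌋₊ : ℕ) : ℝ) + 1) + 1)) ^ 2 / 2
              = (((⌊A ω⌋₊ : ℕ) : ℝ) + 2) ^ 2 / 2 := by ring
          rw [h3] at h2
          linarith
        calc ENNReal.ofReal (F ω)
            ≤ Set.indicator {ω' | ((⌊A ω⌋₊ : ℕ) : ℝ) ≤ A ω'}
              (fun _ => ENNReal.ofReal
                (c₁ * Real.exp ((((⌊A ω⌋₊ : ℕ) : ℝ) + 2) ^ 2 / 2))) ω := by
              rw [Set.indicator_of_mem
                (show ω ∈ {ω' : Ω | ((⌊A ω⌋₊ : ℕ) : ℝ) ≤ A ω'} from hk1)]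
              exact ENNReal.ofReal_le_ofReal hF'
        _ ≤ ∑' k : ℕ, Set.indicator {ω' | (k:ℝ) ≤ A ω'}
              (fun _ => ENNReal.ofReal (c₁ * Real.exp (((k:ℝ) + 2) ^ 2 / 2))) ω :=
            ENNReal.le_tsum ⌊A ω⌋₊
    have hmeas_ind : ∀ k : ℕ, MeasurableSet {ω' : Ω | (k:ℝ) ≤ A ω'} := fun k =>
      measurableSet_le measurable_const hAmeas
    have hlin : ∫⁻ ω, ENNReal.ofReal (F ω) ∂ℙ
        ≤ ENNReal.ofReal C₀ + ∑' k : ℕ, ENNReal.ofReal (c₁ * Real.exp (((k:ℝ) + 2) ^ 2 / 2))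
            * (ℙ : Measure Ω) {ω' | (k:ℝ) ≤ A ω'} := by
      calc ∫⁻ ω, ENNReal.ofReal (F ω) ∂ℙ
          ≤ ∫⁻ ω, (ENNReal.ofReal C₀
            + ∑' k : ℕ, Set.indicator {ω' | (k:ℝ) ≤ A ω'}
                (fun _ => ENNReal.ofReal (c₁ * Real.exp (((k:ℝ) + 2) ^ 2 / 2))) ω) ∂ℙ :=
          lintegral_mono hpt
      _ = ENNReal.ofReal C₀ + ∫⁻ ω, (∑' k : ℕ, Set.indicator {ω' | (k:ℝ) ≤ A ω'}
                (fun _ => ENNReal.ofReal (c₁ * Real.exp (((k:ℝ) + 2) ^ 2 / 2))) ω) ∂ℙ := by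
          rw [lintegral_add_left measurable_const, lintegral_const, measure_univ, mul_one]
      _ = ENNReal.ofReal C₀ + ∑' k : ℕ, ∫⁻ ω, Set.indicator {ω' | (k:ℝ) ≤ A ω'}
                (fun _ => ENNReal.ofReal (c₁ * Real.exp (((k:ℝ) + 2) ^ 2 / 2))) ω ∂ℙ := by
          rw [lintegral_tsum (fun k => (measurable_const.indicator (hmeas_ind k)).aemeasurable)]
      _ = ENNReal.ofReal C₀ + ∑' k : ℕ, ENNReal.ofReal (c₁ * Real.exp (((k:ℝ) + 2) ^ 2 / 2))
            * (ℙ : Measure Ω) {ω' | (k:ℝ) ≤ A ω'} := by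
          congr 1
          refine tsum_congr (fun k => ?_)
          rw [lintegral_indicator (hmeas_ind k) _, setLIntegral_const]
    have hfinal : ∑' k : ℕ, ENNReal.ofReal (c₁ * Real.exp (((k:ℝ) + 2) ^ 2 / 2))
          * (ℙ : Measure Ω) {ω' | (k:ℝ) ≤ A ω'}
        ≤ ENNReal.ofReal (∑' k, u k) := by
      rw [ENNReal.ofReal_tsum_of_nonneg (fun k => by positivity) hsum]
      refine ENNReal.tsum_le_tsum (fun k => ?_)
      calc ENNReal.ofReal (c₁ * Real.exp (((k:ℝ) + 2) ^ 2 / 2))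
            * (ℙ : Measure Ω) {ω' | (k:ℝ) ≤ A ω'}
          ≤ ENNReal.ofReal (c₁ * Real.exp (((k:ℝ) + 2) ^ 2 / 2))
            * ENNReal.ofReal (Real.exp (-(k:ℝ) ^ 2 / (2 * ρ))) := mul_le_mul_right (htail k) _
      _ = ENNReal.ofReal (u k) := by
          rw [← ENNReal.ofReal_mul (by positivity)]
          congr 1
          simp only [hu]
          rw [mul_assoc, ← Real.exp_add]
          congr 1
          ring
    rw [hint_eq]
    refine ENNReal.toReal_le_of_le_ofReal (by linarith) ?_
    calc ∫⁻ ω, ENNReal.ofReal (F ω) ∂ℙ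
        ≤ ENNReal.ofReal C₀ + ∑' k : ℕ, ENNReal.ofReal (c₁ * Real.exp (((k:ℝ) + 2) ^ 2 / 2))
            * (ℙ : Measure Ω) {ω' | (k:ℝ) ≤ A ω'} := hlin
    _ ≤ ENNReal.ofReal C₀ + ENNReal.ofReal (∑' k, u k) := add_le_add_right hfinal _
    _ = ENNReal.ofReal (C₀ + ∑' k, u k) := (ENNReal.ofReal_add hC₀0.le htsum0).symm
    _ ≤ ENNReal.ofReal (C₀ + (∑' k, u k) + 1) := ENNReal.ofReal_le_ofReal (by linarith)
  · -- Case 1: some exponential moment is infinite; then F is not integrable.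
    push_neg at hint
    obtain ⟨t, ht0, i, hi, hni⟩ := hint
    have ht : 0 < t := by
      rcases ht0.eq_or_lt with h | h
      · exfalso
        apply hni
        rw [← h]
        simpa using integrable_const (1:ℝ)
      · exact h
    have hnotInt : ¬ Integrable F ℙ := by
      intro hF
      set lam : ℝ := t / κ with hlamdef
      have hlam0 : 0 < lam := div_pos ht hκ
      have hlamκ : lam * κ = t := div_mul_cancel₀ t (ne_of_gt hκ)
      have hgb : ∀ ω, Real.exp (lam * A ω) ≤ Real.exp (lam ^ 2 / 2) * (F ω + 1) := by
        intro ω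
        have h1 : Qg (A ω) ≤ Real.exp (lam ^ 2 / 2 - lam * A ω) := Qg_le_exp hlam0.le _
        have h2 : (Real.exp (lam ^ 2 / 2 - lam * A ω))⁻¹ ≤ (Qg (A ω))⁻¹ :=
          inv_anti₀ (Qg_pos _) h1
        have h3 : (Real.exp (lam ^ 2 / 2 - lam * A ω))⁻¹
            = Real.exp (lam * A ω - lam ^ 2 / 2) := by
          rw [← Real.exp_neg]
          congr 1
          ring
        have h4 : F ω + 1 = (Qg (A ω))⁻¹ := by rw [hF_eq]; ring
        rw [h4]
        rw [h3] at h2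
        calc Real.exp (lam * A ω)
            = Real.exp (lam ^ 2 / 2) * Real.exp (lam * A ω - lam ^ 2 / 2) := by
              rw [← Real.exp_add]
              congr 1
              ring
        _ ≤ Real.exp (lam ^ 2 / 2) * (Qg (A ω))⁻¹ :=
            mul_le_mul_of_nonneg_left h2 (Real.exp_nonneg _)
      have hgint : Integrable (fun ω => Real.exp (lam * A ω)) ℙ := by
        refine Integrable.mono' ((hF.add (integrable_const 1)).const_mul
          (Real.exp (lam ^ 2 / 2))) ?_ (Filter.Eventually.of_forall fun ω => ?_)
        · exact (Real.measurable_exp.comp (hAmeas.const_mul lam)).aestronglyMeasurable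
        · rw [Real.norm_eq_abs, abs_of_pos (Real.exp_pos _)]
          exact hgb ω
      have hTint : Integrable (fun ω => Real.exp (t * (∑ j ∈ Finset.Icc 1 n, Y j) ω)) ℙ := by
        have heq : (fun ω => Real.exp (t * (∑ j ∈ Finset.Icc 1 n, Y j) ω))
            = fun ω => Real.exp (lam * (Real.sqrt (ρ * (n:ℝ)) * ε)) * Real.exp (lam * A ω) := by
          funext ω
          rw [← Real.exp_add, hA_eq ω]
          congr 1
          rw [← hlamκ]
          ring
        rw [heq]
        exact hgint.const_mul _
      have hrest_meas : Measurable (∑ j ∈ (Finset.Icc 1 n).erase i, Y j) := by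
        have h := Finset.measurable_sum ((Finset.Icc 1 n).erase i) (fun j _ => hYmeas j)
        rwa [show (fun a => ∑ j ∈ (Finset.Icc 1 n).erase i, Y j a)
          = ∑ j ∈ (Finset.Icc 1 n).erase i, Y j from
          funext fun a => (Finset.sum_apply a _ _).symm] at h
      have hIndep : IndepFun (Y i) (∑ j ∈ (Finset.Icc 1 n).erase i, Y j) ℙ :=
        (hYindep.indepFun_finset_sum_of_notMem hYmeas (Finset.notMem_erase i _)).symm
      have hexpmeas : Measurable fun x : ℝ => Real.exp (t * x) :=
        Real.measurable_exp.comp (measurable_id.const_mul t)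
      have hIndExp : IndepFun (fun ω => Real.exp (t * Y i ω))
          (fun ω => Real.exp (t * (∑ j ∈ (Finset.Icc 1 n).erase i, Y j) ω)) ℙ :=
        hIndep.comp hexpmeas hexpmeas
      have hmul : (fun ω => Real.exp (t * Y i ω))
          * (fun ω => Real.exp (t * (∑ j ∈ (Finset.Icc 1 n).erase i, Y j) ω))
          = fun ω => Real.exp (t * (∑ j ∈ Finset.Icc 1 n, Y j) ω) := by
        funext ω
        simp only [Pi.mul_apply]
        rw [← Real.exp_add]
        congr 1
        have hsplit := Finset.add_sum_erase (Finset.Icc 1 n) (fun j => Y j ω) hi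
        rw [Finset.sum_apply, Finset.sum_apply]
        linear_combination t * hsplit
      have hcontr : Integrable (fun ω => Real.exp (t * Y i ω)) ℙ := by
        refine hIndExp.integrable_left_of_integrable_mul (· * ·) 1 one_ne_zero
          (fun x y => by simp [enorm_mul]) ?_ ?_ ?_ ?_
        · rw [← hmul] at hTint
          exact hTint
        · exact (Real.measurable_exp.comp ((hYmeas i).const_mul t)).aestronglyMeasurable
        · exact (Real.measurable_exp.comp (hrest_meas.const_mul t)).aestronglyMeasurable
        · intro hc
          have hne : (MeasureTheory.ae (ℙ : Measure Ω)).NeBot :=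
            MeasureTheory.ae_neBot.mpr (IsProbabilityMeasure.ne_zero ℙ)
          obtain ⟨ω, hω⟩ := hc.exists
          simp only [Pi.zero_apply] at hω
          exact (Real.exp_pos _).ne' hω
      exact hni hcontr
    rw [integral_undef hnotInt]
    linarith
end

section
/- Let ρ' ∈ (0,1), let m ∈ ℝ and σ > 0, and let r be an integer with r ≥ exp(10/(1−ρ')²). Let M_r be the maximum of r independent Gaussian random variables with mean m and variance σ², and set z = √(2ρ'·ln r). Then P( M_r > m + z·σ ) ≥ 1 − 1/r². -/
open MeasureTheory ProbabilityTheory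
open scoped ProbabilityTheory NNReal



open Real
open scoped ENNReal

lemma log_ineq {L : ℝ} (hL : 10 ≤ L) :
    Real.log 64 + (3/2) * Real.log L ≤ Real.sqrt (10 * L) := by
  have hL0 : (0:ℝ) < L := by linarith
  set s : ℝ := Real.sqrt (Real.sqrt L) with hs
  have hs0 : 0 < s := Real.sqrt_pos.mpr (Real.sqrt_pos.mpr hL0)
  have hs2 : s ^ 2 = Real.sqrt L := by
    rw [hs, sq, Real.mul_self_sqrt (Real.sqrt_nonneg L)]
  have hs4 : s ^ 4 = L := by
    have h : (s ^ 2) ^ 2 = L := by rw [hs2, sq, Real.mul_self_sqrt hL0.le]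
    nlinarith [h]
  have hlogL : Real.log L = 4 * Real.log s := by
    rw [← hs4, Real.log_pow]; push_cast; ring
  have hlogs : Real.log s ≤ s - 1 := Real.log_le_sub_one_of_pos hs0
  have hsqrtL : Real.sqrt (10 * L) = Real.sqrt 10 * s ^ 2 := by
    rw [hs2, Real.sqrt_mul (by norm_num : (0:ℝ) ≤ 10)]
  have h10 : (3.162 : ℝ) ≤ Real.sqrt 10 := by
    rw [show Real.sqrt 10 = Real.sqrt 10 from rfl]
    nlinarith [Real.sq_sqrt (by norm_num : (0:ℝ) ≤ 10), Real.sqrt_nonneg 10]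
  have hsge : (1.778 : ℝ) ≤ s := by
    have h1 : (3.162:ℝ) ≤ s ^ 2 := by
      rw [hs2]
      calc (3.162:ℝ) ≤ Real.sqrt 10 := h10
        _ ≤ Real.sqrt L := Real.sqrt_le_sqrt hL
    nlinarith [hs0.le]
  have hlog64 : Real.log 64 ≤ 4.159 := by
    have : Real.log 64 = 6 * Real.log 2 := by
      rw [show (64:ℝ) = 2 ^ 6 by norm_num, Real.log_pow]; push_cast; ring
    rw [this]
    nlinarith [Real.log_two_lt_d9]
  rw [hsqrtL, hlogL]
  nlinarith [sq_nonneg (s - 1.778), h10, hsge, hlogs, hlog64]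

lemma const_bound : 4 * Real.sqrt 2 * Real.sqrt (2 * π) * Real.exp (3/2) ≤ 64 := by
  have h2 : Real.sqrt 2 ≤ 1.41422 := by
    nlinarith [Real.sq_sqrt (by norm_num : (0:ℝ) ≤ 2), Real.sqrt_nonneg 2]
  have hpi : π ≤ 3.1416 := by linarith [Real.pi_lt_d6]
  have h2pi : Real.sqrt (2 * π) ≤ 2.5067 := by
    nlinarith [Real.sq_sqrt (by positivity : (0:ℝ) ≤ 2 * π), Real.sqrt_nonneg (2 * π),
      Real.pi_gt_three]
  have he : Real.exp (3/2) ≤ 4.4824 := by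
    have hu : Real.exp (1/2) ^ 2 = Real.exp 1 := by
      rw [← Real.exp_nat_mul]; norm_num
    have hu0 : 0 < Real.exp (1/2) := Real.exp_pos _
    have hub : Real.exp (1/2) ≤ 1.6488 := by
      nlinarith [Real.exp_one_lt_d9, hu, hu0]
    have h32 : Real.exp (3/2) = Real.exp (1/2) ^ 3 := by
      rw [← Real.exp_nat_mul]; norm_num
    rw [h32]
    nlinarith [hu0.le, hub]
  have hs2 : (0:ℝ) ≤ Real.sqrt 2 := Real.sqrt_nonneg 2
  have hsp : (0:ℝ) ≤ Real.sqrt (2 * π) := Real.sqrt_nonneg _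
  have hee : (0:ℝ) < Real.exp (3/2) := Real.exp_pos _
  nlinarith [mul_nonneg hs2 hsp]

lemma numeric_bound {ρ' L : ℝ} (h0 : 0 < ρ') (h1 : ρ' < 1) (hL : 10 / (1 - ρ') ^ 2 ≤ L) :
    2 * L * Real.exp (-L) ≤
      (Real.sqrt (2 * ρ' * L) + 1)⁻¹ * (Real.sqrt (2 * π))⁻¹ *
        Real.exp (-(Real.sqrt (2 * ρ' * L) + (Real.sqrt (2 * ρ' * L) + 1)⁻¹) ^ 2 / 2) := by
  have hε0 : 0 < 1 - ρ' := by linarith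
  have hε1 : (1 - ρ') ^ 2 ≤ 1 := by nlinarith
  have hL10 : 10 ≤ L := le_trans (by
    rw [le_div_iff₀ (by positivity)]; nlinarith) hL
  have hL0 : (0:ℝ) < L := by linarith
  set z : ℝ := Real.sqrt (2 * ρ' * L) with hz
  have hz0 : 0 ≤ z := Real.sqrt_nonneg _
  have hz2 : z ^ 2 = 2 * ρ' * L := Real.sq_sqrt (by positivity)
  set δ : ℝ := (z + 1)⁻¹ with hδ
  have hδ0 : 0 < δ := by positivity
  have hδ1 : δ ≤ 1 := by rw [hδ]; rw [inv_le_one_iff₀]; right; linarith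
  have hzδ : z * δ ≤ 1 := by
    rw [hδ, mul_inv_le_iff₀ (by linarith)]; linarith
  -- z + 1 ≤ 2 √(2L)
  have hsqrt2L : Real.sqrt (2 * L) = Real.sqrt 2 * Real.sqrt L := Real.sqrt_mul (by norm_num) L
  have hz_le : z ≤ Real.sqrt (2 * L) := Real.sqrt_le_sqrt (by nlinarith)
  have h1le : (1:ℝ) ≤ Real.sqrt (2 * L) := by
    rw [show (1:ℝ) = Real.sqrt 1 by simp]
    exact Real.sqrt_le_sqrt (by linarith)
  have hz1 : z + 1 ≤ 2 * Real.sqrt (2 * L) := by linarith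
  -- exponent bound
  have hexp1 : Real.exp (-(ρ' * L) - 3/2) ≤ Real.exp (-(z + δ) ^ 2 / 2) := by
    apply Real.exp_le_exp.mpr
    nlinarith [hδ0.le]
  -- key exponential inequality
  have hεL : Real.sqrt (10 * L) ≤ (1 - ρ') * L := by
    have h10' : 10 ≤ (1 - ρ') ^ 2 * L := by
      rw [div_le_iff₀ (by positivity)] at hL; linarith
    have : Real.sqrt (10 * L) ≤ Real.sqrt (((1 - ρ') * L) ^ 2) :=
      Real.sqrt_le_sqrt (by nlinarith)
    rwa [Real.sqrt_sq (by positivity)] at this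
  have hkey : 64 * (L * Real.sqrt L) ≤ Real.exp ((1 - ρ') * L) := by
    have h := log_ineq hL10
    have hLs : Real.sqrt L * Real.sqrt L = L := Real.mul_self_sqrt hL0.le
    have hsL0 : 0 < Real.sqrt L := Real.sqrt_pos.mpr hL0
    calc 64 * (L * Real.sqrt L)
        = Real.exp (Real.log 64 + (3/2) * Real.log L) := by
          rw [Real.exp_add, Real.exp_log (by norm_num : (0:ℝ) < 64)]
          have : (3/2 : ℝ) * Real.log L = Real.log L + Real.log (Real.sqrt L) := by
            rw [Real.log_sqrt hL0.le]; ring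
          rw [this, Real.exp_add, Real.exp_log hL0, Real.exp_log hsL0]
      _ ≤ Real.exp (Real.sqrt (10 * L)) := Real.exp_le_exp.mpr h
      _ ≤ _ := Real.exp_le_exp.mpr hεL
  -- derive h2 : 4√2√(2π) L√L e^{-L} ≤ e^{-ρ'L - 3/2}
  have hC := const_bound
  have h2 : 4 * Real.sqrt 2 * Real.sqrt (2 * π) * (L * Real.sqrt L) * Real.exp (-L)
      ≤ Real.exp (-(ρ' * L) - 3/2) := by
    have hLsqL : 0 ≤ L * Real.sqrt L := by positivity
    have step : 4 * Real.sqrt 2 * Real.sqrt (2 * π) * Real.exp (3/2) * (L * Real.sqrt L)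
        ≤ Real.exp ((1 - ρ') * L) := le_trans (by nlinarith) hkey
    have := mul_le_mul_of_nonneg_right step (Real.exp_pos (-L - 3/2)).le
    calc 4 * Real.sqrt 2 * Real.sqrt (2 * π) * (L * Real.sqrt L) * Real.exp (-L)
        = 4 * Real.sqrt 2 * Real.sqrt (2 * π) * Real.exp (3/2) * (L * Real.sqrt L) *
            Real.exp (-L - 3/2) := by
          rw [show Real.exp (-L) = Real.exp (3/2) * Real.exp (-L - 3/2) by
            rw [← Real.exp_add]; ring_nf]
          ring
      _ ≤ Real.exp ((1 - ρ') * L) * Real.exp (-L - 3/2) := this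
      _ = Real.exp (-(ρ' * L) - 3/2) := by rw [← Real.exp_add]; ring_nf
  -- lower bound the RHS
  have hsp : (0:ℝ) < Real.sqrt (2 * π) := Real.sqrt_pos.mpr (by positivity)
  have hB : (0:ℝ) < 2 * Real.sqrt (2 * L) := by
    have : (0:ℝ) < Real.sqrt (2 * L) := Real.sqrt_pos.mpr (by linarith)
    linarith
  have hmono : (2 * Real.sqrt (2 * L))⁻¹ * (Real.sqrt (2 * π))⁻¹ *
      Real.exp (-(ρ' * L) - 3/2) ≤
      δ * (Real.sqrt (2 * π))⁻¹ * Real.exp (-(z + δ) ^ 2 / 2) := by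
    have hδge : (2 * Real.sqrt (2 * L))⁻¹ ≤ δ := by
      rw [hδ]
      exact inv_anti₀ (by linarith) hz1
    gcongr
  refine le_trans ?_ hmono
  rw [show (2 * Real.sqrt (2 * L))⁻¹ * (Real.sqrt (2 * π))⁻¹ * Real.exp (-(ρ' * L) - 3/2)
    = Real.exp (-(ρ' * L) - 3/2) / (2 * Real.sqrt (2 * L) * Real.sqrt (2 * π)) by
      field_simp]
  rw [le_div_iff₀ (by positivity)]
  calc 2 * L * Real.exp (-L) * (2 * Real.sqrt (2 * L) * Real.sqrt (2 * π))
      = 4 * Real.sqrt 2 * Real.sqrt (2 * π) * (L * Real.sqrt L) * Real.exp (-L) := by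
        rw [hsqrt2L]; ring
    _ ≤ Real.exp (-(ρ' * L) - 3/2) := h2

lemma tail_integral_lb (m : ℝ) (v : ℝ≥0) (hv : v ≠ 0) {z a : ℝ} (hz : 0 ≤ z) (ha : 0 < a) :
    a * (Real.sqrt (2 * π))⁻¹ * Real.exp (-(z + a) ^ 2 / 2) ≤
      ∫ x in Set.Ioi (m + z * Real.sqrt v), gaussianPDFReal m v x := by
  have hv0 : (0:ℝ) < v := by exact_mod_cast pos_iff_ne_zero.mpr hv
  set σ : ℝ := Real.sqrt v with hσ
  have hσ0 : 0 < σ := Real.sqrt_pos.mpr hv0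
  have hσ2 : σ ^ 2 = v := Real.sq_sqrt hv0.le
  set t : ℝ := m + z * σ with ht
  have hint : IntegrableOn (gaussianPDFReal m v) (Set.Ioi t) :=
    (integrable_gaussianPDFReal m v).integrableOn
  have hint2 : IntegrableOn (gaussianPDFReal m v) (Set.Ioc t (t + a * σ)) :=
    (integrable_gaussianPDFReal m v).integrableOn
  have hsub : Set.Ioc t (t + a * σ) ⊆ Set.Ioi t := Set.Ioc_subset_Ioi_self
  have hstep1 : ∫ x in Set.Ioc t (t + a * σ), gaussianPDFReal m v x ≤
      ∫ x in Set.Ioi t, gaussianPDFReal m v x := by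
    apply setIntegral_mono_set hint
    · exact Filter.Eventually.of_forall fun x => gaussianPDFReal_nonneg m v x
    · exact Filter.Eventually.of_forall hsub
  refine le_trans ?_ hstep1
  have hconst : ∀ x ∈ Set.Ioc t (t + a * σ),
      (Real.sqrt (2 * π * v))⁻¹ * Real.exp (-(z + a) ^ 2 / 2) ≤ gaussianPDFReal m v x := by
    intro x hx
    rw [gaussianPDFReal]
    have hx1 : t < x := hx.1
    have hx2 : x ≤ t + a * σ := hx.2
    refine mul_le_mul_of_nonneg_left ?_ (inv_nonneg.mpr (Real.sqrt_nonneg _))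
    apply Real.exp_le_exp.mpr
    rw [div_le_div_iff₀ (by norm_num) (by positivity)]
    have hxm : 0 ≤ x - m := by nlinarith
    have hsq : (x - m) ^ 2 ≤ (z + a) ^ 2 * σ ^ 2 := by nlinarith
    rw [hσ2] at hsq
    nlinarith [hsq]
  have hms : MeasurableSet (Set.Ioc t (t + a * σ)) := measurableSet_Ioc
  have hμ : (volume (Set.Ioc t (t + a * σ))).toReal = a * σ := by
    rw [Real.volume_Ioc]
    rw [ENNReal.toReal_ofReal (by nlinarith)]
    ring
  have := setIntegral_ge_of_const_le_real hms (by rw [Real.volume_Ioc]; exact ENNReal.ofReal_ne_top)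
    hconst hint2
  rw [measureReal_def, hμ] at this
  refine le_trans ?_ this
  have h2πv : Real.sqrt (2 * π * v) = Real.sqrt (2 * π) * σ := by
    rw [hσ, ← Real.sqrt_mul (by positivity)]
  rw [h2πv, mul_inv]
  have hsp : (0:ℝ) < Real.sqrt (2 * π) := Real.sqrt_pos.mpr (by positivity)
  rw [show (Real.sqrt (2*π))⁻¹ * σ⁻¹ * Real.exp (-(z + a) ^ 2 / 2) * (a * σ)
    = a * (Real.sqrt (2*π))⁻¹ * Real.exp (-(z + a) ^ 2 / 2) * (σ⁻¹ * σ) by ring,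
    inv_mul_cancel₀ hσ0.ne', mul_one]

/-- Lower bound on the maximum of `r` i.i.d. Gaussian samples: if
`r ≥ exp(10/(1−ρ')²)` for some `ρ' ∈ (0,1)`, `M_r` is the maximum of `r` independent
samples from `N(m, σ²)` with `σ = √v > 0`, and `z = √(2ρ'·ln r)`, then
`P(M_r > m + z·σ) ≥ 1 − 1/r²`. -/
theorem max_gaussian_samples_exceeds {Ω : Type*} [MeasureSpace Ω]
    [IsProbabilityMeasure (ℙ : Measure Ω)]
    (ρ' : ℝ) (hρ' : ρ' ∈ Set.Ioo (0:ℝ) 1) (m : ℝ) (v : ℝ≥0) (hv : v ≠ 0)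
    (r : ℕ) (hr : Real.exp (10 / (1 - ρ') ^ 2) ≤ (r : ℝ))
    (X : Fin r → Ω → ℝ) (hmeas : ∀ i, Measurable (X i))
    (hindep : iIndepFun X ℙ)
    (hlaw : ∀ i, Measure.map (X i) ℙ = gaussianReal m v) :
    1 - 1 / (r : ℝ) ^ 2 ≤
      (ℙ {ω | m + Real.sqrt (2 * ρ' * Real.log r) * Real.sqrt (v : ℝ) <
          ⨆ i : Fin r, X i ω}).toReal := by

  obtain ⟨hρ0, hρ1⟩ := hρ'
  have hε0 : 0 < 1 - ρ' := by linarith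
  have hrR : (1:ℝ) < r := by
    have h := Real.add_one_le_exp (10 / (1 - ρ') ^ 2)
    have hx : 0 < 10 / (1 - ρ') ^ 2 := by positivity
    linarith
  have hr0 : 0 < r := by exact_mod_cast lt_trans one_pos hrR
  haveI : Nonempty (Fin r) := Fin.pos_iff_nonempty.mp hr0
  set L : ℝ := Real.log r with hLdef
  have hL10 : 10 / (1 - ρ') ^ 2 ≤ L := (Real.le_log_iff_exp_le (by positivity)).mpr hr
  have hL0 : 0 < L := lt_of_lt_of_le (by positivity) hL10
  set z : ℝ := Real.sqrt (2 * ρ' * L) with hzdef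
  set σ : ℝ := Real.sqrt (v : ℝ) with hσdef
  set t : ℝ := m + z * σ with htdef
  have hz0 : 0 ≤ z := Real.sqrt_nonneg _
  -- marginal probabilities
  set G : ℝ≥0∞ := gaussianReal m v (Set.Iic t) with hGdef
  set P : ℝ≥0∞ := gaussianReal m v (Set.Ioi t) with hPdef
  have hq : ∀ i, ℙ (X i ⁻¹' Set.Iic t) = G := fun i => by
    rw [hGdef, ← hlaw i, Measure.map_apply (hmeas i) measurableSet_Iic]
  -- complement of the event
  have hcompl : {ω | t < ⨆ i, X i ω}ᶜ = ⋂ i, X i ⁻¹' Set.Iic t := by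
    ext ω
    simp only [Set.mem_compl_iff, Set.mem_setOf_eq, not_lt, Set.mem_iInter, Set.mem_preimage,
      Set.mem_Iic]
    exact ciSup_le_iff (Set.finite_range fun i => X i ω).bddAbove
  have hSmeas : MeasurableSet {ω | t < ⨆ i, X i ω} :=
    measurableSet_lt measurable_const (Measurable.iSup hmeas)
  have hprod : ℙ (⋂ i, X i ⁻¹' Set.Iic t) = G ^ r := by
    rw [hindep.meas_iInter (fun i => ⟨Set.Iic t, measurableSet_Iic, rfl⟩)]
    simp [hq, Finset.prod_const, Finset.card_univ]
  have hPS : ℙ {ω | t < ⨆ i, X i ω} = 1 - G ^ r := by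
    have h := prob_compl_eq_one_sub (μ := (ℙ : Measure Ω)) hSmeas.compl
    rw [compl_compl, hcompl, hprod] at h
    exact h
  rw [hPS]
  have hG1 : G ≤ 1 := prob_le_one
  have hGr1 : G ^ r ≤ 1 := pow_le_one' hG1 r
  rw [ENNReal.toReal_sub_of_le hGr1 ENNReal.one_ne_top, ENNReal.toReal_one,
    ENNReal.toReal_pow]
  set g : ℝ := G.toReal with hgdef
  -- relate g and p
  have hGP : G = 1 - P := by
    rw [hGdef, hPdef, ← prob_compl_eq_one_sub measurableSet_Ioi, Set.compl_Ioi]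
  have hP1 : P ≤ 1 := prob_le_one
  set p : ℝ := P.toReal with hpdef
  have hg_eq : g = 1 - p := by
    rw [hgdef, hGP, ENNReal.toReal_sub_of_le hP1 ENNReal.one_ne_top, ENNReal.toReal_one]
  have hp1 : p ≤ 1 := by
    rw [hpdef]
    simpa using ENNReal.toReal_mono ENNReal.one_ne_top hP1
  have hp0 : 0 ≤ p := ENNReal.toReal_nonneg
  -- lower bound on p
  have hPint : P = ENNReal.ofReal (∫ x in Set.Ioi t, gaussianPDFReal m v x) :=
    gaussianReal_apply_eq_integral m hv _
  have hintnonneg : 0 ≤ ∫ x in Set.Ioi t, gaussianPDFReal m v x :=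
    setIntegral_nonneg measurableSet_Ioi fun x _ => gaussianPDFReal_nonneg m v x
  have hp_eq : p = ∫ x in Set.Ioi t, gaussianPDFReal m v x := by
    rw [hpdef, hPint, ENNReal.toReal_ofReal hintnonneg]
  have ha : (0:ℝ) < (z + 1)⁻¹ := by positivity
  have hp_lb : 2 * L * Real.exp (-L) ≤ p := by
    rw [hp_eq]
    exact le_trans (numeric_bound hρ0 hρ1 hL10) (tail_integral_lb m v hv hz0 ha)
  -- final real arithmetic
  have hrpos : (0:ℝ) < r := by exact_mod_cast hr0
  have hexpL : Real.exp L = r := Real.exp_log hrpos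
  have hg0 : 0 ≤ g := ENNReal.toReal_nonneg
  have hge : g ≤ Real.exp (-p) := by
    rw [hg_eq]
    linarith [Real.add_one_le_exp (-p)]
  have hgr : g ^ r ≤ Real.exp (-p) ^ r := pow_le_pow_left₀ hg0 hge r
  have h2L : 2 * L ≤ (r : ℝ) * p := by
    have : (r : ℝ) * (2 * L * Real.exp (-L)) ≤ (r : ℝ) * p :=
      mul_le_mul_of_nonneg_left hp_lb hrpos.le
    have hexpnegL : Real.exp (-L) = (r : ℝ)⁻¹ := by
      rw [Real.exp_neg, hexpL]
    rw [hexpnegL] at this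
    calc (2:ℝ) * L = (r : ℝ) * (2 * L * (r:ℝ)⁻¹) := by field_simp
      _ ≤ (r : ℝ) * p := this
  have hfin : Real.exp (-p) ^ r ≤ 1 / (r : ℝ) ^ 2 := by
    rw [← Real.exp_nat_mul]
    have : Real.exp ((r : ℝ) * -p) ≤ Real.exp (-(2 * L)) :=
      Real.exp_le_exp.mpr (by linarith)
    refine le_trans this ?_
    rw [Real.exp_neg, show (2:ℝ) * L = L + L by ring, Real.exp_add, hexpL]
    rw [one_div, sq]
  have : g ^ r ≤ 1 / (r : ℝ) ^ 2 := le_trans hgr hfin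
  linarith
end

section
/- Let ε > 0 and let s be a positive integer, and let f be the probability density function of the Gaussian distribution N(0, 1/s), i.e., f(x) = √(s/(2π))·exp(−s·x²/2). Then ∫_{−∞}^{−ε} f(x)·2·exp( s·(ε + x)²/2 ) dx ≤ √2 · exp(−s·ε²/4) / (√s · ε). -/
open MeasureTheory

lemma integral_exp_mul_Iic' (c a : ℝ) (hc : 0 < c) :
    ∫ x in Set.Iic a, Real.exp (c * x) = Real.exp (c * a) / c := by
  have h1 := integral_comp_neg_Ioi (-a) (fun x => Real.exp (c * x))
  rw [neg_neg] at h1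
  rw [← h1]
  have h2 := integral_comp_mul_left_Ioi (fun y => Real.exp (-y)) (-a) hc
  simp only [smul_eq_mul] at h2
  simp only [mul_neg] at h2 ⊢
  rw [h2, integral_exp_neg_Ioi, neg_neg, inv_mul_eq_div]

/-- For `ε > 0` and a positive integer `s`, with `f` the density of `N(0, 1/s)`,
`∫_{−∞}^{−ε} f(x)·2·exp(s·(ε+x)²/2) dx ≤ √2·exp(−s·ε²/4)/(√s·ε)`. -/
theorem gaussian_integral_inverse_tail_bound (ε : ℝ) (hε : 0 < ε) (s : ℕ) (hs : 0 < s) :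
    (∫ x in Set.Iic (-ε),
        (Real.sqrt ((s : ℝ) / (2 * Real.pi)) * Real.exp (-(s : ℝ) * x ^ 2 / 2)) *
          (2 * Real.exp ((s : ℝ) * (ε + x) ^ 2 / 2)))
      ≤ Real.sqrt 2 * Real.exp (-(s : ℝ) * ε ^ 2 / 4) / (Real.sqrt (s : ℝ) * ε) := by
  have hs' : (0 : ℝ) < s := by exact_mod_cast hs
  set C : ℝ := Real.sqrt ((s : ℝ) / (2 * Real.pi)) * 2 * Real.exp ((s : ℝ) * ε ^ 2 / 2) with hC
  have hintegrand : ∀ x : ℝ,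
      (Real.sqrt ((s : ℝ) / (2 * Real.pi)) * Real.exp (-(s : ℝ) * x ^ 2 / 2)) *
        (2 * Real.exp ((s : ℝ) * (ε + x) ^ 2 / 2)) = C * Real.exp ((s : ℝ) * ε * x) := by
    intro x
    rw [show C * Real.exp ((s : ℝ) * ε * x)
        = Real.sqrt ((s : ℝ) / (2 * Real.pi)) * 2 *
          (Real.exp ((s : ℝ) * ε ^ 2 / 2) * Real.exp ((s : ℝ) * ε * x)) by ring]
    rw [← Real.exp_add]
    rw [show (Real.sqrt ((s : ℝ) / (2 * Real.pi)) * Real.exp (-(s : ℝ) * x ^ 2 / 2)) *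
        (2 * Real.exp ((s : ℝ) * (ε + x) ^ 2 / 2))
        = Real.sqrt ((s : ℝ) / (2 * Real.pi)) * 2 *
          (Real.exp (-(s : ℝ) * x ^ 2 / 2) * Real.exp ((s : ℝ) * (ε + x) ^ 2 / 2)) by ring]
    rw [← Real.exp_add]
    congr 1
    ring
  simp_rw [hintegrand]
  rw [integral_const_mul, integral_exp_mul_Iic' _ _ (by positivity)]
  have hsq : Real.sqrt ((s : ℝ) / (2 * Real.pi)) = Real.sqrt (s : ℝ) / Real.sqrt (2 * Real.pi) :=
    Real.sqrt_div hs'.le _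
  have hss : ((s : ℝ)) = Real.sqrt (s : ℝ) * Real.sqrt (s : ℝ) :=
    (Real.mul_self_sqrt hs'.le).symm
  have hexp : Real.exp ((s : ℝ) * ε ^ 2 / 2) * Real.exp ((s : ℝ) * ε * -ε)
      = Real.exp (-(s : ℝ) * ε ^ 2 / 2) := by
    rw [← Real.exp_add]; congr 1; ring
  have hpi : (0:ℝ) < Real.sqrt (2 * Real.pi) := by positivity
  have hsqs : (0:ℝ) < Real.sqrt (s : ℝ) := Real.sqrt_pos.mpr hs'
  have key : C * (Real.exp ((s : ℝ) * ε * -ε) / ((s : ℝ) * ε))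
      = (2 / Real.sqrt (2 * Real.pi)) * Real.exp (-(s : ℝ) * ε ^ 2 / 2)
          / (Real.sqrt (s : ℝ) * ε) := by
    rw [hC, hsq]
    rw [show Real.sqrt (s:ℝ) / Real.sqrt (2 * Real.pi) * 2 * Real.exp ((s : ℝ) * ε ^ 2 / 2) *
        (Real.exp ((s : ℝ) * ε * -ε) / ((s : ℝ) * ε))
        = Real.sqrt (s:ℝ) / Real.sqrt (2 * Real.pi) * 2 *
          (Real.exp ((s : ℝ) * ε ^ 2 / 2) * Real.exp ((s : ℝ) * ε * -ε)) / ((s : ℝ) * ε) by ring]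
    rw [hexp, hss]
    field_simp
    linear_combination Real.sq_sqrt (sq_nonneg (Real.sqrt (s : ℝ)))
  rw [key]
  have h2le : (2 : ℝ) / Real.sqrt (2 * Real.pi) ≤ Real.sqrt 2 := by
    rw [div_le_iff₀ hpi]
    have : Real.sqrt 2 * Real.sqrt 2 ≤ Real.sqrt 2 * Real.sqrt (2 * Real.pi) := by
      apply mul_le_mul_of_nonneg_left _ (Real.sqrt_nonneg 2)
      exact Real.sqrt_le_sqrt (by nlinarith [Real.pi_gt_three])
    nlinarith [Real.mul_self_sqrt (by norm_num : (0:ℝ) ≤ 2), Real.sqrt_nonneg (2:ℝ)]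
  apply div_le_div₀ (by positivity) _ (by positivity) le_rfl
  exact mul_le_mul h2le (Real.exp_le_exp.mpr (by nlinarith)) (Real.exp_pos _).le
    (Real.sqrt_nonneg 2)
end

section
/- Let d ≥ 1 and T ≥ 2 be integers, and let b₁, …, b_T ∈ ℝ^d be vectors with ‖b_t‖₂ ≤ 1 for all t. Define M_t = I_d + Σ_{τ=1}^{t−1} b_τ·b_τᵀ (so M₁ = I_d). Then Σ_{t=1}^{T} √( b_tᵀ · M_t^{−1} · b_t ) ≤ 5·√(d·T·ln T). -/
open Matrix
open scoped BigOperators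

namespace EllipticAux

variable {d : ℕ}

noncomputable def M (b : ℕ → Fin d → ℝ) (n : ℕ) : Matrix (Fin d) (Fin d) ℝ :=
  1 + ∑ τ ∈ Finset.range n, vecMulVec (b (τ+1)) (b (τ+1))

lemma vecMulVec_posSemidef (a : Fin d → ℝ) : (vecMulVec a a).PosSemidef := by
  rw [vecMulVec_eq (Fin 1)]
  have h := Matrix.posSemidef_conjTranspose_mul_self (replicateRow (Fin 1) a)
  convert (by simpa using h : (replicateCol (Fin 1) a * replicateRow (Fin 1) a).PosSemidef) using 3

lemma M_posDef (b : ℕ → Fin d → ℝ) (n : ℕ) : (M b n).PosDef := by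
  refine Matrix.PosDef.add_posSemidef Matrix.PosDef.one ?_
  exact Finset.sum_induction _ _ (fun _ _ => Matrix.PosSemidef.add) Matrix.PosSemidef.zero
    (fun τ _ => vecMulVec_posSemidef _)

lemma quad_eq (b : ℕ → Fin d → ℝ) (n : ℕ) (x : Fin d → ℝ) :
    x ⬝ᵥ (M b n) *ᵥ x = x ⬝ᵥ x + ∑ τ ∈ Finset.range n, (b (τ+1) ⬝ᵥ x)^2 := by
  rw [M, Matrix.add_mulVec, dotProduct_add, Matrix.one_mulVec]
  congr 1
  simp only [mulVec, dotProduct, Matrix.sum_apply, vecMulVec_apply, Finset.sum_mul,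
    Finset.mul_sum]
  have key : ∀ τ ∈ Finset.range n, (∑ i : Fin d, b (τ+1) i * x i)^2
      = ∑ i : Fin d, ∑ j : Fin d, x i * (b (τ+1) i * b (τ+1) j * x j) := by
    intro τ _
    rw [pow_two, Finset.sum_mul_sum]
    exact Finset.sum_congr rfl fun i _ => Finset.sum_congr rfl fun j _ => by ring
  rw [Finset.sum_congr rfl key]
  calc ∑ i : Fin d, ∑ j : Fin d, ∑ τ ∈ Finset.range n, x i * (b (τ+1) i * b (τ+1) j * x j)
      = ∑ i : Fin d, ∑ τ ∈ Finset.range n, ∑ j : Fin d, x i * (b (τ+1) i * b (τ+1) j * x j) :=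
        Finset.sum_congr rfl fun i _ => Finset.sum_comm
    _ = ∑ τ ∈ Finset.range n, ∑ i : Fin d, ∑ j : Fin d, x i * (b (τ+1) i * b (τ+1) j * x j) :=
        Finset.sum_comm

lemma dot_self_nonneg (v : Fin d → ℝ) : 0 ≤ v ⬝ᵥ v :=
  Finset.sum_nonneg fun i _ => mul_self_nonneg _

/-- Cauchy–Schwarz for dot products of real vectors. -/
lemma dot_sq_le (u v : Fin d → ℝ) : (u ⬝ᵥ v)^2 ≤ (u ⬝ᵥ u) * (v ⬝ᵥ v) := by
  have h := Finset.sum_mul_sq_le_sq_mul_sq Finset.univ u v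
  simpa only [dotProduct, ← pow_two] using h

noncomputable def q (b : ℕ → Fin d → ℝ) (n : ℕ) : ℝ :=
  b (n+1) ⬝ᵥ (M b n)⁻¹ *ᵥ b (n+1)

lemma q_nonneg (b : ℕ → Fin d → ℝ) (n : ℕ) : 0 ≤ q b n := by
  have h := ((M_posDef b n).posSemidef.inv).re_dotProduct_nonneg (𝕜 := ℝ) (b (n+1))
  simpa [q] using h

lemma q_le_one (b : ℕ → Fin d → ℝ) (hb : ∀ t, b t ⬝ᵥ b t ≤ 1) (n : ℕ) : q b n ≤ 1 := by
  have hU : IsUnit (M b n).det := (M_posDef b n).det_pos.ne'.isUnit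
  have hAy : (M b n) *ᵥ ((M b n)⁻¹ *ᵥ b (n+1)) = b (n+1) := by
    rw [Matrix.mulVec_mulVec, Matrix.mul_nonsing_inv _ hU, Matrix.one_mulVec]
  set y := (M b n)⁻¹ *ᵥ b (n+1) with hy
  have hquad := quad_eq b n y
  rw [hAy] at hquad
  have hyy : y ⬝ᵥ y ≤ y ⬝ᵥ b (n+1) := by
    have hs := Finset.sum_nonneg (fun τ (_ : τ ∈ Finset.range n) => sq_nonneg (b (τ+1) ⬝ᵥ y))
    rw [hquad]; linarith
  have hq : q b n = b (n+1) ⬝ᵥ y := rfl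
  have hcs : (b (n+1) ⬝ᵥ y)^2 ≤ (b (n+1) ⬝ᵥ b (n+1)) * (y ⬝ᵥ y) := dot_sq_le _ y
  have hv1 : b (n+1) ⬝ᵥ b (n+1) ≤ 1 := hb (n+1)
  have hyv : y ⬝ᵥ b (n+1) = b (n+1) ⬝ᵥ y := dotProduct_comm _ _
  have h0 : 0 ≤ q b n := q_nonneg b n
  rw [hq] at h0 ⊢
  nlinarith [dot_self_nonneg y, dot_self_nonneg (b (n+1))]

lemma det_succ (b : ℕ → Fin d → ℝ) (n : ℕ) :
    (M b (n+1)).det = (M b n).det * (1 + q b n) := by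
  have hU : IsUnit (M b n).det := (M_posDef b n).det_pos.ne'.isUnit
  have hM1 : M b (n+1) = M b n + vecMulVec (b (n+1)) (b (n+1)) := by
    simp [M, Finset.sum_range_succ, add_assoc]
  rw [hM1, vecMulVec_eq (Fin 1), Matrix.det_add_mul _ _ hU]
  congr 1
  rw [Matrix.det_unique]
  have : Matrix.replicateRow (Fin 1) (b (n+1)) * (M b n)⁻¹ * Matrix.replicateCol (Fin 1) (b (n+1))
      = Matrix.replicateRow (Fin 1) (b (n+1)) * Matrix.replicateCol (Fin 1) ((M b n)⁻¹ *ᵥ b (n+1)) := by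
    rw [Matrix.replicateCol_mulVec, Matrix.mul_assoc]
  rw [this]
  simp [Matrix.replicateRow_mul_replicateCol_apply, q]

lemma det_prod (b : ℕ → Fin d → ℝ) (n : ℕ) :
    (M b n).det = ∏ τ ∈ Finset.range n, (1 + q b τ) := by
  induction n with
  | zero => simp [M]
  | succ n ih => rw [det_succ, ih, Finset.prod_range_succ]

lemma eigenvalues_le (b : ℕ → Fin d → ℝ) (hb : ∀ t, b t ⬝ᵥ b t ≤ 1) (n : ℕ) (i : Fin d) :
    (M_posDef b n).isHermitian.eigenvalues i ≤ 1 + n := by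
  have hH := (M_posDef b n).isHermitian
  set v : Fin d → ℝ := ⇑(hH.eigenvectorBasis i) with hv
  have hnorm : ‖hH.eigenvectorBasis i‖ = 1 := hH.eigenvectorBasis.orthonormal.1 i
  have hvv : v ⬝ᵥ v = 1 := by
    have h2 : (v ⬝ᵥ v : ℝ) = @inner ℝ _ _ (hH.eigenvectorBasis i) (hH.eigenvectorBasis i) := by
      rw [PiLp.inner_apply]; simp [dotProduct, hv, mul_comm, sq]
    rw [h2, real_inner_self_eq_norm_sq, hnorm]; norm_num
  have heig : hH.eigenvalues i = v ⬝ᵥ (M b n) *ᵥ v := by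
    have := hH.eigenvalues_eq i
    simpa [dotProduct] using this
  rw [heig, quad_eq]
  have hsum : ∑ τ ∈ Finset.range n, (b (τ+1) ⬝ᵥ v)^2 ≤ n := by
    calc ∑ τ ∈ Finset.range n, (b (τ+1) ⬝ᵥ v)^2
        ≤ ∑ τ ∈ Finset.range n, (1:ℝ) := by
          refine Finset.sum_le_sum fun τ _ => ?_
          have := dot_sq_le (b (τ+1)) v
          have h1 := hb (τ+1)
          nlinarith [dot_self_nonneg (b (τ+1))]
      _ = n := by simp
  linarith [hvv.le]

lemma det_le (b : ℕ → Fin d → ℝ) (hb : ∀ t, b t ⬝ᵥ b t ≤ 1) (n : ℕ) :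
    (M b n).det ≤ (1 + (n:ℝ))^d := by
  have hH := (M_posDef b n).isHermitian
  have hdet : (M b n).det = ∏ i, hH.eigenvalues i := by
    simpa using hH.det_eq_prod_eigenvalues
  rw [hdet]
  calc ∏ i, hH.eigenvalues i ≤ ∏ _i : Fin d, (1 + (n:ℝ)) := by
        refine Finset.prod_le_prod (fun i _ => (M_posDef b n).posSemidef.eigenvalues_nonneg i)
          (fun i _ => eigenvalues_le b hb n i)
    _ = (1 + (n:ℝ))^d := by simp

lemma le_two_log {x : ℝ} (h0 : 0 ≤ x) (h1 : x ≤ 1) : x ≤ 2 * Real.log (1+x) := by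
  have hx : (0:ℝ) < 1 + x := by linarith
  have h := Real.log_le_sub_one_of_pos (inv_pos.mpr hx)
  rw [Real.log_inv] at h
  have hinv : (1+x) * (1+x)⁻¹ = 1 := mul_inv_cancel₀ hx.ne'
  nlinarith [h, hinv, hx]

end EllipticAux

open EllipticAux

/-- Elliptical-potential bound: for vectors `b 1, …, b T ∈ ℝ^d` of Euclidean norm at most 1
and `M t = I_d + ∑_{τ=1}^{t−1} b_τ b_τᵀ`,
`∑_{t=1}^{T} √(b_tᵀ M_t⁻¹ b_t) ≤ 5·√(d·T·ln T)`. -/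
theorem sum_sqrt_quadratic_inverse_le (d T : ℕ) (hd : 1 ≤ d) (hT : 2 ≤ T)
    (b : ℕ → (Fin d → ℝ)) (hb : ∀ t, Real.sqrt (b t ⬝ᵥ b t) ≤ 1) :
    ∑ t ∈ Finset.Icc 1 T,
        Real.sqrt ((b t) ⬝ᵥ
          ((((1 : Matrix (Fin d) (Fin d) ℝ)
              + ∑ τ ∈ Finset.Icc 1 (t - 1), vecMulVec (b τ) (b τ))⁻¹).mulVec (b t)))
      ≤ 5 * Real.sqrt ((d : ℝ) * T * Real.log T) := by
  have hb' : ∀ t, b t ⬝ᵥ b t ≤ 1 := by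
    intro t
    have h := hb t
    have h0 := dot_self_nonneg (b t)
    nlinarith [Real.sq_sqrt h0, Real.sqrt_nonneg (b t ⬝ᵥ b t)]
  have hmat : ∀ t : ℕ, (1 : Matrix (Fin d) (Fin d) ℝ)
      + ∑ τ ∈ Finset.Icc 1 (t-1), vecMulVec (b τ) (b τ) = M b (t-1) := by
    intro t
    rw [M]
    congr 1
    rw [← Finset.Ico_add_one_right_eq_Icc, Finset.sum_Ico_eq_sum_range]
    exact Finset.sum_congr (by norm_num) fun i _ => by rw [add_comm]
  have hlhs : ∑ t ∈ Finset.Icc 1 T,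
        Real.sqrt ((b t) ⬝ᵥ
          ((((1 : Matrix (Fin d) (Fin d) ℝ)
              + ∑ τ ∈ Finset.Icc 1 (t - 1), vecMulVec (b τ) (b τ))⁻¹).mulVec (b t)))
      = ∑ i ∈ Finset.range T, Real.sqrt (q b i) := by
    rw [← Finset.Ico_add_one_right_eq_Icc, Finset.sum_Ico_eq_sum_range]
    refine Finset.sum_congr (by norm_num) fun i _ => ?_
    rw [hmat (1+i)]
    have : 1 + i - 1 = i := by omega
    rw [this, add_comm 1 i]
    rfl
  rw [hlhs]
  set S := ∑ i ∈ Finset.range T, Real.sqrt (q b i) with hS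
  have hT1 : (1:ℝ) ≤ T := by exact_mod_cast le_trans (by norm_num) hT
  have hlogT : 0 ≤ Real.log T := Real.log_nonneg hT1
  have hX : 0 ≤ (d:ℝ) * T * Real.log T := by positivity
  have hCS : S^2 ≤ T * ∑ i ∈ Finset.range T, q b i := by
    have h := Finset.sum_sq_le_sum_mul_sum_of_sq_eq_mul (Finset.range T)
      (r := fun i => Real.sqrt (q b i)) (f := fun _ => (1:ℝ)) (g := fun i => q b i)
      (fun i _ => zero_le_one) (fun i _ => q_nonneg b i)
      (fun i _ => by rw [Real.sq_sqrt (q_nonneg b i), one_mul])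
    simpa using h
  have hdetpos : 0 < (M b T).det := (M_posDef b T).det_pos
  have hsumq : ∑ i ∈ Finset.range T, q b i ≤ 4 * d * Real.log T := by
    have h1 : ∑ i ∈ Finset.range T, q b i
        ≤ 2 * ∑ i ∈ Finset.range T, Real.log (1 + q b i) := by
      rw [Finset.mul_sum]
      exact Finset.sum_le_sum fun i _ => le_two_log (q_nonneg b i) (q_le_one b hb' i)
    have h2 : ∑ i ∈ Finset.range T, Real.log (1 + q b i) = Real.log ((M b T).det) := by
      rw [det_prod]
      rw [Real.log_prod]
      intro i _
      have := q_nonneg b i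
      linarith
    have h3 : Real.log ((M b T).det) ≤ Real.log ((1 + (T:ℝ))^d) :=
      Real.log_le_log hdetpos (det_le b hb' T)
    have h4 : Real.log ((1 + (T:ℝ))^d) = d * Real.log (1 + T) := by rw [Real.log_pow]
    have h5 : Real.log (1 + (T:ℝ)) ≤ 2 * Real.log T := by
      have hT2 : (2:ℝ) ≤ T := by exact_mod_cast hT
      have hle : (1:ℝ) + T ≤ (T:ℝ)^2 := by nlinarith
      calc Real.log (1 + (T:ℝ)) ≤ Real.log ((T:ℝ)^2) :=
            Real.log_le_log (by linarith) hle
        _ = 2 * Real.log T := by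
            rw [← Real.rpow_natCast, Real.log_rpow (by linarith)]; norm_num
    calc ∑ i ∈ Finset.range T, q b i
        ≤ 2 * ∑ i ∈ Finset.range T, Real.log (1 + q b i) := h1
      _ = 2 * Real.log ((M b T).det) := by rw [h2]
      _ ≤ 2 * ((d:ℝ) * Real.log (1 + T)) := by rw [← h4]; linarith
      _ ≤ 2 * ((d:ℝ) * (2 * Real.log T)) := by
          have hd0 : (0:ℝ) ≤ d := Nat.cast_nonneg d
          nlinarith
      _ = 4 * d * Real.log T := by ring
  have hS0 : 0 ≤ S := Finset.sum_nonneg fun i _ => Real.sqrt_nonneg _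
  have hS2 : S^2 ≤ 25 * ((d:ℝ) * T * Real.log T) := by
    have hT0 : (0:ℝ) ≤ T := by linarith
    calc S^2 ≤ T * ∑ i ∈ Finset.range T, q b i := hCS
      _ ≤ T * (4 * d * Real.log T) := by
          refine mul_le_mul_of_nonneg_left hsumq hT0
      _ = 4 * ((d:ℝ) * T * Real.log T) := by ring
      _ ≤ 25 * ((d:ℝ) * T * Real.log T) := by linarith [hX]
  calc S = Real.sqrt (S^2) := (Real.sqrt_sq hS0).symm
    _ ≤ Real.sqrt (25 * ((d:ℝ) * T * Real.log T)) := Real.sqrt_le_sqrt hS2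
    _ = 5 * Real.sqrt ((d:ℝ) * T * Real.log T) := by
        rw [Real.sqrt_mul (by norm_num) _, show (25:ℝ) = 5^2 by norm_num,
          Real.sqrt_sq (by norm_num)]
end
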